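/- arXiv:2510.13659 — 5 statements merged into one kernel-verified Lean document; each statement's English description precedes it below -/
import Mathlib

section
/- Let (X,d,μ,E_p,F_p,Γ_p) be a regular local p-Dirichlet space. For every Lipschitz function g : ℝ → ℝ with g(0)=0 and every f ∈ F_p which admits a continuous representative, one has g∘f ∈ F_p and Γ_p⟨g∘f⟩ ≤ (Lip_a[g]∘f)^p · Γ_p⟨f⟩, i.e. Γ_p⟨g∘f⟩(A) ≤ ∫_A (Lip_a[g](f(x)))^p dΓ_p⟨f⟩(x) for all Borel A ⊆ X. -/
open MeasureTheory ENNReal NNReal Filter Topology Metric Set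

noncomputable section

/-- The norm `(‖f‖_{L^p}^p + E_p(f))^{1/p}` on a `p`-Dirichlet space. -/
def fpNorm {X : Type} [MeasurableSpace X] (μ : Measure X) (p : ℝ)
    (Ep : (X → ℝ) → ℝ) (f : X → ℝ) : ℝ :=
  ((∫ x, |f x| ^ p ∂μ) + Ep f) ^ (1 / p)

/-- A local `p`-Dirichlet space `(X, d, μ, E_p, F_p, Γ_p)`. -/
structure LocalPDirichletSpace (X : Type) [MetricSpace X] [MeasurableSpace X] [BorelSpace X]
    (μ : Measure X) (p : ℝ) : Type where
  /-- `1 < p < ∞`. -/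
  hp : 1 < p
  /-- The underlying metric space is locally compact. -/
  locallyCompact : LocallyCompactSpace X
  /-- `μ` is a Radon measure. -/
  radon : μ.Regular
  /-- The domain `F_p ⊆ L^p(X,μ)`. -/
  F : Set (X → ℝ)
  /-- The energy functional `E_p`. -/
  Ep : (X → ℝ) → ℝ
  /-- The energy measures `Γ_p⟨f⟩`. -/
  Γ : (X → ℝ) → Measure X
  memLp : ∀ f ∈ F, MemLp f (ENNReal.ofReal p) μ
  Ep_nonneg : ∀ f ∈ F, 0 ≤ Ep f
  zero_mem : (0 : X → ℝ) ∈ F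
  add_mem : ∀ f ∈ F, ∀ g ∈ F, f + g ∈ F
  smul_mem : ∀ (c : ℝ), ∀ f ∈ F, c • f ∈ F
  /-- Completeness: `F_p` is a Banach space under the norm `fpNorm`. -/
  complete : ∀ fi : ℕ → X → ℝ, (∀ i, fi i ∈ F) →
    (∀ ε > (0 : ℝ), ∃ N, ∀ m ≥ N, ∀ k ≥ N, fpNorm μ p Ep (fi m - fi k) < ε) →
    ∃ f ∈ F, Tendsto (fun i => fpNorm μ p Ep (fi i - f)) atTop (𝓝 0)
  /-- The total mass of the energy measure is the energy. -/
  mass : ∀ f ∈ F, Γ f Set.univ = ENNReal.ofReal (Ep f)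
  /-- Homogeneity. -/
  homog : ∀ f ∈ F, ∀ c : ℝ, Γ (c • f) = ENNReal.ofReal (|c| ^ p) • Γ f
  /-- Sublinearity. -/
  sublinear : ∀ f ∈ F, ∀ g ∈ F, ∀ A : Set X, MeasurableSet A →
    Γ (f + g) A ^ (1 / p) ≤ Γ f A ^ (1 / p) + Γ g A ^ (1 / p)
  /-- Chain rule. -/
  chain : ∀ f ∈ F, ∀ (g : ℝ → ℝ) (L : ℝ≥0), LipschitzWith L g → g 0 = 0 →
    g ∘ f ∈ F ∧ ∀ A : Set X, MeasurableSet A →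
      Γ (g ∘ f) A ≤ ENNReal.ofReal ((L : ℝ) ^ p) * Γ f A
  /-- Locality. -/
  locality : ∀ f ∈ F, ∀ (c : ℝ) (A : Set X), IsOpen A →
    (∀ᵐ x ∂(μ.restrict A), f x = c) → Γ f A = 0
  /-- Weak lower semicontinuity of the energy measures. -/
  lsc : ∀ (f : X → ℝ) (fi : ℕ → X → ℝ), MemLp f (ENNReal.ofReal p) μ →
    (∀ i, fi i ∈ F) →
    Tendsto (fun i => eLpNorm (fi i - f) (ENNReal.ofReal p) μ) atTop (𝓝 0) →
    (∃ C : ℝ, ∀ i, Ep (fi i) ≤ C) →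
    f ∈ F ∧ ∀ A : Set X, MeasurableSet A →
      Γ f A ≤ liminf (fun i => Γ (fi i) A) atTop

variable {X : Type} [MetricSpace X] [MeasurableSpace X] [BorelSpace X] {μ : Measure X} {p : ℝ}

/-- A regular `p`-Dirichlet space: `C₀(X) ∩ F_p` is dense in `F_p` and uniformly dense
in the space `C₀(X)` of continuous compactly supported functions. -/
def LocalPDirichletSpace.IsRegular (D : LocalPDirichletSpace X μ p) : Prop :=
  (∀ f ∈ D.F, ∀ ε > (0 : ℝ), ∃ g ∈ D.F, Continuous g ∧ HasCompactSupport g ∧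
      fpNorm μ p D.Ep (f - g) < ε) ∧
  (∀ f : X → ℝ, Continuous f → HasCompactSupport f → ∀ ε > (0 : ℝ),
      ∃ g ∈ D.F, Continuous g ∧ HasCompactSupport g ∧ ∀ x, |f x - g x| < ε)

/-- The capacity associated to a `p`-Dirichlet space. -/
def LocalPDirichletSpace.cap (D : LocalPDirichletSpace X μ p) (A : Set X) : ℝ≥0∞ :=
  ⨅ (f : X → ℝ) (_ : f ∈ D.F ∧ ∃ U : Set X, IsOpen U ∧ A ⊆ U ∧
      ∀ᵐ x ∂(μ.restrict U), f x = 1),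
    ENNReal.ofReal ((∫ x, |f x| ^ p ∂μ) + D.Ep f)

/-- Quasicontinuity with respect to the capacity of a `p`-Dirichlet space. -/
def LocalPDirichletSpace.QuasiContinuous (D : LocalPDirichletSpace X μ p) (f : X → ℝ) : Prop :=
  ∀ ε : ℝ≥0∞, 0 < ε → ∃ O : Set X, IsOpen O ∧ D.cap O < ε ∧ ContinuousOn f Oᶜ

/-- The measure `Λ_φ = ∑ Γ_p⟨φ i⟩`. -/
def LocalPDirichletSpace.Lam (D : LocalPDirichletSpace X μ p) {n : ℕ}
    (φ : Fin n → X → ℝ) : Measure X :=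
  ∑ i, D.Γ (φ i)

/-- `p`-independence of `φ = (φ₁, …, φₙ)` on a set `A`. -/
def LocalPDirichletSpace.PIndependentOn (D : LocalPDirichletSpace X μ p) {n : ℕ}
    (φ : Fin n → X → ℝ) (A : Set X) : Prop :=
  ∃ S : Set (EuclideanSpace ℝ (Fin n)), S.Countable ∧
    S ⊆ Metric.sphere (0 : EuclideanSpace ℝ (Fin n)) 1 ∧
    Metric.sphere (0 : EuclideanSpace ℝ (Fin n)) 1 ⊆ closure S ∧
    ∀ᵐ x ∂((D.Lam φ).restrict A),
      0 < ⨅ l ∈ S, (D.Γ (fun y => ∑ i, l i * φ i y)).rnDeriv (D.Lam φ) x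


/-- The Lipschitz constant of `f` restricted to a set `s` (valued in `ℝ≥0∞`). -/
noncomputable def lipConstOn {E : Type*} [PseudoMetricSpace E] (f : E → ℝ) (s : Set E) : ℝ≥0∞ :=
  ⨆ (x : E) (_ : x ∈ s) (y : E) (_ : y ∈ s), edist (f x) (f y) / edist x y

/-- The asymptotic Lipschitz constant `Lip_a[f](x) = lim_{r→0} LIP[f|_{B(x,r)}]`. -/
noncomputable def asympLipConst {E : Type*} [PseudoMetricSpace E] (f : E → ℝ) (x : E) : ℝ≥0∞ :=
  ⨅ (r : {r : ℝ // 0 < r}), lipConstOn f (Metric.ball x (r : ℝ))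

private lemma lipConstOn_mono' {g : ℝ → ℝ} {s t : Set ℝ} (h : s ⊆ t) :
    lipConstOn g s ≤ lipConstOn g t := by
  refine iSup₂_le fun x hx => iSup₂_le fun y hy => ?_
  exact le_iSup₂_of_le x (h hx) (le_iSup₂_of_le y (h hy) le_rfl)

private lemma lipConstOn_le {g : ℝ → ℝ} {L : ℝ≥0} (hg : LipschitzWith L g) (s : Set ℝ) :
    lipConstOn g s ≤ (L : ℝ≥0∞) :=
  iSup₂_le fun x _ => iSup₂_le fun y _ => ENNReal.div_le_of_le_mul (hg.edist_le_mul x y)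

private lemma edist_le_lipConstOn {g : ℝ → ℝ} {s : Set ℝ} {a b : ℝ}
    (ha : a ∈ s) (hb : b ∈ s) : edist (g a) (g b) ≤ lipConstOn g s * edist a b := by
  rcases eq_or_ne (edist a b) 0 with h0 | h0
  · obtain rfl : a = b := edist_eq_zero.mp h0
    simp
  · have hle : edist (g a) (g b) / edist a b ≤ lipConstOn g s :=
      le_iSup₂_of_le a ha (le_iSup₂_of_le b hb le_rfl)
    exact (ENNReal.div_le_iff_le_mul (Or.inl h0) (Or.inl (edist_ne_top a b))).mp hle

private lemma floor_mul_le {δ r : ℝ} (hδ : 0 < δ) : (⌊r / δ⌋ : ℝ) * δ ≤ r := by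
  have h := Int.floor_le (r / δ)
  calc (⌊r / δ⌋ : ℝ) * δ ≤ (r / δ) * δ := by nlinarith
    _ = r := by field_simp

private lemma lt_floor_mul_add {δ r : ℝ} (hδ : 0 < δ) : r < (⌊r / δ⌋ : ℝ) * δ + δ := by
  have h := Int.lt_floor_add_one (r / δ)
  have h2 : r < ((⌊r / δ⌋ : ℝ) + 1) * δ := by
    have := (div_lt_iff₀ hδ).mp h
    linarith
  nlinarith

/-- Key step: the chain rule at scale `δ`. -/
private lemma key_step {X : Type} [MetricSpace X] [MeasurableSpace X] [BorelSpace X]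
    {μ : Measure X} {p : ℝ} (D : LocalPDirichletSpace X μ p)
    (g : ℝ → ℝ) (L : ℝ≥0) (hg : LipschitzWith L g) (hg0 : g 0 = 0)
    (f : X → ℝ) (hf : f ∈ D.F) (hfc : Continuous f)
    {A : Set X} (hA : MeasurableSet A) {δ : ℝ} (hδ : 0 < δ) :
    D.Γ (g ∘ f) A ≤ ∫⁻ x in A,
      lipConstOn g (Set.Icc ((⌊f x / δ⌋ : ℝ) * δ - δ) ((⌊f x / δ⌋ : ℝ) * δ + 2 * δ)) ^ p
      ∂(D.Γ f) := by
  have p0 : 0 < p := lt_trans one_pos D.hp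
  have hkx : Measurable fun x => ⌊f x / δ⌋ := (hfc.measurable.div_const δ).floor
  set V : ℤ → Set X := fun k => (fun x => ⌊f x / δ⌋) ⁻¹' {k} with hV
  have hVmeas : ∀ k, MeasurableSet (A ∩ V k) := fun k =>
    hA.inter (hkx (measurableSet_singleton k))
  have hVd : Pairwise (Function.onFun Disjoint fun k => A ∩ V k) := by
    intro i j hij
    rw [Function.onFun, Set.disjoint_left]
    rintro x ⟨-, hxi⟩ ⟨-, hxj⟩
    exact hij ((Set.mem_singleton_iff.mp hxi).symm.trans (Set.mem_singleton_iff.mp hxj))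
  have hk_bound : ∀ k : ℤ, D.Γ (g ∘ f) (A ∩ V k) ≤
      lipConstOn g (Set.Icc ((k : ℝ) * δ - δ) ((k : ℝ) * δ + 2 * δ)) ^ p * D.Γ f (A ∩ V k) := by
    intro k
    set a : ℝ := (k : ℝ) * δ - δ with ha_def
    set b : ℝ := (k : ℝ) * δ + 2 * δ with hb_def
    have hab : a ≤ b := by simp only [ha_def, hb_def]; linarith
    have hJfin : lipConstOn g (Set.Icc a b) ≠ ∞ :=
      (lt_of_le_of_lt (lipConstOn_le hg _) ENNReal.coe_lt_top).ne
    set Lk : ℝ≥0 := (lipConstOn g (Set.Icc a b)).toNNReal with hLk_def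
    have hLk : (Lk : ℝ≥0∞) = lipConstOn g (Set.Icc a b) := ENNReal.coe_toNNReal hJfin
    set c : ℝ → ℝ := fun t => max (min t b) a with hc_def
    have hcmem : ∀ t, c t ∈ Set.Icc a b := fun t =>
      ⟨le_max_right _ _, max_le (min_le_right _ _) hab⟩
    have hclip : LipschitzWith 1 c := (LipschitzWith.id.min_const b).max_const a
    set h : ℝ → ℝ := fun t => g (c t) - g (c 0) with hh_def
    have hhlip : LipschitzWith Lk h := by
      intro s t
      have e1 : edist (h s) (h t) = edist (g (c s)) (g (c t)) := by
        simp only [hh_def, edist_dist, Real.dist_eq]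
        congr 1
        ring
      rw [e1]
      calc edist (g (c s)) (g (c t)) ≤ lipConstOn g (Set.Icc a b) * edist (c s) (c t) :=
            edist_le_lipConstOn (hcmem s) (hcmem t)
        _ ≤ (Lk : ℝ≥0∞) * edist s t := by
            rw [hLk]
            refine mul_le_mul' le_rfl ?_
            simpa using hclip s t
    have hh0 : h 0 = 0 := sub_self _
    obtain ⟨hhF, hhΓ⟩ := D.chain f hf h Lk hhlip hh0
    set d : ℝ → ℝ := fun t => g t - h t with hd_def
    have hdlip : LipschitzWith (L + Lk) d := hg.sub hhlip
    have hd0 : d 0 = 0 := by simp [hd_def, hh0, hg0]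
    obtain ⟨hdF, -⟩ := D.chain f hf d (L + Lk) hdlip hd0
    set U : Set X := f ⁻¹' Set.Ioo a b with hU_def
    have hUopen : IsOpen U := isOpen_Ioo.preimage hfc
    have hUd : D.Γ (d ∘ f) U = 0 := by
      apply D.locality (d ∘ f) hdF (g (c 0)) U hUopen
      refine ae_restrict_of_forall_mem hUopen.measurableSet fun x hx => ?_
      have hx' : f x ∈ Set.Ioo a b := hx
      have hcx : c (f x) = f x := by
        rw [hc_def]
        simp only
        rw [min_eq_left hx'.2.le, max_eq_left hx'.1.le]
      show d (f x) = g (c 0)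
      rw [hd_def]
      simp only [hh_def, hcx]
      ring
    have hsubU : A ∩ V k ⊆ U := by
      rintro x ⟨-, hxV⟩
      have hkk : ⌊f x / δ⌋ = k := Set.mem_singleton_iff.mp hxV
      have l1 : (k : ℝ) * δ ≤ f x := by
        have := floor_mul_le (r := f x) hδ; rw [hkk] at this; exact this
      have l2 : f x < (k : ℝ) * δ + δ := by
        have := lt_floor_mul_add (r := f x) hδ; rw [hkk] at this; exact this
      show f x ∈ Set.Ioo a b
      constructor
      · simp only [ha_def]; linarith
      · simp only [hb_def]; linarith
    have hΓd0 : D.Γ (d ∘ f) (A ∩ V k) = 0 :=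
      le_antisymm (hUd ▸ measure_mono hsubU) zero_le
    have hsplit : g ∘ f = (h ∘ f) + (d ∘ f) := by
      funext x
      show g (f x) = h (f x) + (g (f x) - h (f x))
      ring
    have hsub := D.sublinear (h ∘ f) hhF (d ∘ f) hdF (A ∩ V k) (hVmeas k)
    rw [← hsplit, hΓd0, ENNReal.zero_rpow_of_pos (by positivity), add_zero] at hsub
    have hmono := ENNReal.rpow_le_rpow hsub p0.le
    rw [← ENNReal.rpow_mul, ← ENNReal.rpow_mul, one_div_mul_cancel p0.ne',
      ENNReal.rpow_one, ENNReal.rpow_one] at hmono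
    refine hmono.trans ((hhΓ (A ∩ V k) (hVmeas k)).trans (le_of_eq ?_))
    rw [← ENNReal.ofReal_rpow_of_nonneg Lk.coe_nonneg p0.le, ENNReal.ofReal_coe_nnreal, hLk]
  have hcover : A = ⋃ k : ℤ, A ∩ V k := by
    ext x
    constructor
    · intro hx; exact Set.mem_iUnion.mpr ⟨⌊f x / δ⌋, hx, rfl⟩
    · intro hx; obtain ⟨k, hk, -⟩ := Set.mem_iUnion.mp hx; exact hk
  calc D.Γ (g ∘ f) A = ∑' k : ℤ, D.Γ (g ∘ f) (A ∩ V k) := by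
        conv_lhs => rw [hcover]
        exact measure_iUnion hVd hVmeas
    _ ≤ ∑' k : ℤ, lipConstOn g (Set.Icc ((k : ℝ) * δ - δ) ((k : ℝ) * δ + 2 * δ)) ^ p
          * D.Γ f (A ∩ V k) := ENNReal.tsum_le_tsum hk_bound
    _ = ∑' k : ℤ, ∫⁻ x in A ∩ V k,
          lipConstOn g (Set.Icc ((⌊f x / δ⌋ : ℝ) * δ - δ) ((⌊f x / δ⌋ : ℝ) * δ + 2 * δ)) ^ p
          ∂(D.Γ f) := by
        refine tsum_congr fun k => ?_
        have hcongr : ∀ x, x ∈ A ∩ V k →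
            lipConstOn g (Set.Icc ((⌊f x / δ⌋ : ℝ) * δ - δ) ((⌊f x / δ⌋ : ℝ) * δ + 2 * δ)) ^ p
            = lipConstOn g (Set.Icc ((k : ℝ) * δ - δ) ((k : ℝ) * δ + 2 * δ)) ^ p := by
          rintro x ⟨-, hxV⟩
          rw [show ⌊f x / δ⌋ = k from hxV]
        rw [setLIntegral_congr_fun (hVmeas k) hcongr, setLIntegral_const]
    _ = ∫⁻ x in ⋃ k : ℤ, A ∩ V k,
          lipConstOn g (Set.Icc ((⌊f x / δ⌋ : ℝ) * δ - δ) ((⌊f x / δ⌋ : ℝ) * δ + 2 * δ)) ^ p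
          ∂(D.Γ f) := (lintegral_iUnion hVmeas hVd _).symm
    _ = _ := by rw [← hcover]

/-- **Chain rule with the asymptotic Lipschitz constant** (Lemma 2.13): in a regular local
`p`-Dirichlet space, for every Lipschitz `g : ℝ → ℝ` with `g(0) = 0` and every `f ∈ F_p`
admitting a continuous representative, `g ∘ f ∈ F_p` and
`Γ_p⟨g ∘ f⟩(A) ≤ ∫_A (Lip_a[g](f x))^p dΓ_p⟨f⟩(x)` for all Borel `A`. -/
theorem chain_rule_asympLipConst
    {X : Type} [MetricSpace X] [MeasurableSpace X] [BorelSpace X] {μ : Measure X} {p : ℝ}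
    (D : LocalPDirichletSpace X μ p) (hreg : D.IsRegular)
    (g : ℝ → ℝ) (L : ℝ≥0) (hg : LipschitzWith L g) (hg0 : g 0 = 0)
    (f : X → ℝ) (hf : f ∈ D.F) (hfc : Continuous f) :
    g ∘ f ∈ D.F ∧ ∀ A : Set X, MeasurableSet A →
      D.Γ (g ∘ f) A ≤ ∫⁻ x in A, asympLipConst g (f x) ^ p ∂(D.Γ f) := by
  obtain ⟨hgfF, -⟩ := D.chain f hf g L hg hg0
  refine ⟨hgfF, fun A hA => ?_⟩
  have p0 : 0 < p := lt_trans one_pos D.hp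
  have hδpos : ∀ n : ℕ, (0 : ℝ) < (2 : ℝ)⁻¹ ^ n := fun n => pow_pos (by norm_num) n
  set G : ℕ → X → ℝ≥0∞ := fun n x =>
    lipConstOn g (Set.Icc ((⌊f x / (2 : ℝ)⁻¹ ^ n⌋ : ℝ) * (2 : ℝ)⁻¹ ^ n - (2 : ℝ)⁻¹ ^ n)
      ((⌊f x / (2 : ℝ)⁻¹ ^ n⌋ : ℝ) * (2 : ℝ)⁻¹ ^ n + 2 * (2 : ℝ)⁻¹ ^ n)) ^ p with hG
  have hkey : ∀ n, D.Γ (g ∘ f) A ≤ ∫⁻ x in A, G n x ∂(D.Γ f) := fun n =>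
    key_step D g L hg hg0 f hf hfc hA (hδpos n)
  have hmeas : ∀ n, Measurable (G n) := by
    intro n
    have h1 : Measurable fun x => ⌊f x / (2 : ℝ)⁻¹ ^ n⌋ :=
      (hfc.measurable.div_const _).floor
    exact (measurable_from_top
      (f := fun k : ℤ => lipConstOn g (Set.Icc ((k : ℝ) * (2 : ℝ)⁻¹ ^ n - (2 : ℝ)⁻¹ ^ n)
        ((k : ℝ) * (2 : ℝ)⁻¹ ^ n + 2 * (2 : ℝ)⁻¹ ^ n)) ^ p)).comp h1
  have hanti : Antitone G := by
    refine antitone_nat_of_succ_le fun n => fun x => ?_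
    have hδ := hδpos n
    have hδ' := hδpos (n + 1)
    have hhalf : (2 : ℝ)⁻¹ ^ (n + 1) = (2 : ℝ)⁻¹ ^ n / 2 := by
      rw [pow_succ]; ring
    have l1 := floor_mul_le (r := f x) hδ'
    have l2 := lt_floor_mul_add (r := f x) hδ'
    have l3 := floor_mul_le (r := f x) hδ
    have l4 := lt_floor_mul_add (r := f x) hδ
    exact ENNReal.rpow_le_rpow
      (lipConstOn_mono' (Set.Icc_subset_Icc (by linarith) (by linarith))) p0.le
  have hfin : ∫⁻ x in A, G 0 x ∂(D.Γ f) ≠ ∞ := by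
    have hb : ∀ x, G 0 x ≤ (L : ℝ≥0∞) ^ p := fun x =>
      ENNReal.rpow_le_rpow (lipConstOn_le hg _) p0.le
    have h1 : ∫⁻ x in A, G 0 x ∂(D.Γ f) ≤ (L : ℝ≥0∞) ^ p * D.Γ f A := by
      calc ∫⁻ x in A, G 0 x ∂(D.Γ f) ≤ ∫⁻ _ in A, (L : ℝ≥0∞) ^ p ∂(D.Γ f) :=
            lintegral_mono hb
        _ = (L : ℝ≥0∞) ^ p * D.Γ f A := by
            rw [setLIntegral_const]
    refine (lt_of_le_of_lt h1 ?_).ne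
    have hfinΓ : D.Γ f A < ∞ := by
      refine lt_of_le_of_lt (measure_mono (Set.subset_univ A)) ?_
      rw [D.mass f hf]
      exact ENNReal.ofReal_lt_top
    exact ENNReal.mul_lt_top
      (ENNReal.rpow_lt_top_of_nonneg p0.le ENNReal.coe_ne_top) hfinΓ
  have hpoint : ∀ x, (⨅ n, G n x) ≤ asympLipConst g (f x) ^ p := by
    intro x
    have step1 : ∀ r : {r : ℝ // 0 < r},
        (⨅ n, G n x) ≤ lipConstOn g (Metric.ball (f x) (r : ℝ)) ^ p := by
      rintro ⟨r, hr⟩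
      obtain ⟨n, hn⟩ : ∃ n : ℕ, (2 : ℝ)⁻¹ ^ n < r / 2 :=
        exists_pow_lt_of_lt_one (by positivity) (by norm_num)
      refine (iInf_le _ n).trans (ENNReal.rpow_le_rpow (lipConstOn_mono' ?_) p0.le)
      intro s hs
      have hδ := hδpos n
      have l3 := floor_mul_le (r := f x) hδ
      have l4 := lt_floor_mul_add (r := f x) hδ
      have hs1 := hs.1
      have hs2 := hs.2
      rw [Metric.mem_ball, Real.dist_eq, abs_sub_lt_iff]
      constructor <;> linarith
    have h1 : (⨅ n, G n x) ^ (1 / p) ≤ asympLipConst g (f x) := by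
      refine le_iInf fun r => ?_
      have h2 := ENNReal.rpow_le_rpow (step1 r) (by positivity : (0 : ℝ) ≤ 1 / p)
      rwa [← ENNReal.rpow_mul, mul_one_div_cancel p0.ne', ENNReal.rpow_one] at h2
    have h3 := ENNReal.rpow_le_rpow h1 p0.le
    rwa [← ENNReal.rpow_mul, one_div_mul_cancel p0.ne', ENNReal.rpow_one] at h3
  calc D.Γ (g ∘ f) A ≤ ⨅ n, ∫⁻ x in A, G n x ∂(D.Γ f) := le_iInf hkey
    _ = ∫⁻ x in A, ⨅ n, G n x ∂(D.Γ f) := (lintegral_iInf hmeas hanti hfin).symm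
    _ ≤ ∫⁻ x in A, asympLipConst g (f x) ^ p ∂(D.Γ f) := lintegral_mono hpoint

end
end

section
/- Let (X,d,μ,E_p,F_p,Γ_p) be a local p-Dirichlet space. For every f ∈ F_p which admits a continuous representative, every constant c ∈ ℝ, and every Borel set A ⊆ X, if f(x) = c for all x ∈ A, then Γ_p⟨f⟩(A) = 0. -/
open MeasureTheory ENNReal NNReal Filter Topology Metric Set

noncomputable section

variable {X : Type} [MetricSpace X] [MeasurableSpace X] [BorelSpace X] {μ : Measure X} {p : ℝ}

/-- **Locality on Borel sets for continuous functions** (Lemma 2.14): in a local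
`p`-Dirichlet space, if `f ∈ F_p` admits a continuous representative which is equal to a
constant `c` on a Borel set `A`, then `Γ_p⟨f⟩(A) = 0`. -/
theorem energy_measure_locality_of_continuous
    {X : Type} [MetricSpace X] [MeasurableSpace X] [BorelSpace X] {μ : Measure X} {p : ℝ}
    (D : LocalPDirichletSpace X μ p)
    (f : X → ℝ) (hf : f ∈ D.F) (hfc : Continuous f)
    (c : ℝ) (A : Set X) (hA : MeasurableSet A) (hconst : ∀ x ∈ A, f x = c) :
    D.Γ f A = 0 := by
  have hp1 : 1 < p := D.hp
  have hp0 : 0 < p := by linarith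
  -- truncation functions
  set ε : ℕ → ℝ := fun n => 1 / (n + 1) with hεdef
  have hεpos : ∀ n, 0 < ε n := fun n => by positivity
  set clamp : ℕ → ℝ → ℝ := fun n t => min (max t (c - ε n)) (c + ε n) with hclampdef
  have hclampLip : ∀ n, LipschitzWith 1 (clamp n) := fun n =>
    (LipschitzWith.id.max_const (c - ε n)).min_const (c + ε n)
  have hclamp_mem : ∀ n t, c - ε n ≤ clamp n t ∧ clamp n t ≤ c + ε n := by
    intro n t
    constructor
    · exact le_min (le_max_right _ _) (by linarith [hεpos n])
    · exact min_le_right _ _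
  set G : ℕ → ℝ → ℝ := fun n t => t - clamp n t + clamp n 0 with hGdef
  have hGLip : ∀ n, LipschitzWith 2 (G n) := by
    intro n
    refine LipschitzWith.of_dist_le_mul fun x y => ?_
    have h := (hclampLip n).dist_le_mul x y
    simp only [Real.dist_eq, NNReal.coe_one, one_mul, NNReal.coe_ofNat] at h ⊢
    have e : G n x - G n y = (x - y) - (clamp n x - clamp n y) := by
      simp only [hGdef]; ring
    rw [e, abs_sub_le_iff]
    have h1 := abs_le.mp h
    constructor <;>
      cases' abs_cases (x - y) with hc hc <;> linarith [le_abs_self (x - y), neg_abs_le (x - y), h1.1, h1.2]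
  have hG0 : ∀ n, G n 0 = 0 := fun n => by simp [hGdef]
  set fi : ℕ → X → ℝ := fun n => G n ∘ f with hfidef
  have hchain := fun n => D.chain f hf (G n) 2 (hGLip n) (hG0 n)
  have hfiF : ∀ n, fi n ∈ D.F := fun n => (hchain n).1
  -- locality: fi n is constant on the open set U n ⊇ A
  have hzero : ∀ n, D.Γ (fi n) A = 0 := by
    intro n
    set U : Set X := f ⁻¹' Set.Ioo (c - ε n) (c + ε n) with hUdef
    have hUopen : IsOpen U := isOpen_Ioo.preimage hfc
    have hAU : A ⊆ U := by
      intro x hx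
      have := hconst x hx
      simp [hUdef, this, hεpos n]
    have hconstU : ∀ x ∈ U, fi n x = clamp n 0 := by
      intro x hx
      have hx1 : c - ε n < f x := hx.1
      have hx2 : f x < c + ε n := hx.2
      have : clamp n (f x) = f x := by
        simp only [hclampdef]
        rw [max_eq_left hx1.le, min_eq_left hx2.le]
      simp [hfidef, hGdef, this]
    have hloc : D.Γ (fi n) U = 0 := by
      refine D.locality (fi n) (hfiF n) (clamp n 0) U hUopen ?_
      exact ae_restrict_of_forall_mem hUopen.measurableSet hconstU
    exact le_antisymm (by rw [← hloc]; exact measure_mono hAU) zero_le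
  -- uniform energy bound
  have hEbound : ∀ n, D.Ep (fi n) ≤ 2 ^ p * D.Ep f := by
    intro n
    have h1 : ENNReal.ofReal (D.Ep (fi n)) ≤ ENNReal.ofReal (2 ^ p * D.Ep f) := by
      rw [← D.mass (fi n) (hfiF n)]
      calc D.Γ (fi n) Set.univ ≤ ENNReal.ofReal (((2 : ℝ≥0) : ℝ) ^ p) * D.Γ f Set.univ :=
            (hchain n).2 Set.univ MeasurableSet.univ
        _ = ENNReal.ofReal (2 ^ p * D.Ep f) := by
            rw [D.mass f hf, ← ENNReal.ofReal_mul (by positivity)]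
            norm_num
    have h2 : (0 : ℝ) ≤ 2 ^ p * D.Ep f := by
      have := D.Ep_nonneg f hf; positivity
    exact (ENNReal.ofReal_le_ofReal_iff h2).mp h1
  -- pointwise bounds
  have hb1 : ∀ n x, |fi n x - f x| ≤ |f x| := by
    intro n x
    have : fi n x - f x = clamp n 0 - clamp n (f x) := by
      simp [hfidef, hGdef]; ring
    rw [this]
    have := (hclampLip n).dist_le_mul 0 (f x)
    simpa [Real.dist_eq, abs_sub_comm] using this
  have hb2 : ∀ n x, |fi n x - f x| ≤ 2 * ε n := by
    intro n x
    have : fi n x - f x = clamp n 0 - clamp n (f x) := by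
      simp [hfidef, hGdef]; ring
    rw [this]
    obtain ⟨h1, h2⟩ := hclamp_mem n 0
    obtain ⟨h3, h4⟩ := hclamp_mem n (f x)
    rw [abs_sub_le_iff]
    constructor <;> linarith
  -- L^p convergence of fi to f
  have hfmem : MemLp f (ENNReal.ofReal p) μ := D.memLp f hf
  have hq0 : ENNReal.ofReal p ≠ 0 := by
    simp [ENNReal.ofReal_eq_zero]; linarith
  have hqtop : ENNReal.ofReal p ≠ ∞ := ENNReal.ofReal_ne_top
  have hqtoReal : (ENNReal.ofReal p).toReal = p := ENNReal.toReal_ofReal hp0.le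
  have hficont : ∀ n, Continuous (fi n) := fun n => (hGLip n).continuous.comp hfc
  have hLp : Tendsto (fun n => eLpNorm (fi n - f) (ENNReal.ofReal p) μ) atTop (𝓝 0) := by
    simp only [eLpNorm_eq_lintegral_rpow_enorm_toReal hq0 hqtop, hqtoReal]
    have hlin : Tendsto (fun n => ∫⁻ x, (‖(fi n - f) x‖₊ : ℝ≥0∞) ^ p ∂μ) atTop (𝓝 0) := by
      have h0 : (0 : ℝ≥0∞) = ∫⁻ _x, (0 : ℝ≥0∞) ∂μ := by simp
      rw [h0]
      refine tendsto_lintegral_of_dominated_convergence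
        (fun x => (‖f x‖₊ : ℝ≥0∞) ^ p) (fun n => ?_) (fun n => ?_) ?_ ?_
      · exact (ENNReal.continuous_rpow_const.comp
          (ENNReal.continuous_coe.comp ((hficont n).sub hfc).nnnorm)).measurable
      · refine Filter.Eventually.of_forall fun x => ?_
        refine ENNReal.rpow_le_rpow ?_ hp0.le
        rw [ENNReal.coe_le_coe, ← NNReal.coe_le_coe]
        simpa [Real.norm_eq_abs] using hb1 n x
      · have hfin := (eLpNorm_lt_top_iff_lintegral_rpow_enorm_lt_top hq0 hqtop).mp
          hfmem.eLpNorm_lt_top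
        rw [hqtoReal] at hfin
        exact hfin.ne
      · refine Filter.Eventually.of_forall fun x => ?_
        have hupper : Tendsto (fun n => (ENNReal.ofReal (2 * ε n)) ^ p) atTop (𝓝 0) := by
          have h1 : Tendsto (fun n => 2 * ε n) atTop (𝓝 0) := by
            have := tendsto_one_div_add_atTop_nhds_zero_nat (𝕜 := ℝ)
            simpa [hεdef] using this.const_mul 2
          have h2 : Tendsto (fun n => ENNReal.ofReal (2 * ε n)) atTop (𝓝 0) := by
            have := ENNReal.tendsto_ofReal h1
            simpa using this
          have := h2.ennrpow_const p
          simpa [ENNReal.zero_rpow_of_pos hp0] using this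
        refine tendsto_of_tendsto_of_tendsto_of_le_of_le tendsto_const_nhds hupper
          (fun n => zero_le) (fun n => ?_)
        refine ENNReal.rpow_le_rpow ?_ hp0.le
        rw [← ENNReal.ofReal_coe_nnreal]
        refine ENNReal.ofReal_le_ofReal ?_
        simpa [Real.norm_eq_abs, coe_nnnorm] using hb2 n x
    have hres := hlin.ennrpow_const (1 / p)
    have h00 : (0 : ℝ≥0∞) ^ (1 / p) = 0 := ENNReal.zero_rpow_of_pos (by positivity)
    rw [h00] at hres
    exact hres
  -- lower semicontinuity
  obtain ⟨-, hlsc⟩ := D.lsc f fi hfmem hfiF hLp ⟨2 ^ p * D.Ep f, hEbound⟩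
  have := hlsc A hA
  simp only [hzero] at this
  simpa [Filter.liminf_const] using this


end
end

section
/- Let (X,d,μ,E_p,F_p,Γ_p) be a regular local p-Dirichlet space. Then: (1) every f ∈ F_p has a quasicontinuous representative, i.e. there exists a quasicontinuous function f̃ : X → ℝ with f = f̃ μ-a.e.; (2) if f,g : X → ℝ are quasicontinuous representatives of elements of F_p and f = g μ-a.e., then Cap({x : f(x) ≠ g(x)}) = 0. -/
open MeasureTheory ENNReal NNReal Filter Topology Metric Set

noncomputable section

variable {X : Type} [MetricSpace X] [MeasurableSpace X] [BorelSpace X] {μ : Measure X} {p : ℝ}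

section Aux

set_option linter.unusedSectionVars false

theorem ofReal_integral_rpow (hp : 1 < p) {u : X → ℝ} (hu : MemLp u (ENNReal.ofReal p) μ) :
    ENNReal.ofReal (∫ x, |u x| ^ p ∂μ) = (eLpNorm u (ENNReal.ofReal p) μ) ^ p := by
  have hp0 : 0 < p := lt_trans one_pos hp
  have hPne0 : (ENNReal.ofReal p) ≠ 0 := by simp [ENNReal.ofReal_eq_zero]; linarith
  have hPneT : (ENNReal.ofReal p) ≠ ∞ := ENNReal.ofReal_ne_top
  have htoReal : (ENNReal.ofReal p).toReal = p := ENNReal.toReal_ofReal hp0.le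
  have hint : Integrable (fun x => ‖u x‖ ^ p) μ := by
    simpa [htoReal] using hu.integrable_norm_rpow hPne0 hPneT
  have h1 : ENNReal.ofReal (∫ x, |u x| ^ p ∂μ) = ∫⁻ x, ENNReal.ofReal (|u x| ^ p) ∂μ := by
    refine ofReal_integral_eq_lintegral_ofReal ?_ ?_
    · simpa [Real.norm_eq_abs] using hint
    · exact Filter.Eventually.of_forall fun x => Real.rpow_nonneg (abs_nonneg _) _
  rw [h1, eLpNorm_eq_lintegral_rpow_enorm_toReal hPne0 hPneT, htoReal, ← ENNReal.rpow_mul,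
    one_div, inv_mul_cancel₀ hp0.ne', ENNReal.rpow_one]
  refine lintegral_congr fun x => ?_
  rw [← ENNReal.ofReal_rpow_of_nonneg (abs_nonneg _) hp0.le, Real.enorm_eq_ofReal_abs]

theorem lintegral_rpow_eq_eLpNorm_rpow (hp : 1 < p) (u : X → ℝ) :
    ∫⁻ x, (‖u x‖₊ : ℝ≥0∞) ^ p ∂μ = (eLpNorm u (ENNReal.ofReal p) μ) ^ p := by
  have hp0 : 0 < p := lt_trans one_pos hp
  have hPne0 : (ENNReal.ofReal p) ≠ 0 := by simp [ENNReal.ofReal_eq_zero]; linarith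
  rw [eLpNorm_eq_lintegral_rpow_enorm_toReal hPne0 ENNReal.ofReal_ne_top,
    ENNReal.toReal_ofReal hp0.le, ← ENNReal.rpow_mul, one_div, inv_mul_cancel₀ hp0.ne',
    ENNReal.rpow_one]
  simp only [enorm_eq_nnnorm]

theorem rpow_rpow_cancel (hp : 1 < p) (x : ℝ≥0∞) : (x ^ p) ^ (1 / p) = x := by
  have hp0 : 0 < p := lt_trans one_pos hp
  rw [← ENNReal.rpow_mul, mul_one_div, div_self hp0.ne', ENNReal.rpow_one]

theorem rpow_rpow_cancel' (hp : 1 < p) (x : ℝ≥0∞) : (x ^ (1 / p)) ^ p = x := by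
  have hp0 : 0 < p := lt_trans one_pos hp
  rw [← ENNReal.rpow_mul, one_div, inv_mul_cancel₀ hp0.ne', ENNReal.rpow_one]

theorem integral_rpow_nonneg (u : X → ℝ) : 0 ≤ ∫ x, |u x| ^ p ∂μ :=
  integral_nonneg fun x => Real.rpow_nonneg (abs_nonneg _) _

namespace LocalPDirichletSpace

variable (D : LocalPDirichletSpace X μ p)

include D in
theorem hp0 : 0 < p := lt_trans one_pos D.hp

include D in
theorem hp0' : (0:ℝ) ≤ 1 / p := by have := D.hp0; positivity

include D in
theorem one_le_P : 1 ≤ ENNReal.ofReal p := by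
  rw [← ENNReal.ofReal_one]; exact ENNReal.ofReal_le_ofReal D.hp.le

theorem aesm {u : X → ℝ} (hu : u ∈ D.F) : AEStronglyMeasurable u μ :=
  (D.memLp u hu).aestronglyMeasurable

theorem neg_mem {u : X → ℝ} (hu : u ∈ D.F) : -u ∈ D.F := by
  have h : -u = (-1 : ℝ) • u := by funext x; simp
  rw [h]; exact D.smul_mem (-1) u hu

theorem sub_mem {u v : X → ℝ} (hu : u ∈ D.F) (hv : v ∈ D.F) : u - v ∈ D.F := by
  have h : u - v = u + -v := by funext x; simp [sub_eq_add_neg]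
  rw [h]; exact D.add_mem u hu _ (D.neg_mem hv)

/-- The `ℝ≥0∞`-valued norm used throughout. -/
def M (u : X → ℝ) : ℝ≥0∞ :=
  eLpNorm u (ENNReal.ofReal p) μ + (D.Γ u Set.univ) ^ (1 / p)

theorem valueEq {u : X → ℝ} (hu : u ∈ D.F) :
    ENNReal.ofReal ((∫ x, |u x| ^ p ∂μ) + D.Ep u)
      = (eLpNorm u (ENNReal.ofReal p) μ) ^ p + D.Γ u Set.univ := by
  rw [ENNReal.ofReal_add (integral_rpow_nonneg u) (D.Ep_nonneg u hu),
    ofReal_integral_rpow D.hp (D.memLp u hu), D.mass u hu]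

theorem M_le_two {u : X → ℝ} (hu : u ∈ D.F) :
    D.M u ≤ 2 * (ENNReal.ofReal ((∫ x, |u x| ^ p ∂μ) + D.Ep u)) ^ (1 / p) := by
  rw [D.valueEq hu, two_mul]
  refine add_le_add ?_ ?_
  · conv_lhs => rw [← rpow_rpow_cancel D.hp (eLpNorm u (ENNReal.ofReal p) μ)]
    exact ENNReal.rpow_le_rpow le_self_add D.hp0'
  · exact ENNReal.rpow_le_rpow le_add_self D.hp0'

theorem value_le_two {u : X → ℝ} (hu : u ∈ D.F) :
    ENNReal.ofReal ((∫ x, |u x| ^ p ∂μ) + D.Ep u) ≤ 2 * (D.M u) ^ p := by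
  rw [D.valueEq hu, two_mul]
  refine add_le_add ?_ ?_
  · exact ENNReal.rpow_le_rpow le_self_add D.hp0.le
  · conv_lhs => rw [← rpow_rpow_cancel' D.hp (D.Γ u Set.univ)]
    exact ENNReal.rpow_le_rpow le_add_self D.hp0.le

theorem M_add {u v : X → ℝ} (hu : u ∈ D.F) (hv : v ∈ D.F) :
    D.M (u + v) ≤ D.M u + D.M v := by
  unfold M
  rw [add_add_add_comm]
  exact add_le_add (eLpNorm_add_le (D.aesm hu) (D.aesm hv) D.one_le_P)
    (D.sublinear u hu v hv Set.univ MeasurableSet.univ)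

theorem M_neg {u : X → ℝ} (hu : u ∈ D.F) : D.M (-u) = D.M u := by
  have h : -u = (-1 : ℝ) • u := by funext x; simp
  unfold M
  rw [eLpNorm_neg, h, D.homog u hu (-1)]
  simp [abs_neg, Real.one_rpow]

theorem M_sub {u v : X → ℝ} (hu : u ∈ D.F) (hv : v ∈ D.F) :
    D.M (u - v) ≤ D.M u + D.M v := by
  have h : u - v = u + -v := by funext x; simp [sub_eq_add_neg]
  rw [h]
  exact (D.M_add hu (D.neg_mem hv)).trans (by rw [D.M_neg hv])

theorem M_chain {u : X → ℝ} (hu : u ∈ D.F) {g : ℝ → ℝ} {L : ℝ≥0}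
    (hg : LipschitzWith L g) (h0 : g 0 = 0) :
    g ∘ u ∈ D.F ∧ D.M (g ∘ u) ≤ (L : ℝ≥0∞) * D.M u := by
  obtain ⟨hmem, hΓ⟩ := D.chain u hu g L hg h0
  refine ⟨hmem, ?_⟩
  unfold M
  rw [mul_add]
  refine add_le_add ?_ ?_
  · have hb : ∀ᵐ x ∂μ, ‖(g ∘ u) x‖ ≤ (L : ℝ) * ‖u x‖ := by
      refine Filter.Eventually.of_forall fun x => ?_
      have := hg.dist_le_mul (u x) 0
      simpa [Real.dist_eq, h0, Real.norm_eq_abs] using this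
    simpa [ENNReal.smul_def, smul_eq_mul] using
      eLpNorm_le_nnreal_smul_eLpNorm_of_ae_le_mul hb (ENNReal.ofReal p)
  · have h1 : (D.Γ (g ∘ u) Set.univ) ^ (1 / p)
        ≤ (ENNReal.ofReal ((L : ℝ) ^ p) * D.Γ u Set.univ) ^ (1 / p) :=
      ENNReal.rpow_le_rpow (hΓ Set.univ MeasurableSet.univ) D.hp0'
    refine h1.trans ?_
    rw [ENNReal.mul_rpow_of_nonneg _ _ D.hp0',
      ← ENNReal.ofReal_rpow_of_nonneg L.coe_nonneg D.hp0.le, rpow_rpow_cancel D.hp,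
      ENNReal.ofReal_coe_nnreal]

theorem cap_le' {A U : Set X} {h : X → ℝ} (hF : h ∈ D.F) (hU : IsOpen U) (hAU : A ⊆ U)
    (hae : ∀ᵐ x ∂(μ.restrict U), h x = 1) :
    D.cap A ≤ ENNReal.ofReal ((∫ x, |h x| ^ p ∂μ) + D.Ep h) :=
  iInf₂_le h ⟨hF, U, hU, hAU, hae⟩

theorem cap_mono {A B : Set X} (hAB : A ⊆ B) : D.cap A ≤ D.cap B := by
  refine le_iInf₂ fun h hh => ?_
  obtain ⟨hF, U, hU, hBU, hae⟩ := hh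
  exact D.cap_le' hF hU (hAB.trans hBU) hae

theorem measure_le_cap (A : Set X) : μ A ≤ D.cap A := by
  refine le_iInf₂ fun h hh => ?_
  obtain ⟨hF, U, hU, hAU, hae⟩ := hh
  calc μ A ≤ μ U := measure_mono hAU
    _ = ∫⁻ _ in U, 1 ∂μ := (setLIntegral_one U).symm
    _ = ∫⁻ x in U, (‖h x‖₊ : ℝ≥0∞) ^ p ∂μ := by
        refine lintegral_congr_ae (hae.mono fun x hx => ?_)
        simp [hx]
    _ ≤ ∫⁻ x, (‖h x‖₊ : ℝ≥0∞) ^ p ∂μ := lintegral_mono' Measure.restrict_le_self le_rfl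
    _ = (eLpNorm h (ENNReal.ofReal p) μ) ^ p := lintegral_rpow_eq_eLpNorm_rpow D.hp h
    _ ≤ (eLpNorm h (ENNReal.ofReal p) μ) ^ p + D.Γ h Set.univ := le_self_add
    _ = ENNReal.ofReal ((∫ x, |h x| ^ p ∂μ) + D.Ep h) := (D.valueEq hF).symm

theorem exists_competitor {A : Set X} {t : ℝ≥0∞} (hcap : D.cap A < t) :
    ∃ h ∈ D.F, (∃ U : Set X, IsOpen U ∧ A ⊆ U ∧ ∀ᵐ x ∂(μ.restrict U), h x = 1) ∧
      ENNReal.ofReal ((∫ x, |h x| ^ p ∂μ) + D.Ep h) < t := by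
  rw [LocalPDirichletSpace.cap, iInf_lt_iff] at hcap
  obtain ⟨h, hh⟩ := hcap
  rw [iInf_lt_iff] at hh
  obtain ⟨⟨hF, hU⟩, hval⟩ := hh
  exact ⟨h, hF, hU, hval⟩

theorem trunc_competitor {h₁ h₂ : X → ℝ} (h1F : h₁ ∈ D.F) (h2F : h₂ ∈ D.F) :
    (fun x => min (|h₁ x| + |h₂ x|) 1) ∈ D.F ∧
      D.M (fun x => min (|h₁ x| + |h₂ x|) 1) ≤ D.M h₁ + D.M h₂ := by
  have habs : LipschitzWith 1 (fun t : ℝ => |t|) := by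
    exact (lipschitzWith_one_norm : LipschitzWith 1 (norm : ℝ → ℝ))
  have ha1 := D.M_chain h1F habs abs_zero
  have ha2 := D.M_chain h2F habs abs_zero
  have hsumF : (fun t : ℝ => |t|) ∘ h₁ + (fun t : ℝ => |t|) ∘ h₂ ∈ D.F :=
    D.add_mem _ ha1.1 _ ha2.1
  have hmin : LipschitzWith 1 (fun t : ℝ => min t 1) := LipschitzWith.id.min_const 1
  have h0 : min (0:ℝ) 1 = 0 := by norm_num
  obtain ⟨hF, hM⟩ := D.M_chain hsumF hmin h0
  have hEq : (fun t : ℝ => min t 1) ∘ ((fun t : ℝ => |t|) ∘ h₁ + (fun t : ℝ => |t|) ∘ h₂)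
      = fun x => min (|h₁ x| + |h₂ x|) 1 := rfl
  rw [hEq] at hF hM
  refine ⟨hF, ?_⟩
  refine hM.trans ?_
  rw [ENNReal.coe_one, one_mul]
  refine (D.M_add ha1.1 ha2.1).trans (add_le_add ?_ ?_)
  · simpa using ha1.2
  · simpa using ha2.2

theorem min_one_lipschitz : LipschitzWith 1 (fun t : ℝ => min t 1) :=
  LipschitzWith.id.min_const 1

theorem M_zero : D.M (0 : X → ℝ) = 0 := by
  have hΓ : D.Γ (0 : X → ℝ) = 0 := by
    have h1 : (0:ℝ) • (0 : X → ℝ) = (0 : X → ℝ) := by funext x; simp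
    have := D.homog 0 D.zero_mem 0
    rw [h1] at this
    rw [this, abs_zero, Real.zero_rpow D.hp0.ne', ENNReal.ofReal_zero, zero_smul]
  have hp0 : 0 < p := D.hp0
  unfold M
  rw [hΓ, eLpNorm_zero]
  have h2 : ((0: Measure X) Set.univ) ^ (1/p) = 0 := by
    rw [Measure.coe_zero, Pi.zero_apply, ENNReal.zero_rpow_of_pos (by positivity : (0:ℝ) < 1/p)]
  rw [h2, zero_add]

theorem eLpNorm_le_M (u : X → ℝ) : eLpNorm u (ENNReal.ofReal p) μ ≤ D.M u := le_self_add

theorem Γ_le_M_rpow {u : X → ℝ} : D.Γ u Set.univ ≤ (D.M u) ^ p := by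
  conv_lhs => rw [← rpow_rpow_cancel' D.hp (D.Γ u Set.univ)]
  exact ENNReal.rpow_le_rpow le_add_self D.hp0.le

/-- Chebyshev-type competitor. -/
theorem cheb {w : X → ℝ} (hwF : w ∈ D.F) (c : ℝ≥0) :
    ∃ h : X → ℝ, h ∈ D.F ∧ (Continuous w → Continuous h) ∧
      (∀ x, 0 ≤ h x) ∧ (∀ x, h x ≤ 1) ∧
      (∀ x, 2 ≤ (c : ℝ) * |w x| → h x = 1) ∧ D.M h ≤ (c : ℝ≥0∞) * D.M w := by
  have habs : LipschitzWith 1 (fun t : ℝ => |t|) := by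
    exact (lipschitzWith_one_norm : LipschitzWith 1 (norm : ℝ → ℝ))
  have hbase : LipschitzWith c (fun t : ℝ => (c : ℝ) * |t| - 1) := by
    refine LipschitzWith.of_dist_le_mul fun s t => ?_
    rw [Real.dist_eq, Real.dist_eq]
    have h1 : (c:ℝ) * |s| - 1 - ((c:ℝ) * |t| - 1) = (c:ℝ) * (|s| - |t|) := by ring
    rw [h1, abs_mul, abs_of_nonneg c.coe_nonneg]
    exact mul_le_mul_of_nonneg_left (abs_abs_sub_abs_le_abs_sub s t) c.coe_nonneg
  set φ : ℝ → ℝ := fun t => min (max ((c:ℝ) * |t| - 1) 0) 1 with hφdef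
  have hφlip : LipschitzWith c φ := (hbase.max_const 0).min_const 1
  have hφ0 : φ 0 = 0 := by simp [hφdef]
  obtain ⟨hmem, hM⟩ := D.M_chain hwF hφlip hφ0
  refine ⟨φ ∘ w, hmem, ?_, ?_, ?_, ?_, hM⟩
  · exact fun hw => hφlip.continuous.comp hw
  · exact fun x => le_min (le_max_right _ _) zero_le_one
  · exact fun x => min_le_right _ _
  · intro x hx
    have h1 : (1:ℝ) ≤ max ((c:ℝ) * |w x| - 1) 0 := le_max_of_le_left (by linarith)
    exact min_eq_right h1

theorem min_one_sub_min_one {a b : ℝ} (hba : b ≤ a) : min a 1 - min b 1 ≤ a - b := by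
  have h : min a 1 ≤ min (b + (a - b)) (1 + (a - b)) :=
    min_le_min (by linarith) (by linarith)
  rw [min_add_add_right] at h
  linarith

end LocalPDirichletSpace

theorem geom_Ico_le {b : ℝ} (hb0 : 0 ≤ b) (hb : b ≤ 2⁻¹) (i j : ℕ) :
    ∑ r ∈ Finset.Ico i j, b ^ r ≤ b ^ i * 2 := by
  rcases le_or_gt i j with hij | hij
  · rw [Finset.sum_Ico_eq_sum_range]
    have h1 : ∀ r, b ^ (i + r) = b ^ i * b ^ r := fun r => pow_add b i r
    rw [Finset.sum_congr rfl fun r _ => h1 r, ← Finset.mul_sum]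
    refine mul_le_mul_of_nonneg_left ?_ (pow_nonneg hb0 i)
    calc ∑ r ∈ Finset.range (j - i), b ^ r
        ≤ ∑ r ∈ Finset.range (j - i), (1/2 : ℝ) ^ r :=
          Finset.sum_le_sum fun r _ => pow_le_pow_left₀ hb0 (by rw [one_div]; exact hb) r
      _ ≤ 2 := sum_geometric_two_le _
  · rw [Finset.Ico_eq_empty (by omega)]
    simp only [Finset.sum_empty]
    positivity

theorem tail_geom_le (n j i : ℕ) :
    ∑ r ∈ Finset.Ico j i, ((8:ℝ)⁻¹) ^ (n + 1 + r) ≤ (8:ℝ)⁻¹ ^ (n + j) := by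
  have h1 : ∀ r, ((8:ℝ)⁻¹) ^ (n + 1 + r) = (8:ℝ)⁻¹ ^ (n+1) * (8:ℝ)⁻¹ ^ r :=
    fun r => pow_add _ _ _
  rw [Finset.sum_congr rfl fun r _ => h1 r, ← Finset.mul_sum]
  have h2 : ∑ r ∈ Finset.Ico j i, ((8:ℝ)⁻¹) ^ r ≤ (8:ℝ)⁻¹ ^ j * 2 :=
    geom_Ico_le (by norm_num) (by norm_num) j i
  have h3 : (0:ℝ) ≤ (8:ℝ)⁻¹ ^ (n+1) := by positivity
  calc (8:ℝ)⁻¹ ^ (n+1) * ∑ r ∈ Finset.Ico j i, ((8:ℝ)⁻¹) ^ r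
      ≤ (8:ℝ)⁻¹ ^ (n+1) * ((8:ℝ)⁻¹ ^ j * 2) := mul_le_mul_of_nonneg_left h2 h3
    _ ≤ (8:ℝ)⁻¹ ^ (n + j) := by
        rw [pow_add, pow_add, pow_succ]
        have h4 : (0:ℝ) ≤ (8:ℝ)⁻¹ ^ n * (8:ℝ)⁻¹ ^ j := by positivity
        nlinarith

end Aux

/-- **Existence and uniqueness of quasicontinuous representatives** (Proposition 2.23):
in a regular local `p`-Dirichlet space, every `f ∈ F_p` has a quasicontinuous representative,
and two quasicontinuous representatives of elements of `F_p` that agree `μ`-a.e. agree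
outside a set of capacity zero. -/
theorem quasicontinuous_representative
    {X : Type} [MetricSpace X] [MeasurableSpace X] [BorelSpace X] {μ : Measure X} {p : ℝ}
    (D : LocalPDirichletSpace X μ p) (hreg : D.IsRegular) :
    (∀ f ∈ D.F, ∃ g : X → ℝ, D.QuasiContinuous g ∧ f =ᵐ[μ] g) ∧
    (∀ f ∈ D.F, ∀ g ∈ D.F, D.QuasiContinuous f → D.QuasiContinuous g → f =ᵐ[μ] g →
      D.cap {x | f x ≠ g x} = 0) := by
  constructor
  · intro f hf
    have hp0 : 0 < p := D.hp0
    have hPne0 : (ENNReal.ofReal p) ≠ 0 := by simp [ENNReal.ofReal_eq_zero]; linarith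
    -- Step 1: approximating sequence of continuous functions
    have happrox : ∀ k : ℕ, ∃ gk : X → ℝ, gk ∈ D.F ∧ Continuous gk ∧
        fpNorm μ p D.Ep (f - gk) < (64⁻¹:ℝ) ^ (k+1) := by
      intro k
      obtain ⟨gk, hF, hc, _, hn⟩ := hreg.1 f hf ((64⁻¹:ℝ) ^ (k+1)) (by positivity)
      exact ⟨gk, hF, hc, hn⟩
    choose g hgF hgcont hgnorm using happrox
    have hfgF : ∀ k, f - g k ∈ D.F := fun k => D.sub_mem hf (hgF k)
    have hMfg : ∀ k, D.M (f - g k) ≤ 2 * ENNReal.ofReal ((64⁻¹:ℝ) ^ (k+1)) := by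
      intro k
      refine (D.M_le_two (hfgF k)).trans (mul_le_mul_right ?_ 2)
      have hV : 0 ≤ (∫ x, |(f - g k) x| ^ p ∂μ) + D.Ep (f - g k) :=
        add_nonneg (integral_rpow_nonneg _) (D.Ep_nonneg _ (hfgF k))
      rw [ENNReal.ofReal_rpow_of_nonneg hV D.hp0']
      exact ENNReal.ofReal_le_ofReal (hgnorm k).le
    -- Step 2: differences of consecutive approximants
    set w : ℕ → X → ℝ := fun k => g (k+1) - g k with hwdef
    have hwF : ∀ k, w k ∈ D.F := fun k => D.sub_mem (hgF (k+1)) (hgF k)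
    have hwcont : ∀ k, Continuous (w k) := fun k => (hgcont (k+1)).sub (hgcont k)
    have hMw : ∀ k, D.M (w k) ≤ 4 * ENNReal.ofReal ((64⁻¹:ℝ) ^ (k+1)) := by
      intro k
      have h1 : w k = (f - g k) - (f - g (k+1)) := by funext x; simp [hwdef]
      rw [h1]
      refine (D.M_sub (hfgF k) (hfgF (k+1))).trans ?_
      have h2 : ENNReal.ofReal ((64⁻¹:ℝ) ^ (k+2)) ≤ ENNReal.ofReal ((64⁻¹:ℝ) ^ (k+1)) :=
        ENNReal.ofReal_le_ofReal (pow_le_pow_of_le_one (by norm_num) (by norm_num) (by omega))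
      calc D.M (f - g k) + D.M (f - g (k+1))
          ≤ 2 * ENNReal.ofReal ((64⁻¹:ℝ) ^ (k+1)) + 2 * ENNReal.ofReal ((64⁻¹:ℝ) ^ (k+2)) :=
            add_le_add (hMfg k) (hMfg (k+1))
        _ ≤ 2 * ENNReal.ofReal ((64⁻¹:ℝ) ^ (k+1)) + 2 * ENNReal.ofReal ((64⁻¹:ℝ) ^ (k+1)) :=
            add_le_add_right (mul_le_mul_right h2 2) _
        _ = 4 * ENNReal.ofReal ((64⁻¹:ℝ) ^ (k+1)) := by ring
    -- Step 3: Chebyshev competitors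
    set c : ℕ → ℝ≥0 := fun k => ⟨(2:ℝ) ^ (k+1), by positivity⟩ with hcdef
    have hcoe : ∀ k, ((c k : ℝ≥0) : ℝ) = (2:ℝ) ^ (k+1) := fun k => rfl
    have hcheb : ∀ k, ∃ hk : X → ℝ, hk ∈ D.F ∧ Continuous hk ∧ (∀ x, 0 ≤ hk x) ∧
        (∀ x, hk x ≤ 1) ∧ (∀ x, 2 ≤ ((c k : ℝ≥0) : ℝ) * |w k x| → hk x = 1) ∧
        D.M hk ≤ ENNReal.ofReal ((8:ℝ)⁻¹ ^ (k+1)) := by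
      intro k
      obtain ⟨hk, hF, hcont, h0, h1, hone, hM⟩ := D.cheb (hwF k) (c k)
      refine ⟨hk, hF, hcont (hwcont k), h0, h1, hone, hM.trans ?_⟩
      have hc1 : ((c k : ℝ≥0) : ℝ≥0∞) = ENNReal.ofReal ((2:ℝ) ^ (k+1)) :=
        (ENNReal.ofReal_eq_coe_nnreal _).symm
      have hc2 : (4 : ℝ≥0∞) = ENNReal.ofReal (4:ℝ) := by
        rw [ENNReal.ofReal_ofNat]
      calc ((c k : ℝ≥0) : ℝ≥0∞) * D.M (w k)
          ≤ ENNReal.ofReal ((2:ℝ) ^ (k+1)) * (4 * ENNReal.ofReal ((64⁻¹:ℝ) ^ (k+1))) := by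
            rw [← hc1]; exact mul_le_mul_right (hMw k) _
        _ = ENNReal.ofReal ((2:ℝ) ^ (k+1) * (4 * (64⁻¹:ℝ) ^ (k+1))) := by
            rw [hc2, ← ENNReal.ofReal_mul (by positivity), ← ENNReal.ofReal_mul (by positivity)]
        _ ≤ ENNReal.ofReal ((8:ℝ)⁻¹ ^ (k+1)) := by
            refine ENNReal.ofReal_le_ofReal ?_
            have e1 : (2:ℝ) ^ (k+1) * (4 * (64⁻¹:ℝ) ^ (k+1)) = 4 * (32⁻¹:ℝ) ^ (k+1) := by
              rw [show ((32:ℝ)⁻¹) = 2 * 64⁻¹ by norm_num, mul_pow]; ring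
            have e2 : ((8:ℝ)⁻¹) ^ (k+1) = 4 ^ (k+1) * (32⁻¹:ℝ) ^ (k+1) := by
              rw [← mul_pow]; norm_num
            rw [e1, e2]
            have e3 : (4:ℝ) ≤ 4 ^ (k+1) := le_self_pow₀ (by norm_num) (by omega)
            have e4 : (0:ℝ) ≤ (32⁻¹:ℝ) ^ (k+1) := by positivity
            nlinarith
    choose h hhF hhcont hh0 hh1 hhone hMh using hcheb
    -- Step 4: the bad open sets
    set A : ℕ → Set X := fun k => {x | (2:ℝ) < ((c k : ℝ≥0) : ℝ) * |w k x|} with hAdef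
    have hAopen : ∀ k, IsOpen (A k) :=
      fun k => isOpen_lt continuous_const (continuous_const.mul (hwcont k).abs)
    have hoff : ∀ k x, x ∉ A k → |w k x| ≤ (2⁻¹:ℝ) ^ k := by
      intro k x hx
      have h1 : ((c k : ℝ≥0) : ℝ) * |w k x| ≤ 2 := not_lt.1 hx
      rw [hcoe k] at h1
      have h2 : (0:ℝ) < 2 ^ (k+1) := by positivity
      have h3 : (2:ℝ) ^ (k+1) * (2⁻¹:ℝ) ^ k = 2 := by
        rw [pow_succ, mul_comm ((2:ℝ) ^ k) 2, mul_assoc, ← mul_pow]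
        norm_num
      refine le_of_mul_le_mul_left ?_ h2
      rw [h3]; exact h1
    have hAone : ∀ k x, x ∈ A k → h k x = 1 := fun k x hx => hhone k x (le_of_lt hx)
    set G : ℕ → Set X := fun n => ⋃ k, ⋃ (_ : n ≤ k), A k with hGdef
    have hGopen : ∀ n, IsOpen (G n) :=
      fun n => isOpen_iUnion fun k => isOpen_iUnion fun _ => hAopen k
    -- Step 5: capacity bound on G n
    have capG : ∀ n, D.cap (G n) ≤ 2 * (ENNReal.ofReal ((8:ℝ)⁻¹ ^ n)) ^ p := by
      intro n
      set S : ℕ → X → ℝ := fun j x => ∑ i ∈ Finset.range j, h (n + i) x with hSdef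
      have hS0 : S 0 = (0 : X → ℝ) := by funext x; simp [hSdef]
      have hSsucc : ∀ j, S (j+1) = S j + h (n + j) := by
        intro j; funext x; simp [hSdef, Finset.sum_range_succ]
      have hSF : ∀ j, S j ∈ D.F := by
        intro j
        induction j with
        | zero => rw [hS0]; exact D.zero_mem
        | succ j ih => rw [hSsucc j]; exact D.add_mem _ ih _ (hhF (n+j))
      have hScont : ∀ j, Continuous (S j) := by
        intro j
        induction j with
        | zero => rw [hS0]; exact continuous_const
        | succ j ih => rw [hSsucc j]; exact ih.add (hhcont (n+j))
      have hMS : ∀ j, D.M (S j) ≤ ENNReal.ofReal ((8:ℝ)⁻¹ ^ n) := by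
        have key : ∀ j, D.M (S j) ≤
            ENNReal.ofReal (∑ i ∈ Finset.range j, ((8:ℝ)⁻¹) ^ (n + 1 + i)) := by
          intro j
          induction j with
          | zero => rw [hS0]; simp [D.M_zero]
          | succ j ih =>
            rw [hSsucc j]
            refine (D.M_add (hSF j) (hhF (n+j))).trans ?_
            rw [Finset.sum_range_succ, ENNReal.ofReal_add (Finset.sum_nonneg fun i _ => by
              positivity) (by positivity)]
            refine add_le_add ih ?_
            refine (hMh (n+j)).trans (ENNReal.ofReal_le_ofReal ?_)
            rw [show n + 1 + j = n + j + 1 from by omega]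
        intro j
        refine (key j).trans (ENNReal.ofReal_le_ofReal ?_)
        calc ∑ i ∈ Finset.range j, ((8:ℝ)⁻¹) ^ (n + 1 + i)
            = ∑ i ∈ Finset.Ico 0 j, ((8:ℝ)⁻¹) ^ (n + 1 + i) := by
              rw [Finset.range_eq_Ico]
          _ ≤ (8:ℝ)⁻¹ ^ (n + 0) := tail_geom_le n 0 j
          _ = (8:ℝ)⁻¹ ^ n := by rw [Nat.add_zero]
      set T : ℕ → X → ℝ := fun j x => min (S j x) 1 with hTdef
      have hTF : ∀ j, T j ∈ D.F := by
        intro j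
        have := (D.M_chain (hSF j) LocalPDirichletSpace.min_one_lipschitz (by norm_num)).1
        exact this
      have hMT : ∀ j, D.M (T j) ≤ ENNReal.ofReal ((8:ℝ)⁻¹ ^ n) := by
        intro j
        have h2 := (D.M_chain (hSF j) LocalPDirichletSpace.min_one_lipschitz (by norm_num)).2
        rw [ENNReal.coe_one, one_mul] at h2
        exact h2.trans (hMS j)
      have hTcont : ∀ j, Continuous (T j) := fun j => (hScont j).min continuous_const
      have hSnn : ∀ j x, 0 ≤ S j x := by
        intro j x
        exact Finset.sum_nonneg fun i _ => hh0 (n+i) x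
      have hSmono : ∀ x, Monotone fun j => S j x := by
        intro x
        refine monotone_nat_of_le_succ fun j => ?_
        rw [hSsucc j]
        simpa using hh0 (n+j) x
      have hTmono : ∀ x, Monotone fun j => T j x :=
        fun x => fun i j hij => min_le_min (hSmono x hij) le_rfl
      have hT1 : ∀ j x, T j x ≤ 1 := fun j x => min_le_right _ _
      set Tlim : X → ℝ := fun x => ⨆ j, T j x with hTlimdef
      have hbdd : ∀ x, BddAbove (Set.range fun j => T j x) := by
        intro x
        refine ⟨1, ?_⟩
        rintro y ⟨j, rfl⟩
        exact hT1 j x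
      have hTtend : ∀ x, Tendsto (fun j => T j x) atTop (𝓝 (Tlim x)) :=
        fun x => tendsto_atTop_ciSup (hTmono x) (hbdd x)
      have hsm : StronglyMeasurable Tlim :=
        stronglyMeasurable_of_tendsto atTop (fun j => (hTcont j).stronglyMeasurable)
          (tendsto_pi_nhds.2 hTtend)
      -- eLpNorm difference bounds
      have hsub : ∀ j i, j ≤ i → ∀ x, S i x - S j x = ∑ r ∈ Finset.Ico j i, h (n + r) x := by
        intro j i hij x
        rw [Finset.sum_Ico_eq_sub _ hij]
      have hNT : ∀ j i, j ≤ i →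
          eLpNorm (T i - T j) (ENNReal.ofReal p) μ ≤ ENNReal.ofReal ((8:ℝ)⁻¹ ^ (n + j)) := by
        intro j i hij
        have hfun : (fun x => ∑ r ∈ Finset.Ico j i, h (n + r) x)
            = ∑ r ∈ Finset.Ico j i, h (n + r) := by
          funext x; rw [Finset.sum_apply]
        have hb : ∀ x, ‖(T i - T j) x‖ ≤ ‖(∑ r ∈ Finset.Ico j i, h (n + r)) x‖ := by
          intro x
          rw [← hfun]
          have h1 : S j x ≤ S i x := hSmono x hij
          have h2 : T j x ≤ T i x := hTmono x hij
          have h3 : T i x - T j x ≤ S i x - S j x := LocalPDirichletSpace.min_one_sub_min_one h1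
          rw [Pi.sub_apply, Real.norm_eq_abs, Real.norm_eq_abs,
            abs_of_nonneg (sub_nonneg.2 h2),
            abs_of_nonneg (Finset.sum_nonneg fun r _ => hh0 (n+r) x), ← hsub j i hij x]
          exact h3
        refine (eLpNorm_mono hb).trans ?_
        refine (eLpNorm_sum_le (fun r _ => (hhcont (n+r)).aestronglyMeasurable)
          D.one_le_P).trans ?_
        calc ∑ r ∈ Finset.Ico j i, eLpNorm (h (n + r)) (ENNReal.ofReal p) μ
            ≤ ∑ r ∈ Finset.Ico j i, ENNReal.ofReal ((8:ℝ)⁻¹ ^ (n + 1 + r)) := by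
              refine Finset.sum_le_sum fun r _ => ?_
              refine (D.eLpNorm_le_M _).trans ((hMh (n+r)).trans (ENNReal.ofReal_le_ofReal ?_))
              rw [show n + 1 + r = n + r + 1 from by omega]
          _ = ENNReal.ofReal (∑ r ∈ Finset.Ico j i, ((8:ℝ)⁻¹) ^ (n + 1 + r)) :=
              (ENNReal.ofReal_sum_of_nonneg fun r _ => by positivity).symm
          _ ≤ ENNReal.ofReal ((8:ℝ)⁻¹ ^ (n + j)) :=
              ENNReal.ofReal_le_ofReal (tail_geom_le n j i)
      -- Fatou to the limit
      have hNlim : ∀ j, eLpNorm (Tlim - T j) (ENNReal.ofReal p) μ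
          ≤ ENNReal.ofReal ((8:ℝ)⁻¹ ^ (n + j)) := by
        intro j
        have hmeas : ∀ i, Measurable fun x => (‖T i x - T j x‖₊ : ℝ≥0∞) ^ p := by
          intro i
          exact (((hTcont i).sub (hTcont j)).measurable.nnnorm.coe_nnreal_ennreal).pow_const p
        have hptw : ∀ x, Tendsto (fun i => (‖T i x - T j x‖₊ : ℝ≥0∞) ^ p) atTop
            (𝓝 ((‖Tlim x - T j x‖₊ : ℝ≥0∞) ^ p)) := by
          intro x
          have h1 : Tendsto (fun i => T i x - T j x) atTop (𝓝 (Tlim x - T j x)) :=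
            (hTtend x).sub_const _
          have h2 : Tendsto (fun i => (‖T i x - T j x‖₊ : ℝ≥0∞)) atTop
              (𝓝 ((‖Tlim x - T j x‖₊ : ℝ≥0∞))) := ENNReal.tendsto_coe.2 h1.nnnorm
          exact (ENNReal.continuous_rpow_const.tendsto _).comp h2
        have hkey : ∫⁻ x, (‖(Tlim - T j) x‖₊ : ℝ≥0∞) ^ p ∂μ
            ≤ (ENNReal.ofReal ((8:ℝ)⁻¹ ^ (n + j))) ^ p := by
          have hre : ∀ x, (‖(Tlim - T j) x‖₊ : ℝ≥0∞) ^ p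
              = liminf (fun i => (‖T i x - T j x‖₊ : ℝ≥0∞) ^ p) atTop :=
            fun x => ((hptw x).liminf_eq).symm
          calc ∫⁻ x, (‖(Tlim - T j) x‖₊ : ℝ≥0∞) ^ p ∂μ
              = ∫⁻ x, liminf (fun i => (‖T i x - T j x‖₊ : ℝ≥0∞) ^ p) atTop ∂μ :=
                lintegral_congr hre
            _ ≤ liminf (fun i => ∫⁻ x, (‖T i x - T j x‖₊ : ℝ≥0∞) ^ p ∂μ) atTop :=
                lintegral_liminf_le hmeas
            _ ≤ (ENNReal.ofReal ((8:ℝ)⁻¹ ^ (n + j))) ^ p := by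
                have hev : ∀ᶠ i in atTop, (∫⁻ x, (‖T i x - T j x‖₊ : ℝ≥0∞) ^ p ∂μ)
                    ≤ (ENNReal.ofReal ((8:ℝ)⁻¹ ^ (n + j))) ^ p := by
                  refine eventually_atTop.2 ⟨j, fun i hij => ?_⟩
                  have heq : (fun x => T i x - T j x) = T i - T j := rfl
                  calc ∫⁻ x, (‖T i x - T j x‖₊ : ℝ≥0∞) ^ p ∂μ
                      = (eLpNorm (T i - T j) (ENNReal.ofReal p) μ) ^ p := by
                        rw [← lintegral_rpow_eq_eLpNorm_rpow D.hp (T i - T j)]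
                        exact lintegral_congr fun x => by rw [Pi.sub_apply]
                    _ ≤ (ENNReal.ofReal ((8:ℝ)⁻¹ ^ (n + j))) ^ p :=
                        ENNReal.rpow_le_rpow (hNT j i hij) hp0.le
                calc liminf (fun i => ∫⁻ x, (‖T i x - T j x‖₊ : ℝ≥0∞) ^ p ∂μ) atTop
                    ≤ liminf (fun _ => (ENNReal.ofReal ((8:ℝ)⁻¹ ^ (n + j))) ^ p) atTop :=
                      liminf_le_liminf hev
                  _ = (ENNReal.ofReal ((8:ℝ)⁻¹ ^ (n + j))) ^ p := liminf_const _
        calc eLpNorm (Tlim - T j) (ENNReal.ofReal p) μ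
            = ((eLpNorm (Tlim - T j) (ENNReal.ofReal p) μ) ^ p) ^ (1/p) :=
              (rpow_rpow_cancel D.hp _).symm
          _ = (∫⁻ x, (‖(Tlim - T j) x‖₊ : ℝ≥0∞) ^ p ∂μ) ^ (1/p) := by
              rw [lintegral_rpow_eq_eLpNorm_rpow D.hp]
          _ ≤ ((ENNReal.ofReal ((8:ℝ)⁻¹ ^ (n + j))) ^ p) ^ (1/p) :=
              ENNReal.rpow_le_rpow hkey D.hp0'
          _ = ENNReal.ofReal ((8:ℝ)⁻¹ ^ (n + j)) := rpow_rpow_cancel D.hp _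
      have hT0 : T 0 = (0 : X → ℝ) := by
        funext x; simp [hTdef, hS0]
      have hmem : MemLp Tlim (ENNReal.ofReal p) μ := by
        refine ⟨hsm.aestronglyMeasurable, ?_⟩
        have := hNlim 0
        rw [hT0, sub_zero, Nat.add_zero] at this
        exact lt_of_le_of_lt this ENNReal.ofReal_lt_top
      -- lower semicontinuity
      have htendN : Tendsto (fun j => eLpNorm (T j - Tlim) (ENNReal.ofReal p) μ)
          atTop (𝓝 0) := by
        have hb : Tendsto (fun j : ℕ => ENNReal.ofReal ((8:ℝ)⁻¹ ^ (n + j))) atTop (𝓝 0) := by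
          have hr : Tendsto (fun j : ℕ => (8:ℝ)⁻¹ ^ (n + j)) atTop (𝓝 0) := by
            have h1 : Tendsto (fun j : ℕ => (8:ℝ)⁻¹ ^ j) atTop (𝓝 0) :=
              tendsto_pow_atTop_nhds_zero_of_lt_one (by norm_num) (by norm_num)
            have h2 := h1.const_mul ((8:ℝ)⁻¹ ^ n)
            rw [mul_zero] at h2
            refine h2.congr fun j => ?_
            rw [← pow_add]
          have := ENNReal.tendsto_ofReal hr
          rwa [ENNReal.ofReal_zero] at this
        refine tendsto_of_tendsto_of_tendsto_of_le_of_le tendsto_const_nhds hb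
          (fun j => zero_le) (fun j => ?_)
        rw [show T j - Tlim = -(Tlim - T j) from (neg_sub _ _).symm, eLpNorm_neg]
        exact hNlim j
      have hEpT : ∀ j, D.Ep (T j) ≤ ((ENNReal.ofReal ((8:ℝ)⁻¹ ^ n)) ^ p).toReal := by
        intro j
        have h1 : ENNReal.ofReal (D.Ep (T j)) ≤ (ENNReal.ofReal ((8:ℝ)⁻¹ ^ n)) ^ p := by
          rw [← D.mass _ (hTF j)]
          exact (D.Γ_le_M_rpow).trans (ENNReal.rpow_le_rpow (hMT j) hp0.le)
        have h2 := ENNReal.toReal_mono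
          (ENNReal.rpow_ne_top_of_nonneg hp0.le ENNReal.ofReal_ne_top) h1
        rwa [ENNReal.toReal_ofReal (D.Ep_nonneg _ (hTF j))] at h2
      obtain ⟨hTlimF, hΓTlim⟩ := D.lsc Tlim T hmem hTF htendN
        ⟨((ENNReal.ofReal ((8:ℝ)⁻¹ ^ n)) ^ p).toReal, hEpT⟩
      have hΓbound : D.Γ Tlim Set.univ ≤ (ENNReal.ofReal ((8:ℝ)⁻¹ ^ n)) ^ p := by
        refine (hΓTlim Set.univ MeasurableSet.univ).trans ?_
        have hev : ∀ᶠ j in atTop, D.Γ (T j) Set.univ ≤ (ENNReal.ofReal ((8:ℝ)⁻¹ ^ n)) ^ p :=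
          Filter.Eventually.of_forall fun j =>
            (D.Γ_le_M_rpow).trans (ENNReal.rpow_le_rpow (hMT j) hp0.le)
        calc liminf (fun j => D.Γ (T j) Set.univ) atTop
            ≤ liminf (fun _ => (ENNReal.ofReal ((8:ℝ)⁻¹ ^ n)) ^ p) atTop :=
              liminf_le_liminf hev
          _ = (ENNReal.ofReal ((8:ℝ)⁻¹ ^ n)) ^ p := liminf_const _
      -- Tlim = 1 on G n
      have hTlim1 : ∀ x ∈ G n, Tlim x = 1 := by
        intro x hx
        simp only [hGdef, Set.mem_iUnion] at hx
        obtain ⟨k, hkn, hxk⟩ := hx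
        have hhk : h k x = 1 := hAone k x hxk
        have hj : T (k - n + 1) x = 1 := by
          have h1 : (1:ℝ) ≤ S (k - n + 1) x := by
            have h2 : h (n + (k - n)) x ≤ S (k - n + 1) x :=
              Finset.single_le_sum (f := fun i => h (n + i) x)
                (fun i _ => hh0 (n+i) x) (Finset.self_mem_range_succ (k-n))
            rw [show n + (k - n) = k from by omega, hhk] at h2
            exact h2
          exact min_eq_right h1
        refine le_antisymm (ciSup_le fun j => hT1 j x) ?_
        calc (1:ℝ) = T (k - n + 1) x := hj.symm
          _ ≤ Tlim x := le_ciSup (hbdd x) (k - n + 1)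
      have haeT1 : ∀ᵐ x ∂(μ.restrict (G n)), Tlim x = 1 :=
        ae_restrict_of_forall_mem (hGopen n).measurableSet hTlim1
      -- conclude
      calc D.cap (G n)
          ≤ ENNReal.ofReal ((∫ x, |Tlim x| ^ p ∂μ) + D.Ep Tlim) :=
            D.cap_le' hTlimF (hGopen n) subset_rfl haeT1
        _ = (eLpNorm Tlim (ENNReal.ofReal p) μ) ^ p + D.Γ Tlim Set.univ := D.valueEq hTlimF
        _ ≤ (ENNReal.ofReal ((8:ℝ)⁻¹ ^ n)) ^ p + (ENNReal.ofReal ((8:ℝ)⁻¹ ^ n)) ^ p := by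
            refine add_le_add ?_ hΓbound
            refine ENNReal.rpow_le_rpow ?_ hp0.le
            have := hNlim 0
            rwa [hT0, sub_zero, Nat.add_zero] at this
        _ = 2 * (ENNReal.ofReal ((8:ℝ)⁻¹ ^ n)) ^ p := (two_mul _).symm
    -- Step 6: cap bound tends to zero
    have hBnd : Tendsto (fun n : ℕ => 2 * (ENNReal.ofReal ((8:ℝ)⁻¹ ^ n)) ^ p) atTop (𝓝 0) := by
      have h1 : Tendsto (fun n : ℕ => ENNReal.ofReal ((8:ℝ)⁻¹ ^ n)) atTop (𝓝 0) := by
        have := ENNReal.tendsto_ofReal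
          (tendsto_pow_atTop_nhds_zero_of_lt_one (by norm_num : (0:ℝ) ≤ 8⁻¹) (by norm_num))
        rwa [ENNReal.ofReal_zero] at this
      have h2 : Tendsto (fun n : ℕ => (ENNReal.ofReal ((8:ℝ)⁻¹ ^ n)) ^ p) atTop (𝓝 0) := by
        have hc := (ENNReal.continuous_rpow_const (y := p)).tendsto (0 : ℝ≥0∞)
        have h3 := hc.comp h1
        rwa [ENNReal.zero_rpow_of_pos hp0] at h3
      have h4 := ENNReal.Tendsto.const_mul h2 (Or.inr (ENNReal.ofNat_ne_top (n := 2)))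
      rwa [mul_zero] at h4
    -- Step 7: uniform Cauchy off G n and pointwise limit
    have hUC : ∀ n, UniformCauchySeqOn g atTop ((G n)ᶜ) := by
      intro n
      rw [Metric.uniformCauchySeqOn_iff]
      intro ε hε
      have htz : Tendsto (fun N : ℕ => (2⁻¹:ℝ) ^ N * 2) atTop (𝓝 0) := by
        have := (tendsto_pow_atTop_nhds_zero_of_lt_one
          (by norm_num : (0:ℝ) ≤ 2⁻¹) (by norm_num)).mul_const (2:ℝ)
        rwa [zero_mul] at this
      obtain ⟨N₀, hN₀⟩ := eventually_atTop.1 (htz.eventually_lt_const hε)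
      refine ⟨max n N₀, fun m hm m' hm' x hx => ?_⟩
      have est : ∀ i j : ℕ, n ≤ i → i ≤ j → dist (g i x) (g j x) ≤ (2⁻¹:ℝ) ^ i * 2 := by
        intro i j hni hij
        calc dist (g i x) (g j x)
            ≤ ∑ r ∈ Finset.Ico i j, dist (g r x) (g (r+1) x) :=
              dist_le_Ico_sum_dist (fun r => g r x) hij
          _ ≤ ∑ r ∈ Finset.Ico i j, (2⁻¹:ℝ) ^ r := by
              refine Finset.sum_le_sum fun r hr => ?_
              have hnr : n ≤ r := le_trans hni (Finset.mem_Ico.1 hr).1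
              have hxr : x ∉ A r := by
                intro hxA
                exact hx (Set.mem_iUnion.2 ⟨r, Set.mem_iUnion.2 ⟨hnr, hxA⟩⟩)
              have := hoff r x hxr
              rw [Real.dist_eq]
              calc |g r x - g (r+1) x| = |w r x| := by
                    rw [show w r x = g (r+1) x - g r x from rfl, abs_sub_comm]
                _ ≤ (2⁻¹:ℝ) ^ r := this
          _ ≤ (2⁻¹:ℝ) ^ i * 2 := geom_Ico_le (by norm_num) le_rfl i j
      have hNn : n ≤ max n N₀ := le_max_left _ _
      have hest2 : ∀ i j : ℕ, max n N₀ ≤ i → i ≤ j → dist (g i x) (g j x) < ε := by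
        intro i j hi hij
        have h5 : dist (g i x) (g j x) ≤ (2⁻¹:ℝ) ^ i * 2 := est i j (le_trans hNn hi) hij
        have h6 : (2⁻¹:ℝ) ^ i * 2 ≤ (2⁻¹:ℝ) ^ (max n N₀) * 2 := by
          have := pow_le_pow_of_le_one (by norm_num : (0:ℝ) ≤ 2⁻¹) (by norm_num) hi
          linarith
        have h7 : (2⁻¹:ℝ) ^ (max n N₀) * 2 < ε := hN₀ _ (le_max_right _ _)
        linarith
      rcases le_total m m' with hmm | hmm
      · exact hest2 m m' hm hmm
      · rw [dist_comm]; exact hest2 m' m hm' hmm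
    set glim : X → ℝ := fun x => limUnder atTop (fun k => g k x) with hglimdef
    have hconv : ∀ n, ∀ x ∉ G n, Tendsto (fun k => g k x) atTop (𝓝 (glim x)) := by
      intro n x hx
      have hcs : CauchySeq fun k => g k x := by
        rw [Metric.cauchySeq_iff]
        intro ε hε
        obtain ⟨N, hN⟩ := (Metric.uniformCauchySeqOn_iff.1 (hUC n)) ε hε
        exact ⟨N, fun m hm m' hm' => hN m hm m' hm' x hx⟩
      obtain ⟨L, hL⟩ := cauchySeq_tendsto_of_complete hcs
      rwa [show glim x = L from hL.limUnder_eq]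
    have hTU : ∀ n, ContinuousOn glim ((G n)ᶜ) := by
      intro n
      refine ((hUC n).tendstoUniformlyOn_of_tendsto fun x hx => hconv n x hx).continuousOn ?_
      exact (Filter.Eventually.of_forall fun k => (hgcont k).continuousOn).frequently
    -- Step 8: glim is quasicontinuous
    refine ⟨glim, ?_, ?_⟩
    · intro ε hε
      obtain ⟨n, hn⟩ := (hBnd.eventually_lt_const hε).exists
      exact ⟨G n, hGopen n, lt_of_le_of_lt (capG n) hn, hTU n⟩
    -- Step 9: f = glim a.e.
    · have hNf : Tendsto (fun k => eLpNorm (g k - f) (ENNReal.ofReal p) μ) atTop (𝓝 0) := by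
        have hb : Tendsto (fun k : ℕ => 2 * ENNReal.ofReal ((64⁻¹:ℝ) ^ (k+1))) atTop (𝓝 0) := by
          have hr : Tendsto (fun k : ℕ => (64⁻¹:ℝ) ^ (k+1)) atTop (𝓝 0) := by
            have h1 : Tendsto (fun k : ℕ => (64⁻¹:ℝ) ^ k) atTop (𝓝 0) :=
              tendsto_pow_atTop_nhds_zero_of_lt_one (by norm_num) (by norm_num)
            have h2 := h1.const_mul ((64:ℝ)⁻¹)
            rw [mul_zero] at h2
            refine h2.congr fun k => ?_
            rw [pow_succ]; ring
          have h3 := ENNReal.tendsto_ofReal hr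
          rw [ENNReal.ofReal_zero] at h3
          have h4 := ENNReal.Tendsto.const_mul h3 (Or.inr (ENNReal.ofNat_ne_top (n := 2)))
          rwa [mul_zero] at h4
        refine tendsto_of_tendsto_of_tendsto_of_le_of_le tendsto_const_nhds hb
          (fun k => zero_le) (fun k => ?_)
        rw [show g k - f = -(f - g k) from (neg_sub _ _).symm, eLpNorm_neg]
        exact (D.eLpNorm_le_M _).trans (hMfg k)
      have hTIM : TendstoInMeasure μ g atTop f :=
        tendstoInMeasure_of_tendsto_eLpNorm hPne0
          (fun k => (hgcont k).aestronglyMeasurable)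
          (D.memLp f hf).aestronglyMeasurable hNf
      obtain ⟨ns, hns, haeconv⟩ := hTIM.exists_seq_tendsto_ae
      have hnullG : μ (⋂ n, G n) = 0 := by
        refine le_antisymm ?_ (zero_le)
        refine ge_of_tendsto' hBnd fun n => ?_
        exact (D.measure_le_cap _).trans ((D.cap_mono (Set.iInter_subset _ n)).trans (capG n))
      have haenotG : ∀ᵐ x ∂μ, x ∉ ⋂ n, G n := measure_eq_zero_iff_ae_notMem.1 hnullG
      filter_upwards [haeconv, haenotG] with x hx1 hx2
      obtain ⟨n, hn⟩ : ∃ n, x ∉ G n := by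
        by_contra hcon
        push_neg at hcon
        exact hx2 (Set.mem_iInter.2 hcon)
      have h2 := hconv n x hn
      have h3 : Tendsto (fun i => g (ns i) x) atTop (𝓝 (glim x)) :=
        h2.comp hns.tendsto_atTop
      exact tendsto_nhds_unique hx1 h3

  · intro f hf g hg hqf hqg haefg
    have hE0 : μ {x | f x ≠ g x} = 0 := ae_iff.1 haefg
    have hp0 : 0 < p := D.hp0
    have hK_ne_top : (2:ℝ≥0∞) * 4 ^ p ≠ ∞ :=
      ENNReal.mul_ne_top (by norm_num) (ENNReal.rpow_ne_top_of_nonneg hp0.le (by norm_num))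
    have key : ∀ ε : ℝ≥0∞, 0 < ε → D.cap {x | f x ≠ g x} ≤ 2 * 4 ^ p * ε := by
      intro ε hε
      obtain ⟨O₁, hO₁open, hO₁cap, hfc⟩ := hqf ε hε
      obtain ⟨O₂, hO₂open, hO₂cap, hgc⟩ := hqg ε hε
      have hsub : ContinuousOn (fun x => f x - g x) (O₁ ∪ O₂)ᶜ := by
        refine ContinuousOn.sub (hfc.mono ?_) (hgc.mono ?_)
        · exact compl_subset_compl.2 subset_union_left
        · exact compl_subset_compl.2 subset_union_right
      obtain ⟨W, hWopen, hW⟩ := (_root_.continuousOn_iff'.1 hsub) {y : ℝ | y ≠ 0} isOpen_ne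
      obtain ⟨h₁, h1F, ⟨U₁, hU₁open, hOU₁, hae₁⟩, hval₁⟩ := D.exists_competitor hO₁cap
      obtain ⟨h₂, h2F, ⟨U₂, hU₂open, hOU₂, hae₂⟩, hval₂⟩ := D.exists_competitor hO₂cap
      obtain ⟨hhF, hhM⟩ := D.trunc_competitor h1F h2F
      set h : X → ℝ := fun x => min (|h₁ x| + |h₂ x|) 1 with hdef
      have hUopen : IsOpen (U₁ ∪ U₂ ∪ W) := (hU₁open.union hU₂open).union hWopen
      have hpre : (fun x => f x - g x) ⁻¹' {y : ℝ | y ≠ 0} = {x | f x ≠ g x} := by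
        ext x; simp [sub_ne_zero]
      -- covering
      have hcover : {x | f x ≠ g x} ⊆ U₁ ∪ U₂ ∪ W := by
        intro x hx
        by_cases hxO : x ∈ O₁ ∪ O₂
        · rcases hxO with h' | h'
          · exact Or.inl (Or.inl (hOU₁ h'))
          · exact Or.inl (Or.inr (hOU₂ h'))
        · have : x ∈ W ∩ (O₁ ∪ O₂)ᶜ := by
            rw [← hW, hpre]; exact ⟨hx, hxO⟩
          exact Or.inr this.1
      -- h = 1 a.e. on U₁ ∪ U₂ ∪ W
      have haeh : ∀ᵐ x ∂(μ.restrict (U₁ ∪ U₂ ∪ W)), h x = 1 := by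
        rw [ae_iff] at hae₁ hae₂ ⊢
        rw [Measure.restrict_apply' hUopen.measurableSet]
        rw [Measure.restrict_apply' hU₁open.measurableSet] at hae₁
        rw [Measure.restrict_apply' hU₂open.measurableSet] at hae₂
        have hsubset : {x | ¬ h x = 1} ∩ (U₁ ∪ U₂ ∪ W)
            ⊆ ({x | ¬ h₁ x = 1} ∩ U₁) ∪ ({x | ¬ h₂ x = 1} ∩ U₂) ∪ (W ∩ (O₁ ∪ O₂)ᶜ) := by
          rintro x ⟨hxh, hxU⟩
          have hone : ∀ a b : ℝ, a = 1 → min (|a| + |b|) 1 = 1 := by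
            intro a b hab
            rw [hab]
            refine min_eq_right ?_
            have := abs_nonneg b
            rw [abs_one]; linarith
          rcases hxU with (hx1 | hx2) | hxW
          · by_cases hx : h₁ x = 1
            · exact absurd (hone _ (h₂ x) hx) hxh
            · exact Or.inl (Or.inl ⟨hx, hx1⟩)
          · by_cases hx : h₂ x = 1
            · refine absurd ?_ hxh
              have : min (|h₂ x| + |h₁ x|) 1 = 1 := hone _ (h₁ x) hx
              rwa [add_comm] at this
            · exact Or.inl (Or.inr ⟨hx, hx2⟩)
          · by_cases hxU12 : x ∈ U₁ ∪ U₂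
            · rcases hxU12 with hx1 | hx2
              · by_cases hx : h₁ x = 1
                · exact absurd (hone _ (h₂ x) hx) hxh
                · exact Or.inl (Or.inl ⟨hx, hx1⟩)
              · by_cases hx : h₂ x = 1
                · refine absurd ?_ hxh
                  have : min (|h₂ x| + |h₁ x|) 1 = 1 := hone _ (h₁ x) hx
                  rwa [add_comm] at this
                · exact Or.inl (Or.inr ⟨hx, hx2⟩)
            · refine Or.inr ⟨hxW, fun hxO => hxU12 ?_⟩
              rcases hxO with h' | h'
              · exact Or.inl (hOU₁ h')
              · exact Or.inr (hOU₂ h')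
        have hWnull : μ (W ∩ (O₁ ∪ O₂)ᶜ) = 0 := by
          rw [← hW, hpre]
          exact measure_mono_null inter_subset_left hE0
        refine le_antisymm ?_ (zero_le)
        calc μ ({x | ¬ h x = 1} ∩ (U₁ ∪ U₂ ∪ W)) ≤
            μ (({x | ¬ h₁ x = 1} ∩ U₁) ∪ ({x | ¬ h₂ x = 1} ∩ U₂) ∪ (W ∩ (O₁ ∪ O₂)ᶜ)) :=
              measure_mono hsubset
          _ ≤ μ (({x | ¬ h₁ x = 1} ∩ U₁) ∪ ({x | ¬ h₂ x = 1} ∩ U₂)) + μ (W ∩ (O₁ ∪ O₂)ᶜ) :=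
              measure_union_le _ _
          _ ≤ (μ ({x | ¬ h₁ x = 1} ∩ U₁) + μ ({x | ¬ h₂ x = 1} ∩ U₂)) + μ (W ∩ (O₁ ∪ O₂)ᶜ) :=
              add_le_add_left (measure_union_le _ _) _
          _ = 0 := by rw [hae₁, hae₂, hWnull]; simp
      -- capacity bound
      have hML : D.M h ≤ 4 * ε ^ (1/p) := by
        refine hhM.trans ?_
        have hb1 : D.M h₁ ≤ 2 * ε ^ (1/p) := by
          refine (D.M_le_two h1F).trans ?_
          exact mul_le_mul_right (ENNReal.rpow_le_rpow hval₁.le (D.hp0')) 2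
        have hb2 : D.M h₂ ≤ 2 * ε ^ (1/p) := by
          refine (D.M_le_two h2F).trans ?_
          exact mul_le_mul_right (ENNReal.rpow_le_rpow hval₂.le (D.hp0')) 2
        calc D.M h₁ + D.M h₂ ≤ 2 * ε ^ (1/p) + 2 * ε ^ (1/p) := add_le_add hb1 hb2
          _ = 4 * ε ^ (1/p) := by ring
      calc D.cap {x | f x ≠ g x}
          ≤ ENNReal.ofReal ((∫ x, |h x| ^ p ∂μ) + D.Ep h) := D.cap_le' hhF hUopen hcover haeh
        _ ≤ 2 * (D.M h) ^ p := D.value_le_two hhF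
        _ ≤ 2 * (4 * ε ^ (1/p)) ^ p := by
            exact mul_le_mul_right (ENNReal.rpow_le_rpow hML hp0.le) 2
        _ = 2 * 4 ^ p * ε := by
            rw [ENNReal.mul_rpow_of_nonneg _ _ hp0.le, rpow_rpow_cancel' D.hp, mul_assoc]
    refine le_antisymm ?_ (zero_le)
    have hper : ∀ n : ℕ, D.cap {x | f x ≠ g x} ≤ 2 * 4 ^ p * (2⁻¹ : ℝ≥0∞) ^ n := by
      intro n
      refine key _ (ENNReal.pow_pos (ENNReal.inv_pos.2 (by norm_num)) n)
    have hlim : Tendsto (fun n : ℕ => 2 * 4 ^ p * (2⁻¹ : ℝ≥0∞) ^ n) atTop (𝓝 0) := by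
      have := ENNReal.Tendsto.const_mul
        (ENNReal.tendsto_pow_atTop_nhds_zero_of_lt_one
          (ENNReal.inv_lt_one.2 one_lt_two)) (Or.inr hK_ne_top)
      simpa using this
    exact ge_of_tendsto' hlim hper


end
end

section
/- Let C = C(v,θ) be a cone in ℝⁿ with v a unit vector and θ ∈ (0,π/2), and let K ⊆ ℝⁿ be a compact C-cone null set. Then for every Lipschitz curve γ : I → ℝⁿ on a compact interval I, one has γ'(t) ∉ C° ∪ (−C)° for Lebesgue-a.e. t ∈ γ^{-1}(K). -/
open MeasureTheory ENNReal NNReal Filter Topology Metric Set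
open scoped RealInnerProductSpace

noncomputable section

/-- The cone `C(v,θ) = {w : ⟪v,w⟫ ≥ cos(θ)‖w‖}` about the direction `v` with angle `θ`. -/
def cone {n : ℕ} (v : EuclideanSpace ℝ (Fin n)) (θ : ℝ) : Set (EuclideanSpace ℝ (Fin n)) :=
  {w | Real.cos θ * ‖w‖ ≤ ⟪v, w⟫}

/-- A compact set `K ⊆ ℝⁿ` is `C`-cone null if every Lipschitz curve whose derivative lies in
`C` almost everywhere meets `K` in a set of `1`-dimensional Hausdorff measure zero. -/
def IsConeNull {n : ℕ} (C K : Set (EuclideanSpace ℝ (Fin n))) : Prop :=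
  ∀ (a b : ℝ) (γ : ℝ → EuclideanSpace ℝ (Fin n)) (L : ℝ≥0), LipschitzWith L γ →
    (∀ᵐ t ∂(volume.restrict (Set.Icc a b)), ∀ w, HasDerivAt γ w t → w ∈ C) →
    MeasureTheory.Measure.hausdorffMeasure 1 (γ '' Set.Icc a b ∩ K) = 0

/-- `g` is an upper gradient of `f`: for every rectifiable curve, parametrized by arclength
as a `1`-Lipschitz curve `γ` on `[0, L]`, one has `|f(γ(L)) − f(γ(0))| ≤ ∫_γ g ds`. -/
def IsUpperGradient {E : Type*} [MetricSpace E] (g : E → ℝ) (f : E → ℝ) : Prop :=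
  ∀ (L : ℝ), 0 ≤ L → ∀ γ : ℝ → E, LipschitzWith 1 γ →
    ENNReal.ofReal |f (γ L) - f (γ 0)| ≤ ∫⁻ t in Set.Icc 0 L, ENNReal.ofReal (g (γ t))

namespace ConeNullAux

lemma isClosed_cone {n : ℕ} (v : EuclideanSpace ℝ (Fin n)) (θ : ℝ) : IsClosed (cone v θ) :=
  isClosed_le (continuous_const.mul continuous_norm) (continuous_const.inner continuous_id)

lemma zero_mem_cone {n : ℕ} (v : EuclideanSpace ℝ (Fin n)) (θ : ℝ) :
    (0 : EuclideanSpace ℝ (Fin n)) ∈ cone v θ := by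
  simp [cone]

lemma smul_mem_cone {n : ℕ} {v : EuclideanSpace ℝ (Fin n)} {θ : ℝ} {w : EuclideanSpace ℝ (Fin n)}
    (hw : w ∈ cone v θ) {c : ℝ} (hc : 0 ≤ c) : c • w ∈ cone v θ := by
  simp only [cone, mem_setOf_eq, norm_smul, Real.norm_eq_abs, abs_of_nonneg hc,
    real_inner_smul_right] at hw ⊢
  calc Real.cos θ * (c * ‖w‖) = c * (Real.cos θ * ‖w‖) := by ring
    _ ≤ c * ⟪v, w⟫ := mul_le_mul_of_nonneg_left hw hc


variable {n : ℕ}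

def lpt (E : Set ℝ) (t : ℝ) : ℝ := sSup (E ∩ Iic t)
def rpt (E : Set ℝ) (t : ℝ) : ℝ := sInf (E ∩ Ici t)

def glA (g : ℝ → EuclideanSpace ℝ (Fin n)) (E : Set ℝ) (t : ℝ) : EuclideanSpace ℝ (Fin n) :=
  g (lpt E t) + ((t - lpt E t) / (rpt E t - lpt E t)) • (g (rpt E t) - g (lpt E t))

def glue (g : ℝ → EuclideanSpace ℝ (Fin n)) (E : Set ℝ) (t : ℝ) : EuclideanSpace ℝ (Fin n) :=
  glA g E (max (sInf E) (min (sSup E) t))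

lemma mem_cone_neg_iff {n : ℕ} {v : EuclideanSpace ℝ (Fin n)} {θ : ℝ}
    {w : EuclideanSpace ℝ (Fin n)} : w ∈ cone (-v) θ ↔ -w ∈ cone v θ := by
  simp [cone, inner_neg_left, inner_neg_right]

lemma countable_isolated (E : Set ℝ) : {t | t ∈ E ∧ 𝓝[E \ {t}] t = ⊥}.Countable := by
  set S := {t | t ∈ E ∧ 𝓝[E \ {t}] t = ⊥} with hS
  have key : ∀ t ∈ S, ∃ pq : ℚ × ℚ, t ∈ Ioo (pq.1 : ℝ) (pq.2 : ℝ) ∧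
      E ∩ Ioo (pq.1 : ℝ) (pq.2 : ℝ) ⊆ {t} := by
    intro t ht
    have h1 : (E \ {t})ᶜ ∈ 𝓝 t := by
      have h2 := ht.2
      rwa [nhdsWithin, inf_principal_eq_bot] at h2
    rcases Metric.mem_nhds_iff.1 h1 with ⟨ε, hε, hball⟩
    rcases exists_rat_btwn (show t - ε < t by linarith) with ⟨p, hp1, hp2⟩
    rcases exists_rat_btwn (show t < t + ε by linarith) with ⟨q, hq1, hq2⟩
    refine ⟨(p, q), ⟨hp2, hq1⟩, ?_⟩
    rintro x ⟨hxE, hx1, hx2⟩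
    have hxb : x ∈ ball t ε := by
      rw [Real.ball_eq_Ioo]
      exact ⟨by simp at hx1 ⊢; linarith, by simp at hx2 ⊢; linarith⟩
    have := hball hxb
    simp only [mem_compl_iff, mem_diff, mem_singleton_iff, not_and, not_not] at this
    exact this hxE
  choose! f hf1 hf2 using key
  have hinj : Set.InjOn (fun t => Encodable.encode (f t)) S := by
    intro t1 h1 t2 h2 h
    have hf : f t1 = f t2 := Encodable.encode_injective h
    have ht2 : t2 ∈ ({t1} : Set ℝ) := hf2 t1 h1 ⟨h2.1, by rw [hf]; exact hf1 t2 h2⟩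
    exact (mem_singleton_iff.1 ht2).symm
  exact Set.countable_iff_exists_injOn.2 ⟨_, hinj⟩


section glue
variable {E : Set ℝ}

lemma lpt_mem (hE : IsCompact E) (hne : E.Nonempty) {t : ℝ} (h : sInf E ≤ t) : lpt E t ∈ E ∧ lpt E t ≤ t := by
  have hcpt : IsCompact (E ∩ Iic t) := hE.inter_right isClosed_Iic
  have hne' : (E ∩ Iic t).Nonempty := ⟨sInf E, hE.sInf_mem hne, h⟩
  have := hcpt.sSup_mem hne'
  exact ⟨this.1, this.2⟩

lemma rpt_mem (hE : IsCompact E) (hne : E.Nonempty) {t : ℝ} (h : t ≤ sSup E) : rpt E t ∈ E ∧ t ≤ rpt E t := by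
  have hcpt : IsCompact (E ∩ Ici t) := hE.inter_right isClosed_Ici
  have hne' : (E ∩ Ici t).Nonempty := ⟨sSup E, hE.sSup_mem hne, h⟩
  have := hcpt.sInf_mem hne'
  exact ⟨this.1, this.2⟩

lemma lpt_eq (hE : IsCompact E) {t : ℝ} (ht : t ∈ E) : lpt E t = t := by
  refine le_antisymm (csSup_le ⟨t, ht, Set.mem_Iic.2 le_rfl⟩ fun x hx => hx.2) ?_
  exact le_csSup (hE.bddAbove.mono inter_subset_left) ⟨ht, Set.mem_Iic.2 le_rfl⟩

lemma rpt_eq (hE : IsCompact E) {t : ℝ} (ht : t ∈ E) : rpt E t = t := by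
  refine le_antisymm (csInf_le (hE.bddBelow.mono inter_subset_left) ⟨ht, Set.mem_Ici.2 le_rfl⟩) ?_
  exact le_csInf ⟨t, ht, Set.mem_Ici.2 le_rfl⟩ fun x hx => hx.2

lemma glA_eq_of_mem (hE : IsCompact E) {g : ℝ → EuclideanSpace ℝ (Fin n)} {t : ℝ} (ht : t ∈ E) :
    glA g E t = g t := by
  simp [glA, lpt_eq hE ht, sub_self, zero_div, zero_smul]

lemma clamp_eq {t : ℝ} (h1 : sInf E ≤ t) (h2 : t ≤ sSup E) :
    max (sInf E) (min (sSup E) t) = t := by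
  rw [min_eq_right h2, max_eq_right h1]

lemma glue_eq_of_mem (hE : IsCompact E) {g : ℝ → EuclideanSpace ℝ (Fin n)} {t : ℝ} (ht : t ∈ E) :
    glue g E t = g t := by
  rw [glue, clamp_eq (csInf_le hE.bddBelow ht) (le_csSup hE.bddAbove ht), glA_eq_of_mem hE ht]

lemma notMem_Ioo_lpt_rpt (hE : IsCompact E) {t s : ℝ} (h1 : sInf E ≤ t) (h2 : t ≤ sSup E)
    (hs : s ∈ Ioo (lpt E t) (rpt E t)) : s ∉ E := by
  intro hsE
  rcases le_or_gt s t with h | h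
  · exact absurd (le_csSup (hE.bddAbove.mono inter_subset_left) (⟨hsE, h⟩ : s ∈ E ∩ Iic t)) 
      (not_le.2 hs.1)
  · exact absurd (csInf_le (hE.bddBelow.mono inter_subset_left) (⟨hsE, h.le⟩ : s ∈ E ∩ Ici t))
      (not_le.2 hs.2)

lemma lpt_const (hE : IsCompact E) (hne : E.Nonempty) {t s : ℝ} (h1 : sInf E ≤ t) (h2 : t ≤ sSup E)
    (hs : s ∈ Ioo (lpt E t) (rpt E t)) : lpt E s = lpt E t := by
  have hl := lpt_mem hE hne h1
  have : E ∩ Iic s = E ∩ Iic (lpt E t) := by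
    ext e
    constructor
    · rintro ⟨heE, he⟩
      refine ⟨heE, ?_⟩
      by_contra hle
      simp only [Set.mem_Iic, not_le] at hle
      exact notMem_Ioo_lpt_rpt hE h1 h2 ⟨hle, lt_of_le_of_lt he hs.2⟩ heE
    · rintro ⟨heE, he⟩
      exact ⟨heE, he.trans hs.1.le⟩
  rw [lpt, this, ← lpt]
  exact lpt_eq hE hl.1

lemma rpt_const (hE : IsCompact E) (hne : E.Nonempty) {t s : ℝ} (h1 : sInf E ≤ t) (h2 : t ≤ sSup E)
    (hs : s ∈ Ioo (lpt E t) (rpt E t)) : rpt E s = rpt E t := by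
  have hr := rpt_mem hE hne h2
  have : E ∩ Ici s = E ∩ Ici (rpt E t) := by
    ext e
    constructor
    · rintro ⟨heE, he⟩
      refine ⟨heE, ?_⟩
      by_contra hle
      simp only [Set.mem_Ici, not_le] at hle
      exact notMem_Ioo_lpt_rpt hE h1 h2 ⟨lt_of_lt_of_le hs.1 he, hle⟩ heE
    · rintro ⟨heE, he⟩
      exact ⟨heE, hs.2.le.trans he⟩
  rw [rpt, this, ← rpt]
  exact rpt_eq hE hr.1

lemma aux_smul_norm {w : EuclideanSpace ℝ (Fin n)} {u d L : ℝ} (hL : 0 ≤ L)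
    (hu : 0 ≤ u) (hd : 0 < d) (hnorm : ‖w‖ ≤ L * d) : ‖(u / d) • w‖ ≤ L * u := by
  rw [norm_smul, Real.norm_eq_abs, abs_of_nonneg (div_nonneg hu hd.le)]
  calc u / d * ‖w‖ ≤ u / d * (L * d) :=
      mul_le_mul_of_nonneg_left hnorm (div_nonneg hu hd.le)
    _ = L * u := by field_simp

lemma norm_sub_in_E {g : ℝ → EuclideanSpace ℝ (Fin n)} {L : ℝ≥0} (hg : LipschitzWith L g)
    {x y : ℝ} (h : y ≤ x) : ‖g x - g y‖ ≤ (L : ℝ) * (x - y) := by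
  have := hg.dist_le_mul x y
  rwa [dist_eq_norm, Real.dist_eq, abs_of_nonneg (sub_nonneg.2 h)] at this

lemma norm_glA_sub_left (hE : IsCompact E) (hne : E.Nonempty)
    {g : ℝ → EuclideanSpace ℝ (Fin n)} {L : ℝ≥0} (hg : LipschitzWith L g)
    {t : ℝ} (h1 : sInf E ≤ t) (h2 : t ≤ sSup E) :
    ‖glA g E t - g (lpt E t)‖ ≤ (L : ℝ) * (t - lpt E t) := by
  have hlm := lpt_mem hE hne h1
  have hrm := rpt_mem hE hne h2
  have hglA : glA g E t - g (lpt E t)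
      = ((t - lpt E t) / (rpt E t - lpt E t)) • (g (rpt E t) - g (lpt E t)) := by
    rw [glA, add_sub_cancel_left]
  rcases eq_or_lt_of_le (hlm.2.trans hrm.2) with heq | hlt
  · have ht : t = lpt E t := le_antisymm (hrm.2.trans_eq heq.symm) hlm.2
    rw [hglA, ← ht]
    simp
  · rw [hglA]
    exact aux_smul_norm L.coe_nonneg (sub_nonneg.2 hlm.2) (sub_pos.2 hlt)
      (norm_sub_in_E hg (hlm.2.trans hrm.2))

lemma norm_glA_sub_right (hE : IsCompact E) (hne : E.Nonempty)
    {g : ℝ → EuclideanSpace ℝ (Fin n)} {L : ℝ≥0} (hg : LipschitzWith L g)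
    {t : ℝ} (h1 : sInf E ≤ t) (h2 : t ≤ sSup E) :
    ‖g (rpt E t) - glA g E t‖ ≤ (L : ℝ) * (rpt E t - t) := by
  have hlm := lpt_mem hE hne h1
  have hrm := rpt_mem hE hne h2
  rcases eq_or_lt_of_le (hlm.2.trans hrm.2) with heq | hlt
  · have ht : t ∈ E := by
      have ht' : t = lpt E t := le_antisymm (hrm.2.trans_eq heq.symm) hlm.2
      rw [ht']; exact hlm.1
    rw [glA_eq_of_mem hE ht, rpt_eq hE ht]
    simp
  · have hne0 : rpt E t - lpt E t ≠ 0 := sub_ne_zero.2 hlt.ne'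
    have hglA : g (rpt E t) - glA g E t
        = ((rpt E t - t) / (rpt E t - lpt E t)) • (g (rpt E t) - g (lpt E t)) := by
      have hid : (rpt E t - t) / (rpt E t - lpt E t)
          = 1 - (t - lpt E t) / (rpt E t - lpt E t) := by
        field_simp
        ring
      rw [hid, sub_smul, one_smul, glA]
      abel
    rw [hglA]
    exact aux_smul_norm L.coe_nonneg (sub_nonneg.2 hrm.2) (sub_pos.2 hlt)
      (norm_sub_in_E hg (hlm.2.trans hrm.2))

lemma glA_lipschitzOn (hE : IsCompact E) (hne : E.Nonempty)
    {g : ℝ → EuclideanSpace ℝ (Fin n)} {L : ℝ≥0} (hg : LipschitzWith L g)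
    {s t : ℝ} (hsI : s ∈ Icc (sInf E) (sSup E)) (htI : t ∈ Icc (sInf E) (sSup E))
    (hst : s ≤ t) : ‖glA g E t - glA g E s‖ ≤ (L : ℝ) * (t - s) := by
  have hls := lpt_mem hE hne hsI.1
  have hrs := rpt_mem hE hne hsI.2
  have hlt := lpt_mem hE hne htI.1
  have hrt := rpt_mem hE hne htI.2
  rcases le_or_gt (rpt E s) (lpt E t) with h | h
  · have e1 : ‖glA g E t - g (lpt E t)‖ ≤ (L : ℝ) * (t - lpt E t) :=
      norm_glA_sub_left hE hne hg htI.1 htI.2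
    have e2 : ‖g (lpt E t) - g (rpt E s)‖ ≤ (L : ℝ) * (lpt E t - rpt E s) :=
      norm_sub_in_E hg h
    have e3 : ‖g (rpt E s) - glA g E s‖ ≤ (L : ℝ) * (rpt E s - s) :=
      norm_glA_sub_right hE hne hg hsI.1 hsI.2
    calc ‖glA g E t - glA g E s‖
        ≤ ‖glA g E t - g (lpt E t)‖ + ‖g (lpt E t) - g (rpt E s)‖
          + ‖g (rpt E s) - glA g E s‖ := by
          have ha := norm_sub_le_norm_sub_add_norm_sub (glA g E t) (g (lpt E t)) (glA g E s)
          have hb := norm_sub_le_norm_sub_add_norm_sub (g (lpt E t)) (g (rpt E s)) (glA g E s)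
          linarith
      _ ≤ (L : ℝ) * (t - lpt E t) + ((L : ℝ) * (lpt E t - rpt E s)
          + (L : ℝ) * (rpt E s - s)) := by linarith
      _ = (L : ℝ) * (t - s) := by ring
  · have hlts : lpt E t ≤ s := by
      by_contra hc
      push_neg at hc
      have : rpt E s ≤ lpt E t :=
        csInf_le (hE.bddBelow.mono inter_subset_left) ⟨hlt.1, Set.mem_Ici.2 hc.le⟩
      exact absurd this (not_le.2 h)
    have hl_eq : lpt E s = lpt E t := by
      refine le_antisymm ?_ (le_csSup (hE.bddAbove.mono inter_subset_left)
        ⟨hlt.1, Set.mem_Iic.2 hlts⟩)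
      exact csSup_le ⟨sInf E, hE.sInf_mem hne, Set.mem_Iic.2 hsI.1⟩
        fun x hx => le_csSup (hE.bddAbove.mono inter_subset_left) ⟨hx.1, (hx.2 : x ≤ s).trans hst⟩
    have htrs : t ≤ rpt E s := by
      by_contra hc
      push_neg at hc
      have : rpt E s ≤ lpt E t :=
        le_csSup (hE.bddAbove.mono inter_subset_left) ⟨hrs.1, Set.mem_Iic.2 hc.le⟩
      exact absurd this (not_le.2 h)
    have hr_eq : rpt E t = rpt E s := by
      refine le_antisymm (csInf_le (hE.bddBelow.mono inter_subset_left)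
        ⟨hrs.1, Set.mem_Ici.2 htrs⟩) ?_
      exact le_csInf ⟨sSup E, hE.sSup_mem hne, Set.mem_Ici.2 htI.2⟩
        fun x hx => csInf_le (hE.bddBelow.mono inter_subset_left) ⟨hx.1, hst.trans (hx.2 : t ≤ x)⟩
    have hlr : lpt E t < rpt E s := h
    have hne0 : rpt E s - lpt E t ≠ 0 := sub_ne_zero.2 hlr.ne'
    have hdiff : glA g E t - glA g E s
        = ((t - s) / (rpt E s - lpt E t)) • (g (rpt E s) - g (lpt E t)) := by
      rw [glA, glA, hl_eq, hr_eq]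
      have hid : (t - s) / (rpt E s - lpt E t)
          = (t - lpt E t) / (rpt E s - lpt E t) - (s - lpt E t) / (rpt E s - lpt E t) := by
        field_simp
        ring
      rw [hid, sub_smul]
      abel
    rw [hdiff]
    exact aux_smul_norm L.coe_nonneg (sub_nonneg.2 hst) (sub_pos.2 hlr)
      (norm_sub_in_E hg (hlts.trans (hst.trans htrs)))

lemma glue_lipschitz (hE : IsCompact E) (hne : E.Nonempty)
    {g : ℝ → EuclideanSpace ℝ (Fin n)} {L : ℝ≥0} (hg : LipschitzWith L g) :
    LipschitzWith L (glue g E) := by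
  have hab : sInf E ≤ sSup E := by
    obtain ⟨x, hx⟩ := hne
    exact (csInf_le hE.bddBelow hx).trans (le_csSup hE.bddAbove hx)
  have hclamp : LipschitzWith 1 (fun t : ℝ => max (sInf E) (min (sSup E) t)) := by
    have h1 : LipschitzWith 1 (fun t : ℝ => min (sSup E) t) := by
      simpa [min_comm] using (LipschitzWith.id (α := ℝ)).min_const (sSup E)
    simpa [max_comm] using h1.max_const (sInf E)
  have hmem : ∀ t : ℝ, max (sInf E) (min (sSup E) t) ∈ Icc (sInf E) (sSup E) := by
    intro t
    constructor
    · exact le_max_left _ _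
    · exact max_le hab (min_le_left _ _)
  apply LipschitzWith.of_dist_le_mul
  intro x y
  rcases le_total (max (sInf E) (min (sSup E) x)) (max (sInf E) (min (sSup E) y)) with h | h
  · rw [glue, glue, dist_eq_norm, norm_sub_rev]
    calc ‖glA g E (max (sInf E) (min (sSup E) y)) - glA g E (max (sInf E) (min (sSup E) x))‖
        ≤ (L : ℝ) * (max (sInf E) (min (sSup E) y) - max (sInf E) (min (sSup E) x)) :=
          glA_lipschitzOn hE hne hg (hmem x) (hmem y) h
      _ ≤ (L : ℝ) * dist x y := by
          apply mul_le_mul_of_nonneg_left _ L.coe_nonneg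
          have := hclamp.dist_le_mul y x
          rw [Real.dist_eq, Real.dist_eq, NNReal.coe_one, one_mul] at this
          calc max (sInf E) (min (sSup E) y) - max (sInf E) (min (sSup E) x)
              ≤ |max (sInf E) (min (sSup E) y) - max (sInf E) (min (sSup E) x)| := le_abs_self _
            _ ≤ |y - x| := this
            _ = dist x y := by rw [dist_comm, Real.dist_eq]
  · rw [glue, glue, dist_eq_norm]
    calc ‖glA g E (max (sInf E) (min (sSup E) x)) - glA g E (max (sInf E) (min (sSup E) y))‖
        ≤ (L : ℝ) * (max (sInf E) (min (sSup E) x) - max (sInf E) (min (sSup E) y)) :=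
          glA_lipschitzOn hE hne hg (hmem y) (hmem x) h
      _ ≤ (L : ℝ) * dist x y := by
          apply mul_le_mul_of_nonneg_left _ L.coe_nonneg
          have := hclamp.dist_le_mul x y
          rw [Real.dist_eq, Real.dist_eq, NNReal.coe_one, one_mul] at this
          calc max (sInf E) (min (sSup E) x) - max (sInf E) (min (sSup E) y)
              ≤ |max (sInf E) (min (sSup E) x) - max (sInf E) (min (sSup E) y)| := le_abs_self _
            _ ≤ |x - y| := this
            _ = dist x y := Real.dist_eq x y |>.symm

lemma glue_hasDeriv_gap (hE : IsCompact E) (hne : E.Nonempty)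
    {g : ℝ → EuclideanSpace ℝ (Fin n)} {t : ℝ}
    (h1 : sInf E ≤ t) (h2 : t ≤ sSup E) (htE : t ∉ E) :
    HasDerivAt (glue g E) ((rpt E t - lpt E t)⁻¹ • (g (rpt E t) - g (lpt E t))) t := by
  have hlm := lpt_mem hE hne h1
  have hrm := rpt_mem hE hne h2
  have hl : lpt E t < t := lt_of_le_of_ne hlm.2 fun h => htE (h ▸ hlm.1)
  have hr : t < rpt E t := lt_of_le_of_ne hrm.2 fun h => htE (by rw [h]; exact hrm.1)
  have haff : HasDerivAt
      (fun s : ℝ => g (lpt E t) + ((s - lpt E t) / (rpt E t - lpt E t)) • (g (rpt E t) - g (lpt E t)))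
      ((rpt E t - lpt E t)⁻¹ • (g (rpt E t) - g (lpt E t))) t := by
    have h1' : HasDerivAt (fun s : ℝ => (s - lpt E t) / (rpt E t - lpt E t))
        ((rpt E t - lpt E t)⁻¹) t := by
      simpa [one_div] using ((hasDerivAt_id t).sub_const (lpt E t)).div_const (rpt E t - lpt E t)
    exact (h1'.smul_const (g (rpt E t) - g (lpt E t))).const_add (g (lpt E t))
  have heq : glue g E =ᶠ[𝓝 t]
      fun s : ℝ => g (lpt E t) + ((s - lpt E t) / (rpt E t - lpt E t)) • (g (rpt E t) - g (lpt E t)) := by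
    have hopen : Ioo (lpt E t) (rpt E t) ∈ 𝓝 t := isOpen_Ioo.mem_nhds ⟨hl, hr⟩
    filter_upwards [hopen] with s hs
    have hs1 : sInf E ≤ s := (csInf_le hE.bddBelow hlm.1).trans hs.1.le
    have hs2 : s ≤ sSup E := hs.2.le.trans (le_csSup hE.bddAbove hrm.1)
    rw [glue, clamp_eq hs1 hs2, glA, lpt_const hE hne h1 h2 hs, rpt_const hE hne h1 h2 hs]
  exact haff.congr_of_eventuallyEq heq

lemma glue_deriv_mem_of_not_isolated (hE : IsCompact E) (hne : E.Nonempty)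
    {g : ℝ → EuclideanSpace ℝ (Fin n)} {v : EuclideanSpace ℝ (Fin n)} {θ : ℝ}
    (hcone : ∀ s ∈ E, ∀ t ∈ E, s ≤ t → g t - g s ∈ cone v θ)
    {t : ℝ} (htiso : ¬(t ∈ E ∧ 𝓝[E \ {t}] t = ⊥))
    {w : EuclideanSpace ℝ (Fin n)} (hw : HasDerivAt (glue g E) w t) : w ∈ cone v θ := by
  have hab : sInf E ≤ sSup E := by
    obtain ⟨x, hx⟩ := hne
    exact (csInf_le hE.bddBelow hx).trans (le_csSup hE.bddAbove hx)
  rcases lt_or_ge t (sInf E) with h | h1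
  · have heq : glue g E =ᶠ[𝓝 t] fun _ => g (sInf E) := by
      filter_upwards [Iio_mem_nhds h] with s hs
      have hmax : max (sInf E) (min (sSup E) s) = sInf E :=
        max_eq_left (le_of_lt (lt_of_le_of_lt (min_le_right _ _) hs))
      rw [glue, hmax, glA_eq_of_mem hE (hE.sInf_mem hne)]
    have h0 : HasDerivAt (glue g E) 0 t :=
      (hasDerivAt_const t (g (sInf E))).congr_of_eventuallyEq heq
    rw [hw.unique h0]
    exact zero_mem_cone v θ
  rcases lt_or_ge (sSup E) t with h | h2
  · have heq : glue g E =ᶠ[𝓝 t] fun _ => g (sSup E) := by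
      filter_upwards [Ioi_mem_nhds h] with s hs
      have hmin : min (sSup E) s = sSup E := min_eq_left (le_of_lt hs)
      rw [glue, hmin, max_eq_right hab, glA_eq_of_mem hE (hE.sSup_mem hne)]
    have h0 : HasDerivAt (glue g E) 0 t :=
      (hasDerivAt_const t (g (sSup E))).congr_of_eventuallyEq heq
    rw [hw.unique h0]
    exact zero_mem_cone v θ
  by_cases htE : t ∈ E
  · have hnebot : (𝓝[E \ {t}] t).NeBot := by
      rcases not_and.mp htiso htE with hne2
      exact neBot_iff.2 hne2
    have hslope := hasDerivAt_iff_tendsto_slope.1 hw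
    have hmono : 𝓝[E \ {t}] t ≤ 𝓝[≠] t :=
      nhdsWithin_mono t fun x hx => hx.2
    have htend : Tendsto (slope (glue g E) t) (𝓝[E \ {t}] t) (𝓝 w) := hslope.mono_left hmono
    refine (isClosed_cone v θ).mem_of_tendsto htend ?_
    filter_upwards [self_mem_nhdsWithin] with s hs
    have hsE : s ∈ E := hs.1
    have hst : s ≠ t := hs.2
    rw [slope_def_module, glue_eq_of_mem hE hsE, glue_eq_of_mem hE htE]
    rcases lt_or_gt_of_ne hst with hlt | hgt
    · have hswap : (s - t)⁻¹ • (g s - g t) = (t - s)⁻¹ • (g t - g s) := by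
        rw [← neg_sub t s, ← neg_sub (g t) (g s), inv_neg, neg_smul_neg]
      rw [hswap]
      exact smul_mem_cone (hcone s hsE t htE hlt.le) (inv_nonneg.2 (sub_nonneg.2 hlt.le))
    · exact smul_mem_cone (hcone t htE s hsE hgt.le) (inv_nonneg.2 (sub_nonneg.2 hgt.le))
  · have hd := glue_hasDeriv_gap hE hne (g := g) h1 h2 htE
    rw [hw.unique hd]
    have hlm := lpt_mem hE hne h1
    have hrm := rpt_mem hE hne h2
    exact smul_mem_cone (hcone _ hlm.1 _ hrm.1 (hlm.2.trans hrm.2))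
      (inv_nonneg.2 (sub_nonneg.2 (hlm.2.trans hrm.2)))

lemma glue_deriv_mem_ae (hE : IsCompact E) (hne : E.Nonempty)
    {g : ℝ → EuclideanSpace ℝ (Fin n)} {v : EuclideanSpace ℝ (Fin n)} {θ : ℝ}
    (hcone : ∀ s ∈ E, ∀ t ∈ E, s ≤ t → g t - g s ∈ cone v θ) :
    ∀ᵐ t : ℝ, ∀ w, HasDerivAt (glue g E) w t → w ∈ cone v θ := by
  have hnull : volume {t | t ∈ E ∧ 𝓝[E \ {t}] t = ⊥} = 0 :=
    (countable_isolated E).measure_zero _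
  rw [ae_iff]
  refine measure_mono_null ?_ hnull
  intro t ht
  simp only [mem_setOf_eq, not_forall] at ht
  obtain ⟨w, hw, hwmem⟩ := ht
  by_contra hcon
  exact hwmem (glue_deriv_mem_of_not_isolated hE hne hcone hcon hw)

end glue
lemma core {n : ℕ} {v : EuclideanSpace ℝ (Fin n)} (hv : ‖v‖ = 1) {θ : ℝ}
    {K : Set (EuclideanSpace ℝ (Fin n))} (hnull : IsConeNull (cone v θ) K)
    {E : Set ℝ} (hE : IsCompact E)
    {g : ℝ → EuclideanSpace ℝ (Fin n)} {L : ℝ≥0} (hg : LipschitzWith L g)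
    {c : ℝ} (hc : 0 < c)
    (hmono : ∀ s ∈ E, ∀ t ∈ E, s ≤ t → g t - g s ∈ cone v θ ∧ c * (t - s) ≤ ⟪v, g t - g s⟫)
    (hgK : ∀ t ∈ E, g t ∈ K) : volume E = 0 := by
  rcases E.eq_empty_or_nonempty with rfl | hne
  · simp
  have hglip := glue_lipschitz hE hne hg
  have hae : ∀ᵐ t ∂(volume.restrict (Icc (sInf E) (sSup E))),
      ∀ w, HasDerivAt (glue g E) w t → w ∈ cone v θ :=
    ae_restrict_of_ae (glue_deriv_mem_ae hE hne fun s hs t ht hst => (hmono s hs t ht hst).1)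
  have hH := hnull (sInf E) (sSup E) (glue g E) L hglip hae
  have hEsub : E ⊆ Icc (sInf E) (sSup E) := fun x hx =>
    ⟨csInf_le hE.bddBelow hx, le_csSup hE.bddAbove hx⟩
  have himg : g '' E ⊆ glue g E '' Icc (sInf E) (sSup E) ∩ K := by
    rintro y ⟨t, htE, rfl⟩
    exact ⟨⟨t, hEsub htE, glue_eq_of_mem hE htE⟩, hgK t htE⟩
  have hzero : μH[1] (g '' E) = 0 := le_antisymm (hH ▸ measure_mono himg) (zero_le)
  set f : ℝ → ℝ := fun t => ⟪v, g t⟫ with hfdef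
  have hproj : LipschitzWith 1 (fun x : EuclideanSpace ℝ (Fin n) => (⟪v, x⟫ : ℝ)) := by
    apply LipschitzWith.of_dist_le_mul
    intro x y
    rw [Real.dist_eq, dist_eq_norm, NNReal.coe_one, one_mul, ← inner_sub_right]
    calc |⟪v, x - y⟫| ≤ ‖v‖ * ‖x - y‖ := abs_real_inner_le_norm v (x - y)
      _ = ‖x - y‖ := by rw [hv, one_mul]
  have hf0 : μH[1] (f '' E) = 0 := by
    have hfE : f '' E = (fun x : EuclideanSpace ℝ (Fin n) => (⟪v, x⟫ : ℝ)) '' (g '' E) := by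
      rw [Set.image_image]
    rw [hfE]
    refine le_antisymm ?_ (zero_le)
    calc μH[1] ((fun x : EuclideanSpace ℝ (Fin n) => (⟪v, x⟫ : ℝ)) '' (g '' E))
        ≤ (1 : ℝ≥0) ^ (1 : ℝ) * μH[1] (g '' E) :=
          hproj.hausdorffMeasure_image_le zero_le_one (g '' E)
      _ = 0 := by rw [hzero, mul_zero]
  have key : ∀ s ∈ E, ∀ t ∈ E, s ≤ t → c * (t - s) ≤ f t - f s := by
    intro s hs t ht hst
    have := (hmono s hs t ht hst).2
    rwa [inner_sub_right] at this
  have hexp : ∀ s ∈ E, ∀ t ∈ E, c * dist t s ≤ dist (f t) (f s) := by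
    intro s hs t ht
    rcases le_total s t with h | h
    · rw [Real.dist_eq, Real.dist_eq, abs_of_nonneg (sub_nonneg.2 h)]
      exact le_trans (key s hs t ht h) (le_abs_self _)
    · rw [Real.dist_eq, Real.dist_eq, abs_of_nonpos (sub_nonpos.2 h), neg_sub, abs_sub_comm]
      exact le_trans (key t ht s hs h) (le_abs_self _)
  have hinj : Set.InjOn f E := by
    intro s hs t ht h
    have h2 := hexp s hs t ht
    rw [h, dist_self] at h2
    have hd : dist t s = 0 := le_antisymm (by nlinarith [dist_nonneg (x := t) (y := s)]) dist_nonneg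
    exact (dist_eq_zero.1 (by rwa [dist_comm] at hd)).symm ▸ rfl
  have hlip_inv : LipschitzOnWith (Real.toNNReal c⁻¹) (Function.invFunOn f E) (f '' E) := by
    apply LipschitzOnWith.of_dist_le_mul
    rintro x ⟨s, hs, rfl⟩ y ⟨t, ht, rfl⟩
    rw [hinj.leftInvOn_invFunOn hs, hinj.leftInvOn_invFunOn ht,
      Real.coe_toNNReal _ (inv_nonneg.2 hc.le)]
    have h2 := hexp t ht s hs
    calc dist s t = c⁻¹ * (c * dist s t) := by field_simp
      _ ≤ c⁻¹ * dist (f s) (f t) := mul_le_mul_of_nonneg_left h2 (inv_nonneg.2 hc.le)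
  have hinvimg : Function.invFunOn f E '' (f '' E) = E := hinj.invFunOn_image Subset.rfl
  have h1 : μH[1] E ≤ (Real.toNNReal c⁻¹ : ℝ≥0∞) ^ (1 : ℝ) * μH[1] (f '' E) := by
    have := hlip_inv.hausdorffMeasure_image_le zero_le_one
    rwa [hinvimg] at this
  have hfin : (μH[1] : Measure ℝ) E = 0 := by
    refine le_antisymm ?_ (zero_le)
    calc μH[1] E ≤ _ := h1
      _ = 0 := by rw [hf0, mul_zero]
  rwa [MeasureTheory.hausdorffMeasure_real] at hfin

def Fset (γ : ℝ → EuclideanSpace ℝ (Fin n)) (θ : ℝ) (u : EuclideanSpace ℝ (Fin n))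
    (k m : ℕ) : Set ℝ :=
  {t | ∀ x : ℝ, |x - t| ≤ 1 / ((m : ℝ) + 1) →
    γ (max x t) - γ (min x t) ∈ cone u θ ∧
    (max x t - min x t) / ((k : ℝ) + 1) ≤ ⟪u, γ (max x t) - γ (min x t)⟫}

lemma isClosed_Fset {γ : ℝ → EuclideanSpace ℝ (Fin n)} (hγ : Continuous γ)
    (θ : ℝ) (u : EuclideanSpace ℝ (Fin n)) (k m : ℕ) : IsClosed (Fset γ θ u k m) := by
  rw [← isSeqClosed_iff_isClosed]
  intro ts t hts hlim
  intro x hx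
  set xs : ℕ → ℝ := fun i => ts i + (x - t) with hxs
  have hxlim : Tendsto xs atTop (𝓝 x) := by
    have := hlim.add_const (x - t)
    simpa using this
  have hmax : Tendsto (fun i => max (xs i) (ts i)) atTop (𝓝 (max x t)) := hxlim.max hlim
  have hmin : Tendsto (fun i => min (xs i) (ts i)) atTop (𝓝 (min x t)) := hxlim.min hlim
  have hvec : Tendsto (fun i => γ (max (xs i) (ts i)) - γ (min (xs i) (ts i))) atTop
      (𝓝 (γ (max x t) - γ (min x t))) :=
    ((hγ.continuousAt.tendsto.comp hmax).sub (hγ.continuousAt.tendsto.comp hmin))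
  have hQ : ∀ i, γ (max (xs i) (ts i)) - γ (min (xs i) (ts i)) ∈ cone u θ ∧
      (max (xs i) (ts i) - min (xs i) (ts i)) / ((k : ℝ) + 1)
        ≤ ⟪u, γ (max (xs i) (ts i)) - γ (min (xs i) (ts i))⟫ := by
    intro i
    refine hts i (xs i) ?_
    have h : xs i - ts i = x - t := by simp [hxs]
    rw [h]
    exact hx
  constructor
  · exact (isClosed_cone u θ).mem_of_tendsto hvec (Filter.Eventually.of_forall fun i => (hQ i).1)
  · refine le_of_tendsto_of_tendsto'
      ((hmax.sub hmin).div_const ((k : ℝ) + 1))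
      (Filter.Tendsto.inner tendsto_const_nhds hvec)
      fun i => (hQ i).2

lemma mem_Fset_of_deriv {γ : ℝ → EuclideanSpace ℝ (Fin n)} {θ : ℝ}
    {u : EuclideanSpace ℝ (Fin n)} (hu : ‖u‖ = 1) (hcos : 0 < Real.cos θ)
    {t : ℝ} {w : EuclideanSpace ℝ (Fin n)} (hw : w ∈ interior (cone u θ))
    (hd : HasDerivAt γ w t) : ∃ k m : ℕ, t ∈ Fset γ θ u k m := by
  obtain ⟨ε, hε, hball⟩ := Metric.mem_nhds_iff.1 (mem_interior_iff_mem_nhds.1 hw)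
  have hw0 : w ≠ 0 := by
    rintro rfl
    have hmem : -((ε / 2) • u) ∈ ball (0 : EuclideanSpace ℝ (Fin n)) ε := by
      rw [mem_ball, dist_zero_right, norm_neg, norm_smul, Real.norm_eq_abs,
        abs_of_nonneg (by positivity), hu, mul_one]
      linarith
    have hc := hball hmem
    have h1 : Real.cos θ * ‖-((ε / 2) • u)‖ ≤ ⟪u, -((ε / 2) • u)⟫ := hc
    rw [inner_neg_right, real_inner_smul_right, real_inner_self_eq_norm_sq, hu] at h1
    have h2 : (0 : ℝ) ≤ Real.cos θ * ‖-((ε / 2) • u)‖ := by positivity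
    nlinarith
  have hwc : w ∈ cone u θ := interior_subset hw
  have hiw : 0 < ⟪u, w⟫ := lt_of_lt_of_le (mul_pos hcos (norm_pos_iff.2 hw0)) hwc
  set ρ := min (ε / 2) (⟪u, w⟫ / 2) with hρ
  have hρpos : 0 < ρ := lt_min (by linarith) (by linarith)
  obtain ⟨k, hk⟩ : ∃ k : ℕ, (1 : ℝ) / ((k : ℝ) + 1) < ⟪u, w⟫ / 2 := by
    obtain ⟨k, hk⟩ := exists_nat_one_div_lt (show (0:ℝ) < ⟪u, w⟫ / 2 by linarith)
    exact ⟨k, by exact_mod_cast hk⟩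
  have hlo : (fun s => γ s - γ t - (s - t) • w) =o[𝓝 t] fun s => s - t :=
    hasDerivAt_iff_isLittleO.1 hd
  have hev : ∀ᶠ s in 𝓝 t, ‖γ s - γ t - (s - t) • w‖ ≤ ρ * |s - t| := by
    have := hlo.def hρpos
    filter_upwards [this] with s hs
    simpa [Real.norm_eq_abs] using hs
  obtain ⟨δ, hδpos, hδ⟩ := Metric.eventually_nhds_iff.1 hev
  obtain ⟨m, hm⟩ : ∃ m : ℕ, (1 : ℝ) / ((m : ℝ) + 1) < δ := by
    obtain ⟨m, hm⟩ := exists_nat_one_div_lt hδpos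
    exact ⟨m, by exact_mod_cast hm⟩
  refine ⟨k, m, ?_⟩
  intro x hx
  rcases eq_or_ne x t with rfl | hxt
  · simp only [max_self, min_self, sub_self, zero_div, inner_zero_right]
    exact ⟨zero_mem_cone u θ, le_refl 0⟩
  · have hd0 : 0 < max x t - min x t := by
      rcases lt_or_gt_of_ne hxt with h | h
      · rw [max_eq_right h.le, min_eq_left h.le]; linarith
      · rw [max_eq_left h.le, min_eq_right h.le]; linarith
    have hkey : ‖γ (max x t) - γ (min x t) - (max x t - min x t) • w‖ ≤ ρ * (max x t - min x t) := by
      have hxd : dist x t < δ := lt_of_le_of_lt (by rwa [Real.dist_eq]) hm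
      rcases lt_or_gt_of_ne hxt with h | h
      · rw [max_eq_right h.le, min_eq_left h.le]
        have := hδ (y := x) hxd
        have hswap : γ t - γ x - (t - x) • w = -(γ x - γ t - (x - t) • w) := by
          rw [← neg_sub x t, neg_smul]
          abel
        rw [hswap, norm_neg]
        calc ‖γ x - γ t - (x - t) • w‖ ≤ ρ * |x - t| := this
          _ = ρ * (t - x) := by rw [abs_of_nonpos (by linarith), neg_sub]
      · rw [max_eq_left h.le, min_eq_right h.le]
        have := hδ (y := x) hxd
        calc ‖γ x - γ t - (x - t) • w‖ ≤ ρ * |x - t| := this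
          _ = ρ * (x - t) := by rw [abs_of_nonneg (by linarith)]
    set d := max x t - min x t with hddef
    set z := γ (max x t) - γ (min x t) with hzdef
    have hq : ‖d⁻¹ • z - w‖ ≤ ρ := by
      have : d⁻¹ • z - w = d⁻¹ • (z - d • w) := by
        conv_rhs => rw [smul_sub, smul_smul, inv_mul_cancel₀ hd0.ne', one_smul]
      rw [this, norm_smul, Real.norm_eq_abs, abs_of_pos (inv_pos.2 hd0)]
      calc d⁻¹ * ‖z - d • w‖ ≤ d⁻¹ * (ρ * d) := by
            exact mul_le_mul_of_nonneg_left hkey (inv_pos.2 hd0).le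
        _ = ρ := by field_simp
    have hqball : d⁻¹ • z ∈ ball w ε := by
      rw [mem_ball, dist_eq_norm]
      calc ‖d⁻¹ • z - w‖ ≤ ρ := hq
        _ < ε := lt_of_le_of_lt (min_le_left _ _) (by linarith)
    have hqcone : d⁻¹ • z ∈ cone u θ := hball hqball
    have hz : z = d • (d⁻¹ • z) := by
      rw [smul_smul, mul_inv_cancel₀ hd0.ne', one_smul]
    constructor
    · rw [hz]
      exact smul_mem_cone hqcone hd0.le
    · have hinner : ⟪u, w⟫ - ρ ≤ ⟪u, d⁻¹ • z⟫ := by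
        have h1 : |⟪u, d⁻¹ • z - w⟫| ≤ ρ := by
          calc |⟪u, d⁻¹ • z - w⟫| ≤ ‖u‖ * ‖d⁻¹ • z - w‖ := abs_real_inner_le_norm _ _
            _ = ‖d⁻¹ • z - w‖ := by rw [hu, one_mul]
            _ ≤ ρ := hq
        have h2 : ⟪u, d⁻¹ • z⟫ = ⟪u, w⟫ + ⟪u, d⁻¹ • z - w⟫ := by
          rw [← inner_add_right]
          congr 1
          abel
        have h3 : -ρ ≤ ⟪u, d⁻¹ • z - w⟫ := neg_le_of_abs_le h1
        linarith
      have h4 : ⟪u, z⟫ = d * ⟪u, d⁻¹ • z⟫ := by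
        rw [← real_inner_smul_right, ← hz]
      rw [h4]
      calc d / ((k : ℝ) + 1) = d * (1 / ((k : ℝ) + 1)) := by ring
        _ ≤ d * (⟪u, w⟫ / 2) := mul_le_mul_of_nonneg_left hk.le hd0.le
        _ ≤ d * (⟪u, w⟫ - ρ) := by
            have : ρ ≤ ⟪u, w⟫ / 2 := min_le_right _ _
            have := mul_le_mul_of_nonneg_left (by linarith : (⟪u, w⟫ : ℝ) / 2 ≤ ⟪u, w⟫ - ρ) hd0.le
            linarith
        _ ≤ d * ⟪u, d⁻¹ • z⟫ := mul_le_mul_of_nonneg_left hinner hd0.le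

lemma interval_len {m : ℕ} {j : ℤ} {s t : ℝ}
    (hs : s ∈ Icc ((j : ℝ) / ((m : ℝ) + 1)) (((j : ℝ) + 1) / ((m : ℝ) + 1)))
    (ht : t ∈ Icc ((j : ℝ) / ((m : ℝ) + 1)) (((j : ℝ) + 1) / ((m : ℝ) + 1)))
    (hst : s ≤ t) : t - s ≤ 1 / ((m : ℝ) + 1) := by
  have hlen : ((j : ℝ) + 1) / ((m : ℝ) + 1) - (j : ℝ) / ((m : ℝ) + 1) = 1 / ((m : ℝ) + 1) := by
    rw [div_sub_div_same]
    norm_num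
  have h1 := hs.1
  have h2 := ht.2
  linarith

lemma Gnull_pos {v : EuclideanSpace ℝ (Fin n)} (hv : ‖v‖ = 1) {θ : ℝ}
    {K : Set (EuclideanSpace ℝ (Fin n))} (hKc : IsClosed K)
    (hnull : IsConeNull (cone v θ) K)
    {γ : ℝ → EuclideanSpace ℝ (Fin n)} {L : ℝ≥0} (hγ : LipschitzWith L γ)
    (a b : ℝ) (k m : ℕ) (j : ℤ) :
    volume (Fset γ θ v k m ∩ (Icc a b ∩ γ ⁻¹' K) ∩
      Icc ((j : ℝ) / ((m : ℝ) + 1)) (((j : ℝ) + 1) / ((m : ℝ) + 1))) = 0 := by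
  set E := Fset γ θ v k m ∩ (Icc a b ∩ γ ⁻¹' K) ∩
      Icc ((j : ℝ) / ((m : ℝ) + 1)) (((j : ℝ) + 1) / ((m : ℝ) + 1)) with hEdef
  have hEclosed : IsClosed E :=
    ((isClosed_Fset hγ.continuous θ v k m).inter
      (isClosed_Icc.inter (hKc.preimage hγ.continuous))).inter isClosed_Icc
  have hEc : IsCompact E :=
    (isCompact_Icc (a := a) (b := b)).of_isClosed_subset hEclosed fun t ht => ht.1.2.1
  refine core hv hnull hEc hγ (c := (((k : ℝ)) + 1)⁻¹) (by positivity) ?_ ?_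
  · intro s hs t ht hst
    have h1 : t - s ≤ 1 / ((m : ℝ) + 1) := interval_len hs.2 ht.2 hst
    obtain ⟨hc1, hc2⟩ := ht.1.1 s (by rw [abs_sub_comm, abs_of_nonneg (by linarith)]; linarith)
    rw [max_eq_right hst, min_eq_left hst] at hc1 hc2
    refine ⟨hc1, ?_⟩
    rw [inv_mul_eq_div]
    exact hc2
  · intro t ht
    exact ht.1.2.2

lemma Gnull_neg {v : EuclideanSpace ℝ (Fin n)} (hv : ‖v‖ = 1) {θ : ℝ}
    {K : Set (EuclideanSpace ℝ (Fin n))} (hKc : IsClosed K)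
    (hnull : IsConeNull (cone v θ) K)
    {γ : ℝ → EuclideanSpace ℝ (Fin n)} {L : ℝ≥0} (hγ : LipschitzWith L γ)
    (a b : ℝ) (k m : ℕ) (j : ℤ) :
    volume (Fset γ θ (-v) k m ∩ (Icc a b ∩ γ ⁻¹' K) ∩
      Icc ((j : ℝ) / ((m : ℝ) + 1)) (((j : ℝ) + 1) / ((m : ℝ) + 1))) = 0 := by
  set E := Fset γ θ (-v) k m ∩ (Icc a b ∩ γ ⁻¹' K) ∩
      Icc ((j : ℝ) / ((m : ℝ) + 1)) (((j : ℝ) + 1) / ((m : ℝ) + 1)) with hEdef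
  have hEclosed : IsClosed E :=
    ((isClosed_Fset hγ.continuous θ (-v) k m).inter
      (isClosed_Icc.inter (hKc.preimage hγ.continuous))).inter isClosed_Icc
  have hEc : IsCompact E :=
    (isCompact_Icc (a := a) (b := b)).of_isClosed_subset hEclosed fun t ht => ht.1.2.1
  set g : ℝ → EuclideanSpace ℝ (Fin n) := fun t => γ (-t) with hgdef
  have hg : LipschitzWith L g := by
    apply LipschitzWith.of_dist_le_mul
    intro x y
    have := hγ.dist_le_mul (-x) (-y)
    simpa [Real.dist_eq, abs_sub_comm, neg_sub_neg] using this
  have hE' : IsCompact (Neg.neg '' E) := hEc.image continuous_neg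
  have h0 : volume (Neg.neg '' E) = 0 := by
    refine core hv hnull hE' hg (c := (((k : ℝ)) + 1)⁻¹) (by positivity) ?_ ?_
    · rintro s ⟨s₀, hs₀, rfl⟩ t ⟨t₀, ht₀, rfl⟩ hst
      have hts : t₀ ≤ s₀ := by
        have := neg_le_neg_iff.1 hst
        exact this
      have h1 : s₀ - t₀ ≤ 1 / ((m : ℝ) + 1) := interval_len ht₀.2 hs₀.2 hts
      obtain ⟨hc1, hc2⟩ := hs₀.1.1 t₀ (by rw [abs_of_nonpos (by linarith)]; linarith)
      rw [max_eq_right hts, min_eq_left hts] at hc1 hc2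
      have hgval : g (-t₀) - g (-s₀) = γ t₀ - γ s₀ := by simp [hgdef]
      constructor
      · rw [hgval, ← neg_sub (γ s₀) (γ t₀)]
        exact mem_cone_neg_iff.1 hc1
      · rw [hgval]
        have hin : ⟪v, γ t₀ - γ s₀⟫ = ⟪-v, γ s₀ - γ t₀⟫ := by
          rw [inner_neg_left, ← inner_neg_right, neg_sub]
        rw [hin]
        have harg : (-t₀) - (-s₀) = s₀ - t₀ := by ring
        rw [harg, inv_mul_eq_div]
        exact hc2
    · rintro t ⟨t₀, ht₀, rfl⟩
      have : g (-t₀) = γ t₀ := by simp [hgdef]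
      rw [this]
      exact ht₀.1.2.2
  have hEeq : volume E = volume (Neg.neg '' E) := by
    rw [Set.image_neg_eq_neg]
    exact (Measure.measure_neg volume E).symm
  rw [hEeq, h0]

end ConeNullAux

open ConeNullAux

/-- **Derivatives along cone null sets** (Lemma 3.3): if `K` is a compact `C(v,θ)`-cone null
set, then for every Lipschitz curve `γ`, for a.e. `t ∈ γ⁻¹(K)` the derivative `γ'(t)` lies
neither in the interior of `C(v,θ)` nor in the interior of the opposite cone `C(-v,θ)`. -/
theorem deriv_not_mem_interior_cone_of_coneNull
    {n : ℕ} (v : EuclideanSpace ℝ (Fin n)) (hv : ‖v‖ = 1)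
    (θ : ℝ) (hθ : θ ∈ Set.Ioo 0 (Real.pi / 2))
    (K : Set (EuclideanSpace ℝ (Fin n))) (hK : IsCompact K)
    (hnull : IsConeNull (cone v θ) K)
    (a b : ℝ) (γ : ℝ → EuclideanSpace ℝ (Fin n)) (L : ℝ≥0) (hγ : LipschitzWith L γ) :
    ∀ᵐ t ∂(volume.restrict (Set.Icc a b ∩ γ ⁻¹' K)), ∀ w, HasDerivAt γ w t →
      w ∉ interior (cone v θ) ∪ interior (cone (-v) θ) := by
  have hcos : 0 < Real.cos θ := Real.cos_pos_of_mem_Ioo ⟨by linarith [Real.pi_pos, hθ.1], hθ.2⟩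
  have hSm : MeasurableSet (Set.Icc a b ∩ γ ⁻¹' K) :=
    (isClosed_Icc.inter (hK.isClosed.preimage hγ.continuous)).measurableSet
  rw [ae_iff, Measure.restrict_apply' hSm]
  set S := Set.Icc a b ∩ γ ⁻¹' K with hSdef
  have hsub : {t | ¬∀ w, HasDerivAt γ w t → w ∉ interior (cone v θ) ∪ interior (cone (-v) θ)} ∩ S ⊆
      (⋃ (k : ℕ) (m : ℕ) (j : ℤ), Fset γ θ v k m ∩ S ∩
        Icc ((j : ℝ) / ((m : ℝ) + 1)) (((j : ℝ) + 1) / ((m : ℝ) + 1))) ∪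
      (⋃ (k : ℕ) (m : ℕ) (j : ℤ), Fset γ θ (-v) k m ∩ S ∩
        Icc ((j : ℝ) / ((m : ℝ) + 1)) (((j : ℝ) + 1) / ((m : ℝ) + 1))) := by
    rintro t ⟨htP, htS⟩
    simp only [mem_setOf_eq, not_forall, not_not] at htP
    obtain ⟨w, hw, hmem⟩ := htP
    have hIcc : ∀ m : ℕ, t ∈ Icc ((⌊t * ((m : ℝ) + 1)⌋ : ℝ) / ((m : ℝ) + 1))
        ((⌊t * ((m : ℝ) + 1)⌋ + 1 : ℝ) / ((m : ℝ) + 1)) := by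
      intro m
      constructor
      · rw [div_le_iff₀ (by positivity)]
        exact Int.floor_le _
      · rw [le_div_iff₀ (by positivity)]
        exact (Int.lt_floor_add_one _).le
    rcases hmem with h1 | h1
    · obtain ⟨k, m, hF⟩ := mem_Fset_of_deriv hv hcos h1 hw
      refine mem_union_left _ ?_
      exact mem_iUnion.2 ⟨k, mem_iUnion.2 ⟨m, mem_iUnion.2 ⟨⌊t * ((m : ℝ) + 1)⌋,
        ⟨⟨hF, htS⟩, hIcc m⟩⟩⟩⟩
    · obtain ⟨k, m, hF⟩ := mem_Fset_of_deriv (by rw [norm_neg, hv]) hcos h1 hw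
      refine mem_union_right _ ?_
      exact mem_iUnion.2 ⟨k, mem_iUnion.2 ⟨m, mem_iUnion.2 ⟨⌊t * ((m : ℝ) + 1)⌋,
        ⟨⟨hF, htS⟩, hIcc m⟩⟩⟩⟩
  refine measure_mono_null hsub (measure_union_null ?_ ?_)
  · exact measure_iUnion_null fun k => measure_iUnion_null fun m => measure_iUnion_null fun j =>
      Gnull_pos hv hK.isClosed hnull hγ a b k m j
  · exact measure_iUnion_null fun k => measure_iUnion_null fun m => measure_iUnion_null fun j =>
      Gnull_neg hv hK.isClosed hnull hγ a b k m j

end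
end

section
/- Let f : ℝⁿ → ℝ be Lipschitz with LIP[f] > 0, and let g : ℝⁿ → (0,LIP[f]] be a strictly positive lower semicontinuous function which is an upper gradient of f and satisfies g ≡ LIP[f] on ℝⁿ∖B(0,R) for some R > 0. Let (g_i)_{i=1}^∞ be a nondecreasing sequence of continuous functions with g_i → g pointwise and g_i ≡ LIP[f] on ℝⁿ∖B(0,R) for all i. Then there exists a sequence (f_i) of LIP[f]-Lipschitz functions f_i : ℝⁿ → ℝ converging weak-* to f (i.e. pointwise with uniformly bounded Lipschitz constants) such that Lip_a[f_i](x) ≤ g_i(x) for all i ∈ ℕ and all x ∈ ℝⁿ. -/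
open MeasureTheory ENNReal NNReal Filter Topology Metric Set
open scoped RealInnerProductSpace

noncomputable section

set_option maxHeartbeats 1000000
set_option synthInstance.maxHeartbeats 400000

namespace WeakStarAux

variable {n : ℕ}

/-- cost of a curve `γ` on `[0,b]` against density `h`. -/
noncomputable def wsCost (h : EuclideanSpace ℝ (Fin n) → ℝ)
    (γ : ℝ → EuclideanSpace ℝ (Fin n)) (b : ℝ) : ℝ≥0∞ :=
  ∫⁻ t in Set.Icc 0 b, ENNReal.ofReal (h (γ t))

/-- candidate values for the inf-convolution. -/
def wsCand (h f : EuclideanSpace ℝ (Fin n) → ℝ) (x : EuclideanSpace ℝ (Fin n)) : Set ℝ :=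
  { v | ∃ b γ, 0 ≤ b ∧ LipschitzWith 1 γ ∧ γ 0 = x ∧
      v = f (γ b) + (wsCost h γ b).toReal }

noncomputable def wsApprox (h f : EuclideanSpace ℝ (Fin n) → ℝ)
    (x : EuclideanSpace ℝ (Fin n)) : ℝ :=
  sInf (wsCand h f x)

lemma wsCost_le_mul {h : EuclideanSpace ℝ (Fin n) → ℝ} {γ : ℝ → EuclideanSpace ℝ (Fin n)}
    {b M : ℝ} (hM : ∀ t ∈ Set.Icc (0:ℝ) b, h (γ t) ≤ M) :
    wsCost h γ b ≤ ENNReal.ofReal M * ENNReal.ofReal b := by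
  calc wsCost h γ b ≤ ∫⁻ _ in Set.Icc (0:ℝ) b, ENNReal.ofReal M :=
        setLIntegral_mono measurable_const fun t ht => ENNReal.ofReal_le_ofReal (hM t ht)
    _ = ENNReal.ofReal M * volume (Set.Icc (0:ℝ) b) := setLIntegral_const _ _
    _ = ENNReal.ofReal M * ENNReal.ofReal b := by rw [Real.volume_Icc, sub_zero]

lemma wsCost_ne_top {h : EuclideanSpace ℝ (Fin n) → ℝ} {γ : ℝ → EuclideanSpace ℝ (Fin n)}
    {b M : ℝ} (hM : ∀ t ∈ Set.Icc (0:ℝ) b, h (γ t) ≤ M) :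
    wsCost h γ b ≠ ⊤ :=
by
  have : ENNReal.ofReal M * ENNReal.ofReal b < ⊤ := by finiteness
  exact ((wsCost_le_mul hM).trans_lt this).ne

lemma wsCost_zero (h : EuclideanSpace ℝ (Fin n) → ℝ) (γ : ℝ → EuclideanSpace ℝ (Fin n)) :
    wsCost h γ 0 = 0 := by
  unfold wsCost
  rw [Set.Icc_self]
  exact setLIntegral_measure_zero _ _ (by simp)

lemma self_mem_wsCand (h f : EuclideanSpace ℝ (Fin n) → ℝ) (x : EuclideanSpace ℝ (Fin n)) :
    f x ∈ wsCand h f x := by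
  refine ⟨0, fun _ => x, le_refl 0, (LipschitzWith.const x).weaken zero_le_one, rfl, ?_⟩
  rw [wsCost_zero]
  simp

/-- Exit-time reduction: any curve can be cut at the last time it visits
`closedBall 0 R` (or at time `0`), without increasing the value
`f(endpoint) + cost`, and with the new endpoint staying in a controlled region. -/
lemma wsExit {L : ℝ≥0} {R : ℝ} {f h : EuclideanSpace ℝ (Fin n) → ℝ}
    (hLf : LipschitzWith L f) (hL : ∀ z, h z ≤ (L:ℝ))
    (hhR : ∀ z ∉ Metric.ball (0 : EuclideanSpace ℝ (Fin n)) R, h z = L)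
    {γ : ℝ → EuclideanSpace ℝ (Fin n)} (hγ : LipschitzWith 1 γ) {b : ℝ} (hb : 0 ≤ b) :
    ∃ b', 0 ≤ b' ∧ b' ≤ b ∧ ‖γ b'‖ ≤ max R ‖γ 0‖ ∧
      f (γ b') + (wsCost h γ b').toReal ≤ f (γ b) + (wsCost h γ b).toReal := by
  classical
  set S := Set.Icc 0 b ∩ γ ⁻¹' (Metric.closedBall 0 R) with hSdef
  by_cases hS : S.Nonempty
  · -- cut at the last visit
    have hSc : IsClosed S :=
      isClosed_Icc.inter (Metric.isClosed_closedBall.preimage hγ.continuous)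
    have hBdd : BddAbove S := ⟨b, fun t ht => ht.1.2⟩
    set b₀ := sSup S with hb₀def
    have hb₀S : b₀ ∈ S := hSc.csSup_mem hS hBdd
    obtain ⟨⟨hb₀0, hb₀b⟩, hb₀ball⟩ := hb₀S
    have hb₀norm : ‖γ b₀‖ ≤ R := by
      simpa [Metric.mem_closedBall, dist_zero_right] using hb₀ball
    have hout : ∀ t ∈ Set.Ioc b₀ b, h (γ t) = (L:ℝ) := by
      intro t ht
      have htS : t ∉ S := fun hmem => (le_csSup hBdd hmem).not_gt ht.1
      have ht' : t ∈ Set.Icc (0:ℝ) b := ⟨hb₀0.trans ht.1.le, ht.2⟩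
      have hnb : γ t ∉ Metric.closedBall (0 : EuclideanSpace ℝ (Fin n)) R :=
        fun hc => htS ⟨ht', hc⟩
      exact hhR _ fun hball => hnb (Metric.ball_subset_closedBall hball)
    have hsplit : wsCost h γ b
        = wsCost h γ b₀ + ∫⁻ t in Set.Ioc b₀ b, ENNReal.ofReal (h (γ t)) := by
      unfold wsCost
      rw [← lintegral_union measurableSet_Ioc
        ((Set.Iic_disjoint_Ioi (le_refl b₀)).mono Set.Icc_subset_Iic_self
          Set.Ioc_subset_Ioi_self),
        Set.Icc_union_Ioc_eq_Icc hb₀0 hb₀b]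
    have htail : ∫⁻ t in Set.Ioc b₀ b, ENNReal.ofReal (h (γ t))
        = ENNReal.ofReal (L:ℝ) * ENNReal.ofReal (b - b₀) := by
      rw [setLIntegral_congr_fun_ae measurableSet_Ioc
        (Filter.Eventually.of_forall fun t ht => by rw [hout t ht]),
        setLIntegral_const, Real.volume_Ioc]
    have hfin₀ : wsCost h γ b₀ ≠ ⊤ := wsCost_ne_top fun t _ => hL (γ t)
    have hfin : wsCost h γ b ≠ ⊤ := wsCost_ne_top fun t _ => hL (γ t)
    have htoReal : (wsCost h γ b).toReal
        = (wsCost h γ b₀).toReal + (L:ℝ) * (b - b₀) := by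
      rw [hsplit, htail, ENNReal.toReal_add hfin₀ (by finiteness),
        ENNReal.toReal_mul, ENNReal.toReal_ofReal L.coe_nonneg,
        ENNReal.toReal_ofReal (by linarith)]
    have hdist : dist (f (γ b₀)) (f (γ b)) ≤ (L:ℝ) * (b - b₀) := by
      calc dist (f (γ b₀)) (f (γ b)) ≤ (L:ℝ) * dist (γ b₀) (γ b) := hLf.dist_le_mul _ _
        _ ≤ (L:ℝ) * dist b₀ b := by
            have := hγ.dist_le_mul b₀ b
            simp only [NNReal.coe_one, one_mul] at this
            exact mul_le_mul_of_nonneg_left this L.coe_nonneg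
        _ = (L:ℝ) * (b - b₀) := by
            rw [Real.dist_eq, abs_of_nonpos (by linarith)]; ring
    refine ⟨b₀, hb₀0, hb₀b, hb₀norm.trans (le_max_left _ _), ?_⟩
    rw [htoReal]
    have := abs_sub_abs_le_abs_sub (f (γ b₀)) (f (γ b))
    rw [Real.dist_eq] at hdist
    have h1 : f (γ b₀) - f (γ b) ≤ (L:ℝ) * (b - b₀) := (le_abs_self _).trans hdist
    linarith
  · -- the curve never meets the ball
    have hout : ∀ t ∈ Set.Icc (0:ℝ) b, h (γ t) = (L:ℝ) := by
      intro t ht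
      have : γ t ∉ Metric.closedBall (0 : EuclideanSpace ℝ (Fin n)) R := by
        intro hc
        exact hS ⟨t, ht, hc⟩
      exact hhR _ fun hball => this (Metric.ball_subset_closedBall hball)
    have hcost : wsCost h γ b = ENNReal.ofReal (L:ℝ) * ENNReal.ofReal b := by
      unfold wsCost
      rw [setLIntegral_congr_fun_ae measurableSet_Icc
        (Filter.Eventually.of_forall fun t ht => by rw [hout t ht]),
        setLIntegral_const, Real.volume_Icc, sub_zero]
    have htoReal : (wsCost h γ b).toReal = (L:ℝ) * b := by
      rw [hcost, ENNReal.toReal_mul, ENNReal.toReal_ofReal L.coe_nonneg,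
        ENNReal.toReal_ofReal hb]
    have hdist : dist (f (γ 0)) (f (γ b)) ≤ (L:ℝ) * b := by
      calc dist (f (γ 0)) (f (γ b)) ≤ (L:ℝ) * dist (γ 0) (γ b) := hLf.dist_le_mul _ _
        _ ≤ (L:ℝ) * dist 0 b := by
            have := hγ.dist_le_mul 0 b
            simp only [NNReal.coe_one, one_mul] at this
            exact mul_le_mul_of_nonneg_left this L.coe_nonneg
        _ = (L:ℝ) * b := by rw [Real.dist_eq, abs_of_nonpos (by linarith)]; ring
    refine ⟨0, le_refl 0, hb, le_max_right _ _, ?_⟩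
    rw [wsCost_zero, htoReal]
    rw [Real.dist_eq] at hdist
    have h1 : f (γ 0) - f (γ b) ≤ (L:ℝ) * b := (le_abs_self _).trans hdist
    simp only [ENNReal.toReal_zero, add_zero]
    linarith

lemma wsCand_lower {L : ℝ≥0} {R : ℝ} {f h : EuclideanSpace ℝ (Fin n) → ℝ}
    (hLf : LipschitzWith L f) (hL : ∀ z, h z ≤ (L:ℝ))
    (hhR : ∀ z ∉ Metric.ball (0 : EuclideanSpace ℝ (Fin n)) R, h z = L)
    (x : EuclideanSpace ℝ (Fin n)) :
    ∀ v ∈ wsCand h f x, f 0 - (L:ℝ) * max R ‖x‖ ≤ v := by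
  rintro v ⟨b, γ, hb, hγ, h0, rfl⟩
  obtain ⟨b', hb'0, hb'b, hb'norm, hle⟩ := wsExit hLf hL hhR hγ hb
  rw [h0] at hb'norm
  have h1 : f 0 - (L:ℝ) * max R ‖x‖ ≤ f (γ b') := by
    have hd : dist (f 0) (f (γ b')) ≤ (L:ℝ) * ‖γ b'‖ := by
      have := hLf.dist_le_mul 0 (γ b')
      rwa [dist_zero_left] at this
    rw [Real.dist_eq] at hd
    have h2 : f 0 - f (γ b') ≤ (L:ℝ) * ‖γ b'‖ := (le_abs_self _).trans hd
    have h3 : (L:ℝ) * ‖γ b'‖ ≤ (L:ℝ) * max R ‖x‖ :=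
      mul_le_mul_of_nonneg_left hb'norm L.coe_nonneg
    linarith
  have h4 : (0:ℝ) ≤ (wsCost h γ b').toReal := ENNReal.toReal_nonneg
  linarith

lemma wsCand_bddBelow {L : ℝ≥0} {R : ℝ} {f h : EuclideanSpace ℝ (Fin n) → ℝ}
    (hLf : LipschitzWith L f) (hL : ∀ z, h z ≤ (L:ℝ))
    (hhR : ∀ z ∉ Metric.ball (0 : EuclideanSpace ℝ (Fin n)) R, h z = L)
    (x : EuclideanSpace ℝ (Fin n)) :
    BddBelow (wsCand h f x) :=
  ⟨f 0 - (L:ℝ) * max R ‖x‖, fun v hv => wsCand_lower hLf hL hhR x v hv⟩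

lemma wsApprox_le_f {L : ℝ≥0} {R : ℝ} {f h : EuclideanSpace ℝ (Fin n) → ℝ}
    (hLf : LipschitzWith L f) (hL : ∀ z, h z ≤ (L:ℝ))
    (hhR : ∀ z ∉ Metric.ball (0 : EuclideanSpace ℝ (Fin n)) R, h z = L)
    (x : EuclideanSpace ℝ (Fin n)) :
    wsApprox h f x ≤ f x :=
  csInf_le (wsCand_bddBelow hLf hL hhR x) (self_mem_wsCand h f x)

/-- The key prepending construction: moving the base point from `y` to `x` costs at most
`M * dist x y` if `h ≤ M` on the segment from `x` to `y`. -/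
lemma wsCand_prepend {f h : EuclideanSpace ℝ (Fin n) → ℝ} {L : ℝ≥0}
    (hcont : Continuous h) (hL : ∀ z, h z ≤ (L:ℝ))
    {x y : EuclideanSpace ℝ (Fin n)} {M : ℝ} (hM0 : 0 ≤ M)
    (hseg : ∀ z ∈ segment ℝ x y, h z ≤ M) :
    ∀ v ∈ wsCand h f y, ∃ v' ∈ wsCand h f x, v' ≤ v + M * dist x y := by
  rintro v ⟨b, γ, hb, hγ, h0, rfl⟩
  classical
  set s : ℝ := ‖y - x‖ with hs
  have hs0 : 0 ≤ s := norm_nonneg _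
  set u : EuclideanSpace ℝ (Fin n) := ‖y - x‖⁻¹ • (y - x) with hu
  have hunorm : ‖u‖ ≤ 1 := by
    rw [hu, norm_smul, norm_inv, norm_norm]
    rcases eq_or_ne ‖y - x‖ 0 with h | h
    · simp [h]
    · rw [inv_mul_cancel₀ h]
  have hsu : x + s • u = y := by
    rw [hu, smul_smul]
    rcases eq_or_ne ‖y - x‖ 0 with h | h
    · have h1 : y - x = 0 := norm_eq_zero.mp h
      have hyx : y = x := by rwa [sub_eq_zero] at h1
      simp [hs, h, hyx]
    · rw [hs, mul_inv_cancel₀ h, one_smul, add_sub_cancel]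
  have hlin : ∀ t₁ t₂ : ℝ, dist (x + t₁ • u) (x + t₂ • u) ≤ |t₁ - t₂| := by
    intro t₁ t₂
    rw [dist_add_left, dist_eq_norm, ← sub_smul, norm_smul, Real.norm_eq_abs]
    have := mul_le_mul_of_nonneg_left hunorm (abs_nonneg (t₁ - t₂))
    simpa using this
  set γ' : ℝ → EuclideanSpace ℝ (Fin n) := fun t => if t ≤ s then x + t • u else γ (t - s)
    with hγ'
  have hγ'0 : γ' 0 = x := by
    rw [hγ']
    simp [hs0]
  have hγdist : ∀ t₁ t₂ : ℝ, dist (γ t₁) (γ t₂) ≤ |t₁ - t₂| := by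
    intro t₁ t₂
    have := hγ.dist_le_mul t₁ t₂
    simpa [Real.dist_eq] using this
  have key : ∀ t₁ t₂ : ℝ, t₁ ≤ t₂ → dist (γ' t₁) (γ' t₂) ≤ t₂ - t₁ := by
    intro t₁ t₂ h12
    by_cases h2 : t₂ ≤ s
    · have h1 : t₁ ≤ s := h12.trans h2
      have e1 : γ' t₁ = x + t₁ • u := by rw [hγ']; simp only [if_pos h1]
      have e2 : γ' t₂ = x + t₂ • u := by rw [hγ']; simp only [if_pos h2]
      rw [e1, e2]
      calc dist (x + t₁ • u) (x + t₂ • u) ≤ |t₁ - t₂| := hlin t₁ t₂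
        _ = t₂ - t₁ := by rw [abs_of_nonpos (by linarith)]; ring
    · by_cases h1 : t₁ ≤ s
      · have e1 : γ' t₁ = x + t₁ • u := by rw [hγ']; simp only [if_pos h1]
        have e2 : γ' t₂ = γ (t₂ - s) := by rw [hγ']; simp only [if_neg h2]
        push_neg at h2
        calc dist (γ' t₁) (γ' t₂) ≤ dist (γ' t₁) y + dist y (γ' t₂) := dist_triangle _ _ _
          _ ≤ (s - t₁) + (t₂ - s) := by
              gcongr
              · rw [e1, ← hsu]
                calc dist (x + t₁ • u) (x + s • u) ≤ |t₁ - s| := hlin t₁ s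
                  _ = s - t₁ := by rw [abs_of_nonpos (by linarith)]; ring
              · rw [e2, ← h0]
                calc dist (γ 0) (γ (t₂ - s)) ≤ |0 - (t₂ - s)| := hγdist _ _
                  _ = t₂ - s := by rw [abs_of_nonpos (by linarith)]; ring
          _ = t₂ - t₁ := by ring
      · have e1 : γ' t₁ = γ (t₁ - s) := by rw [hγ']; simp only [if_neg h1]
        have e2 : γ' t₂ = γ (t₂ - s) := by rw [hγ']; simp only [if_neg h2]
        rw [e1, e2]
        calc dist (γ (t₁ - s)) (γ (t₂ - s)) ≤ |t₁ - s - (t₂ - s)| := hγdist _ _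
          _ = t₂ - t₁ := by rw [show t₁ - s - (t₂ - s) = t₁ - t₂ by ring,
              abs_of_nonpos (by linarith)]; ring
  have hγ'lip : LipschitzWith 1 γ' := by
    apply LipschitzWith.of_dist_le_mul
    intro t₁ t₂
    simp only [NNReal.coe_one, one_mul]
    rcases le_total t₁ t₂ with h12 | h21
    · refine (key t₁ t₂ h12).trans ?_
      rw [Real.dist_eq, abs_sub_comm]
      exact le_abs_self _
    · rw [dist_comm]
      refine (key t₂ t₁ h21).trans ?_
      rw [Real.dist_eq]
      exact le_abs_self _
  have hend : γ' (s + b) = γ b := by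
    rcases lt_or_eq_of_le hb with hb0 | hb0
    · have : ¬(s + b ≤ s) := by linarith
      rw [hγ']
      simp only [if_neg this, add_sub_cancel_left]
    · rw [hγ', ← hb0]
      simp only [add_zero, if_pos (le_refl s), hsu, ← h0]
  -- cost estimate
  have hmeas : Measurable fun t => ENNReal.ofReal (h (γ' t)) := by
    apply ENNReal.measurable_ofReal.comp
    apply Measurable.comp hcont.measurable
    exact Measurable.ite measurableSet_Iic
      (by fun_prop)
      (by exact (hγ.continuous.comp (by fun_prop)).measurable)
  have hseg' : ∀ t ∈ Set.Icc (0:ℝ) s, h (γ' t) ≤ M := by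
    intro t ht
    have e1 : γ' t = x + t • u := by rw [hγ']; simp only [if_pos ht.2]
    rw [e1]
    apply hseg
    rw [segment_eq_image']
    rcases eq_or_ne s 0 with hs' | hs'
    · have ht0 : t = 0 := le_antisymm (hs' ▸ ht.2) ht.1
      exact ⟨0, ⟨le_refl 0, zero_le_one⟩, by simp [ht0]⟩
    · refine ⟨t * s⁻¹, ⟨mul_nonneg ht.1 (inv_nonneg.mpr hs0), ?_⟩, ?_⟩
      · calc t * s⁻¹ ≤ s * s⁻¹ := by
              apply mul_le_mul_of_nonneg_right ht.2 (inv_nonneg.mpr hs0)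
          _ = 1 := mul_inv_cancel₀ hs'
      · rw [hu, smul_smul]
  have hcost : wsCost h γ' (s + b) ≤ ENNReal.ofReal M * ENNReal.ofReal s + wsCost h γ b := by
    unfold wsCost
    rw [← Set.Icc_union_Ioc_eq_Icc hs0 (le_add_of_nonneg_right hb),
      lintegral_union measurableSet_Ioc
        ((Set.Iic_disjoint_Ioi (le_refl s)).mono Set.Icc_subset_Iic_self
          Set.Ioc_subset_Ioi_self)]
    apply add_le_add
    · calc ∫⁻ t in Set.Icc (0:ℝ) s, ENNReal.ofReal (h (γ' t))
          ≤ ∫⁻ _ in Set.Icc (0:ℝ) s, ENNReal.ofReal M :=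
            setLIntegral_mono measurable_const fun t ht =>
              ENNReal.ofReal_le_ofReal (hseg' t ht)
        _ = ENNReal.ofReal M * ENNReal.ofReal s := by
            rw [setLIntegral_const, Real.volume_Icc, sub_zero]
    · have e : ∀ t ∈ Set.Ioc s (s + b), ENNReal.ofReal (h (γ' t))
          = ENNReal.ofReal (h (γ (t - s))) := by
        intro t ht
        rw [hγ']
        simp only [if_neg (not_le.mpr ht.1)]
      rw [setLIntegral_congr_fun_ae measurableSet_Ioc (Filter.Eventually.of_forall e)]
      have htrans : ∫⁻ t in Set.Ioc s (s + b), ENNReal.ofReal (h (γ (t - s)))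
          = ∫⁻ t in Set.Ioc (0:ℝ) b, ENNReal.ofReal (h (γ t)) := by
        have hpre : (fun a : ℝ => a + s) ⁻¹' Set.Ioc s (s + b) = Set.Ioc 0 b := by
          ext a
          simp only [Set.mem_preimage, Set.mem_Ioc]
          constructor
          · rintro ⟨h1, h2⟩; constructor <;> linarith
          · rintro ⟨h1, h2⟩; constructor <;> linarith
        have := (measurePreserving_add_right volume s).setLIntegral_comp_preimage_emb
          (measurableEmbedding_addRight s)
          (fun t => ENNReal.ofReal (h (γ (t - s)))) (Set.Ioc s (s + b))
        rw [hpre] at this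
        rw [← this]
        apply setLIntegral_congr_fun_ae measurableSet_Ioc
        apply Filter.Eventually.of_forall
        intro a _
        simp only [add_sub_cancel_right]
      rw [htrans]
      exact lintegral_mono_set Set.Ioc_subset_Icc_self
  -- the new candidate
  have hsb : 0 ≤ s + b := by linarith
  refine ⟨f (γ' (s + b)) + (wsCost h γ' (s + b)).toReal, ⟨s + b, γ', hsb, hγ'lip, hγ'0, rfl⟩, ?_⟩
  rw [hend]
  have hfin : wsCost h γ b ≠ ⊤ := wsCost_ne_top fun t _ => hL (γ t)
  have hfin' : ENNReal.ofReal M * ENNReal.ofReal s + wsCost h γ b ≠ ⊤ := by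
    apply ENNReal.add_ne_top.mpr
    exact ⟨by finiteness, hfin⟩
  have h1 : (wsCost h γ' (s + b)).toReal
      ≤ (ENNReal.ofReal M * ENNReal.ofReal s + wsCost h γ b).toReal :=
    ENNReal.toReal_mono hfin' hcost
  have h2 : (ENNReal.ofReal M * ENNReal.ofReal s + wsCost h γ b).toReal
      = M * s + (wsCost h γ b).toReal := by
    rw [ENNReal.toReal_add (by finiteness) hfin, ENNReal.toReal_mul,
      ENNReal.toReal_ofReal hM0, ENNReal.toReal_ofReal hs0]
  have hdistxy : dist x y = s := by rw [dist_eq_norm, norm_sub_rev]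
  rw [hdistxy]
  linarith

lemma wsApprox_le_add {f h : EuclideanSpace ℝ (Fin n) → ℝ} {L : ℝ≥0} {R : ℝ}
    (hLf : LipschitzWith L f) (hcont : Continuous h) (hL : ∀ z, h z ≤ (L:ℝ))
    (hhR : ∀ z ∉ Metric.ball (0 : EuclideanSpace ℝ (Fin n)) R, h z = L)
    {x y : EuclideanSpace ℝ (Fin n)} {M : ℝ} (hM0 : 0 ≤ M)
    (hseg : ∀ z ∈ segment ℝ x y, h z ≤ M) :
    wsApprox h f x ≤ wsApprox h f y + M * dist x y := by
  have hbddx := wsCand_bddBelow hLf hL hhR x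
  have hkey : wsApprox h f x - M * dist x y ≤ wsApprox h f y := by
    apply le_csInf ⟨f y, self_mem_wsCand h f y⟩
    intro v hv
    obtain ⟨v', hv', hle⟩ := wsCand_prepend hcont hL hM0 hseg v hv
    have := csInf_le hbddx hv'
    unfold wsApprox
    linarith
  linarith

lemma wsApprox_dist_le {f h : EuclideanSpace ℝ (Fin n) → ℝ} {L : ℝ≥0} {R : ℝ}
    (hLf : LipschitzWith L f) (hcont : Continuous h) (hL : ∀ z, h z ≤ (L:ℝ))
    (hhR : ∀ z ∉ Metric.ball (0 : EuclideanSpace ℝ (Fin n)) R, h z = L)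
    {x y : EuclideanSpace ℝ (Fin n)} {M : ℝ} (hM0 : 0 ≤ M)
    (hseg : ∀ z ∈ segment ℝ x y, h z ≤ M) :
    |wsApprox h f x - wsApprox h f y| ≤ M * dist x y := by
  rw [abs_le]
  constructor
  · have := wsApprox_le_add (x := y) (y := x) hLf hcont hL hhR hM0
      (by rwa [segment_symm])
    rw [dist_comm] at this
    linarith
  · have := wsApprox_le_add (x := x) (y := y) hLf hcont hL hhR hM0 hseg
    linarith

lemma wsApprox_lipschitz {f h : EuclideanSpace ℝ (Fin n) → ℝ} {L : ℝ≥0} {R : ℝ}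
    (hLf : LipschitzWith L f) (hcont : Continuous h) (hL : ∀ z, h z ≤ (L:ℝ))
    (hhR : ∀ z ∉ Metric.ball (0 : EuclideanSpace ℝ (Fin n)) R, h z = L) :
    LipschitzWith L (wsApprox h f) := by
  apply LipschitzWith.of_dist_le_mul
  intro x y
  rw [Real.dist_eq]
  exact wsApprox_dist_le hLf hcont hL hhR L.coe_nonneg fun z _ => hL z

lemma wsApprox_asympLipConst {f h : EuclideanSpace ℝ (Fin n) → ℝ} {L : ℝ≥0} {R : ℝ}
    (hLf : LipschitzWith L f) (hcont : Continuous h) (hL : ∀ z, h z ≤ (L:ℝ))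
    (hhR : ∀ z ∉ Metric.ball (0 : EuclideanSpace ℝ (Fin n)) R, h z = L)
    (x : EuclideanSpace ℝ (Fin n)) :
    asympLipConst (wsApprox h f) x ≤ ENNReal.ofReal (h x) := by
  have hstep : ∀ ε : ℝ, 0 < ε →
      asympLipConst (wsApprox h f) x ≤ ENNReal.ofReal (h x + ε) := by
    intro ε hε
    obtain ⟨r, hr, hball⟩ : ∃ r > 0, ∀ z, dist z x < r → dist (h z) (h x) < ε :=
      Metric.continuousAt_iff.mp (hcont.continuousAt) ε hε
    have hup : ∀ z ∈ Metric.ball x r, h z ≤ h x + ε := by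
      intro z hz
      have := hball z (Metric.mem_ball.mp hz)
      rw [Real.dist_eq] at this
      have := (abs_le.mp this.le).2
      linarith
    set M : ℝ := max (h x + ε) 0 with hM
    have hM0 : 0 ≤ M := le_max_right _ _
    have hlip : lipConstOn (wsApprox h f) (Metric.ball x r) ≤ ENNReal.ofReal M := by
      apply iSup_le; intro a
      apply iSup_le; intro ha
      apply iSup_le; intro c
      apply iSup_le; intro hc
      have hseg : ∀ z ∈ segment ℝ a c, h z ≤ M := by
        intro z hz
        have hzball : z ∈ Metric.ball x r := (convex_ball x r).segment_subset ha hc hz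
        exact (hup z hzball).trans (le_max_left _ _)
      have hd := wsApprox_dist_le (R := R) hLf hcont hL hhR hM0 hseg
      have hde : edist (wsApprox h f a) (wsApprox h f c)
          ≤ ENNReal.ofReal M * edist a c := by
        rw [edist_dist, edist_dist]
        calc ENNReal.ofReal (dist (wsApprox h f a) (wsApprox h f c))
            ≤ ENNReal.ofReal (M * dist a c) := by
              apply ENNReal.ofReal_le_ofReal
              rw [Real.dist_eq]
              exact hd
          _ = ENNReal.ofReal M * ENNReal.ofReal (dist a c) :=
              ENNReal.ofReal_mul hM0
      exact ENNReal.div_le_of_le_mul hde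
    have : asympLipConst (wsApprox h f) x ≤ lipConstOn (wsApprox h f) (Metric.ball x r) :=
      iInf_le (fun r : {r : ℝ // 0 < r} => lipConstOn (wsApprox h f) (Metric.ball x (r : ℝ))) ⟨r, hr⟩
    refine this.trans (hlip.trans ?_)
    rcases le_total (h x + ε) 0 with h' | h'
    · rw [hM, max_eq_right h', ENNReal.ofReal_zero]
      exact zero_le
    · rw [hM, max_eq_left h']
  apply ENNReal.le_of_forall_pos_le_add
  intro ε' hε' _
  calc asympLipConst (wsApprox h f) x ≤ ENNReal.ofReal (h x + ε') :=
        hstep ε' (by exact_mod_cast hε')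
    _ ≤ ENNReal.ofReal (h x) + ENNReal.ofReal ε' := ENNReal.ofReal_add_le
    _ = ENNReal.ofReal (h x) + ε' := by rw [ENNReal.ofReal_coe_nnreal]

/-- Uniform positive lower bound for `gi i`, `i` large. -/
lemma wsFloor {R : ℝ} {L : ℝ≥0} (hR : 0 < R) (hLpos : 0 < L)
    {g : EuclideanSpace ℝ (Fin n) → ℝ} (hgpos : ∀ x, 0 < g x)
    {gi : ℕ → EuclideanSpace ℝ (Fin n) → ℝ}
    (hgiC : ∀ i, Continuous (gi i)) (hgi_mono : Monotone gi)
    (hgi_tendsto : ∀ x, Tendsto (fun i => gi i x) atTop (𝓝 (g x)))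
    (hgiR : ∀ i, ∀ x ∉ Metric.ball (0 : EuclideanSpace ℝ (Fin n)) R, gi i x = L) :
    ∃ i₀ : ℕ, ∃ c : ℝ, 0 < c ∧ ∀ i ≥ i₀, ∀ z, c ≤ gi i z := by
  set K : Set (EuclideanSpace ℝ (Fin n)) := Metric.closedBall 0 R with hK
  have hKc : IsCompact K := isCompact_closedBall _ _
  have hcover : K ⊆ ⋃ i : ℕ, (gi i) ⁻¹' (Set.Ioi 0) := by
    intro z _
    obtain ⟨i, hi⟩ := ((hgi_tendsto z).eventually (eventually_gt_nhds (hgpos z))).exists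
    exact Set.mem_iUnion.mpr ⟨i, hi⟩
  obtain ⟨t, ht⟩ := hKc.elim_finite_subcover (fun i => (gi i) ⁻¹' (Set.Ioi 0))
    (fun i => (isOpen_Ioi).preimage (hgiC i)) hcover
  set i₀ := t.sup id with hi₀
  have hposK : ∀ z ∈ K, 0 < gi i₀ z := by
    intro z hz
    obtain ⟨i, hit, hi⟩ := Set.mem_iUnion₂.mp (ht hz)
    have hle : i ≤ i₀ := Finset.le_sup (f := id) hit
    exact lt_of_lt_of_le hi (hgi_mono hle z)
  have hKne : K.Nonempty := ⟨0, by simp [hK, hR.le]⟩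
  obtain ⟨z₀, hz₀K, hz₀min⟩ := hKc.exists_isMinOn hKne (hgiC i₀).continuousOn
  set m := gi i₀ z₀ with hm
  have hmpos : 0 < m := hposK z₀ hz₀K
  refine ⟨i₀, min m L, lt_min hmpos (by exact_mod_cast hLpos), ?_⟩
  intro i hi z
  by_cases hzK : z ∈ K
  · calc min m (L:ℝ) ≤ m := min_le_left _ _
      _ ≤ gi i₀ z := hz₀min hzK
      _ ≤ gi i z := hgi_mono hi z
  · have hzb : z ∉ Metric.ball (0 : EuclideanSpace ℝ (Fin n)) R :=
      fun hb => hzK (Metric.ball_subset_closedBall hb)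
    rw [hgiR i z hzb]
    exact min_le_right _ _

/-- each `gi i` is bounded by `L`. -/
lemma wsgi_le {L : ℝ≥0} {g : EuclideanSpace ℝ (Fin n) → ℝ} (hgle : ∀ x, g x ≤ (L:ℝ))
    {gi : ℕ → EuclideanSpace ℝ (Fin n) → ℝ} (hgi_mono : Monotone gi)
    (hgi_tendsto : ∀ x, Tendsto (fun i => gi i x) atTop (𝓝 (g x))) :
    ∀ i z, gi i z ≤ (L:ℝ) := by
  intro i z
  have h1 : gi i z ≤ g z := by
    apply ge_of_tendsto (hgi_tendsto z)
    filter_upwards [eventually_ge_atTop i] with j hj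
    exact hgi_mono hj z
  exact h1.trans (hgle z)

/-- clamping to `[0,c]` is `1`-Lipschitz -/
lemma wsClampLip (c : ℝ) : LipschitzWith 1 (fun t : ℝ => max 0 (min t c)) := by
  have h1 : LipschitzWith 1 (fun t : ℝ => min t c) := LipschitzWith.id.min_const c
  have h2 := h1.max_const 0
  simpa [max_comm] using h2

/-- **Key convergence lemma.** -/
lemma wsKey {L : ℝ≥0}
    (f : EuclideanSpace ℝ (Fin n) → ℝ)
    (hLf : LipschitzWith L f) (hLpos : 0 < L)
    (g : EuclideanSpace ℝ (Fin n) → ℝ)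
    (hgpos : ∀ x, 0 < g x) (hgle : ∀ x, g x ≤ (L : ℝ))
    (hgug : IsUpperGradient g f)
    (R : ℝ) (hR : 0 < R)
    (gi : ℕ → EuclideanSpace ℝ (Fin n) → ℝ)
    (hgiC : ∀ i, Continuous (gi i)) (hgi_mono : Monotone gi)
    (hgi_tendsto : ∀ x, Tendsto (fun i => gi i x) atTop (𝓝 (g x)))
    (hgiR : ∀ i, ∀ x ∉ Metric.ball (0 : EuclideanSpace ℝ (Fin n)) R, gi i x = L)
    (x : EuclideanSpace ℝ (Fin n)) (ε : ℝ) (hε : 0 < ε) :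
    ∃ i, f x - ε ≤ wsApprox (gi i) f x := by
  by_contra hcon
  push_neg at hcon
  obtain ⟨i₀, c, hc, hfloor⟩ := wsFloor hR hLpos hgpos hgiC hgi_mono hgi_tendsto hgiR
  have hgiL : ∀ i z, gi i z ≤ (L:ℝ) := wsgi_le hgle hgi_mono hgi_tendsto
  set Rm : ℝ := max R ‖x‖ with hRm
  have hRm0 : 0 ≤ Rm := le_max_of_le_left hR.le
  set B : ℝ := (L:ℝ) * (‖x‖ + Rm) with hB
  have hB0 : 0 ≤ B := mul_nonneg L.coe_nonneg (by positivity)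
  set T : ℝ := B / c with hT
  have hT0 : 0 ≤ T := div_nonneg hB0 hc.le
  -- Step 1: select near-optimal truncated curves
  have hsel : ∀ k : ℕ, ∃ b' : ℝ, ∃ γ : ℝ → EuclideanSpace ℝ (Fin n),
      0 ≤ b' ∧ LipschitzWith 1 γ ∧ γ 0 = x ∧ ‖γ b'‖ ≤ Rm ∧ b' ≤ T ∧
      f (γ b') + (wsCost (gi (i₀ + k)) γ b').toReal < f x - ε := by
    intro k
    set i := i₀ + k with hi
    obtain ⟨v, hv, hvlt⟩ := exists_lt_of_csInf_lt ⟨f x, self_mem_wsCand (gi i) f x⟩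
      (hcon i)
    obtain ⟨b, γ, hb, hγ, h0, rfl⟩ := hv
    obtain ⟨b', hb'0, hb'b, hb'norm, hb'le⟩ :=
      wsExit hLf (hgiL i) (hgiR i) hγ hb
    rw [h0] at hb'norm
    have hlt : f (γ b') + (wsCost (gi i) γ b').toReal < f x - ε := lt_of_le_of_lt hb'le hvlt
    -- length bound
    have hfin : wsCost (gi i) γ b' ≠ ⊤ := wsCost_ne_top fun t _ => hgiL i (γ t)
    have hlow : ENNReal.ofReal c * ENNReal.ofReal b' ≤ wsCost (gi i) γ b' := by
      have : ENNReal.ofReal c * ENNReal.ofReal b'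
          = ∫⁻ _ in Set.Icc (0:ℝ) b', ENNReal.ofReal c := by
        rw [setLIntegral_const, Real.volume_Icc, sub_zero]
      rw [this]
      apply setLIntegral_mono
      · exact (ENNReal.measurable_ofReal.comp
          ((hgiC i).comp hγ.continuous).measurable)
      · intro t _
        exact ENNReal.ofReal_le_ofReal (hfloor i (Nat.le_add_right i₀ k) (γ t))
    have hcb' : c * b' ≤ (wsCost (gi i) γ b').toReal := by
      have := ENNReal.toReal_mono hfin hlow
      rwa [ENNReal.toReal_mul, ENNReal.toReal_ofReal hc.le,
        ENNReal.toReal_ofReal hb'0] at this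
    have hcost_le : (wsCost (gi i) γ b').toReal ≤ B := by
      have hfd : |f x - f (γ b')| ≤ (L:ℝ) * (‖x‖ + Rm) := by
        have h1 : dist (f x) (f (γ b')) ≤ (L:ℝ) * dist x (γ b') := hLf.dist_le_mul _ _
        have h2 : dist x (γ b') ≤ ‖x‖ + Rm := by
          calc dist x (γ b') = ‖x - γ b'‖ := dist_eq_norm _ _
            _ ≤ ‖x‖ + ‖γ b'‖ := norm_sub_le _ _
            _ ≤ ‖x‖ + Rm := by linarith
        rw [Real.dist_eq] at h1
        calc |f x - f (γ b')| ≤ (L:ℝ) * dist x (γ b') := h1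
          _ ≤ (L:ℝ) * (‖x‖ + Rm) := mul_le_mul_of_nonneg_left h2 L.coe_nonneg
      have h3 : f x - f (γ b') ≤ B := (le_abs_self _).trans hfd
      linarith
    have hb'T : b' ≤ T := by
      rw [hT, le_div_iff₀ hc]
      calc b' * c = c * b' := mul_comm _ _
        _ ≤ B := hcb'.trans hcost_le
    exact ⟨b', γ, hb'0, hγ, h0, hb'norm, hb'T, hlt⟩
  choose b' γs hb'0 hγlip hγ0 hnorm hb'T hlt using hsel
  -- Step 2: clamp the curves
  set δ : ℕ → ℝ → EuclideanSpace ℝ (Fin n) :=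
    fun k t => γs k (max 0 (min t (b' k))) with hδdef
  have hδlip : ∀ k, LipschitzWith 1 (δ k) := by
    intro k
    have := (hγlip k).comp (wsClampLip (b' k))
    rwa [mul_one] at this
  have hδ0 : ∀ k, δ k 0 = x := by
    intro k
    rw [hδdef]
    simp only [min_eq_left (hb'0 k), max_self]
    exact hγ0 k
  have hδend : ∀ k, δ k (b' k) = γs k (b' k) := by
    intro k
    rw [hδdef]
    simp [min_self, max_eq_right (hb'0 k)]
  have hδeq : ∀ k, ∀ t ∈ Set.Icc 0 (b' k), δ k t = γs k t := by
    intro k t ht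
    rw [hδdef]
    simp only [min_eq_left ht.2, max_eq_right ht.1]
  have hδin : ∀ k t, δ k t ∈ Metric.closedBall x T := by
    intro k t
    rw [Metric.mem_closedBall]
    have h1 : dist (δ k t) x = dist (γs k (max 0 (min t (b' k)))) (γs k 0) := by
      rw [hδdef, hγ0 k]
    rw [h1]
    have h2 := (hγlip k).dist_le_mul (max 0 (min t (b' k))) 0
    simp only [NNReal.coe_one, one_mul] at h2
    refine h2.trans ?_
    rw [Real.dist_eq, sub_zero, abs_of_nonneg (le_max_left _ _)]
    exact max_le hT0 ((min_le_right _ _).trans (hb'T k))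
  -- Step 3: extract a convergent subsequence via Arzelà–Ascoli
  haveI : CompactSpace (Set.Icc (0:ℝ) T) := isCompact_iff_compactSpace.mp isCompact_Icc
  set Fk : ℕ → (BoundedContinuousFunction (Set.Icc (0:ℝ) T) (EuclideanSpace ℝ (Fin n))) :=
    fun k => BoundedContinuousFunction.mkOfCompact
      ⟨fun t => δ k t.1, ((hδlip k).continuous).comp continuous_subtype_val⟩ with hFk
  have hFkapp : ∀ k a, Fk k a = δ k a.1 := by
    intro k a
    rw [hFk]
    simp
  set A : Set (BoundedContinuousFunction (Set.Icc (0:ℝ) T) (EuclideanSpace ℝ (Fin n))) :=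
    {F | (∀ a c, dist (F a) (F c) ≤ dist a c) ∧
      ∀ a, F a ∈ Metric.closedBall x T} with hA
  have hFkA : ∀ k, Fk k ∈ A := by
    intro k
    constructor
    · intro a c
      have h2 := (hδlip k).dist_le_mul a.1 c.1
      simp only [NNReal.coe_one, one_mul] at h2
      rw [hFkapp k a, hFkapp k c, Subtype.dist_eq]
      exact h2
    · intro a
      rw [hFkapp k a]
      exact hδin k a.1
  have hAcomp : IsCompact (closure A) := by
    apply BoundedContinuousFunction.arzela_ascoli (Metric.closedBall x T)
      (isCompact_closedBall x T) A (fun F a hF => hF.2 a)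
    apply equicontinuous_of_continuity_modulus id tendsto_id
    intro a c F
    exact F.2.1 a c
  obtain ⟨Flim, _, φ, hφmono, hφtend⟩ :=
    hAcomp.tendsto_subseq (fun k => subset_closure (hFkA k))
  obtain ⟨βh, hβmem, ψ, hψmono, hβtend⟩ :=
    (isCompact_Icc (a := (0:ℝ)) (b := T)).tendsto_subseq
      (x := fun k => b' (φ k)) (fun k => ⟨hb'0 _, hb'T _⟩)
  set σ : ℕ → ℕ := φ ∘ ψ with hσ
  have hσmono : StrictMono σ := hφmono.comp hψmono
  have hσge : ∀ k, k ≤ σ k := fun k => (hσmono.id_le k)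
  have hFtend : Tendsto (fun k => Fk (σ k)) atTop (𝓝 Flim) :=
    hφtend.comp hψmono.tendsto_atTop
  have hbtend : Tendsto (fun k => b' (σ k)) atTop (𝓝 βh) := hβtend
  obtain ⟨hβ0, hβT⟩ := hβmem
  have hβmem' : βh ∈ Set.Icc (0:ℝ) T := ⟨hβ0, hβT⟩
  -- pointwise convergence
  have hpt : ∀ a : Set.Icc (0:ℝ) T,
      Tendsto (fun k => Fk (σ k) a) atTop (𝓝 (Flim a)) := by
    intro a
    rw [tendsto_iff_dist_tendsto_zero]
    apply squeeze_zero (fun k => dist_nonneg)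
      (fun k => BoundedContinuousFunction.dist_coe_le_dist a)
    rwa [tendsto_iff_dist_tendsto_zero] at hFtend
  have hFlim_lip : ∀ a c : Set.Icc (0:ℝ) T, dist (Flim a) (Flim c) ≤ dist a c := by
    intro a c
    apply le_of_tendsto ((hpt a).dist (hpt c))
    filter_upwards with k using (hFkA (σ k)).1 a c
  -- the limit curve
  set clampT : ℝ → ↥(Set.Icc (0:ℝ) T) :=
    fun t => ⟨max 0 (min t T), le_max_left _ _, max_le hT0 (min_le_right _ _)⟩
    with hclampT
  set δ' : ℝ → EuclideanSpace ℝ (Fin n) := fun t => Flim (clampT t) with hδ'def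
  have hclamp_mem : ∀ (t : ℝ) (ht : t ∈ Set.Icc (0:ℝ) T), clampT t = ⟨t, ht⟩ := by
    intro t ht
    apply Subtype.ext
    simp only [hclampT, min_eq_left ht.2, max_eq_right ht.1]
  have hδ'at : ∀ (t : ℝ) (ht : t ∈ Set.Icc (0:ℝ) T), δ' t = Flim ⟨t, ht⟩ := by
    intro t ht
    rw [hδ'def]
    simp only [hclamp_mem t ht]
  have hδ'lip : LipschitzWith 1 δ' := by
    apply LipschitzWith.of_dist_le_mul
    intro t u
    simp only [NNReal.coe_one, one_mul]
    calc dist (δ' t) (δ' u) ≤ dist (clampT t) (clampT u) := hFlim_lip _ _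
      _ = dist (max 0 (min t T)) (max 0 (min u T)) := Subtype.dist_eq _ _
      _ ≤ dist t u := by
          have := (wsClampLip T).dist_le_mul t u
          simpa using this
  have h00 : (0:ℝ) ∈ Set.Icc (0:ℝ) T := ⟨le_refl 0, hT0⟩
  have hδ'0 : δ' 0 = x := by
    rw [hδ'at 0 h00]
    refine tendsto_nhds_unique (hpt ⟨0, h00⟩) ?_
    have he : ∀ k, Fk (σ k) ⟨0, h00⟩ = x := by
      intro k
      rw [hFkapp]
      exact hδ0 (σ k)
    simp only [he]
    exact tendsto_const_nhds
  -- convergence of endpoints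
  have hqtend : Tendsto (fun k => γs (σ k) (b' (σ k))) atTop (𝓝 (δ' βh)) := by
    rw [hδ'at βh hβmem', tendsto_iff_dist_tendsto_zero]
    have hb1 : ∀ k, dist (γs (σ k) (b' (σ k))) (Flim ⟨βh, hβmem'⟩)
        ≤ |b' (σ k) - βh| + dist (Fk (σ k) ⟨βh, hβmem'⟩) (Flim ⟨βh, hβmem'⟩) := by
      intro k
      have e1 : γs (σ k) (b' (σ k)) = δ (σ k) (b' (σ k)) := (hδend (σ k)).symm
      have e2 : δ (σ k) βh = Fk (σ k) ⟨βh, hβmem'⟩ := (hFkapp (σ k) ⟨βh, hβmem'⟩).symm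
      calc dist (γs (σ k) (b' (σ k))) (Flim ⟨βh, hβmem'⟩)
          ≤ dist (γs (σ k) (b' (σ k))) (δ (σ k) βh)
            + dist (δ (σ k) βh) (Flim ⟨βh, hβmem'⟩) := dist_triangle _ _ _
        _ ≤ |b' (σ k) - βh| + dist (Fk (σ k) ⟨βh, hβmem'⟩) (Flim ⟨βh, hβmem'⟩) := by
            apply add_le_add
            · rw [e1]
              have := (hδlip (σ k)).dist_le_mul (b' (σ k)) βh
              simpa [Real.dist_eq] using this
            · rw [e2]
    apply squeeze_zero (fun k => dist_nonneg) hb1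
    have ht1 : Tendsto (fun k => |b' (σ k) - βh|) atTop (𝓝 0) := by
      have := (hbtend.sub (tendsto_const_nhds (x := βh))).abs
      simpa using this
    have ht2 : Tendsto
        (fun k => dist (Fk (σ k) ⟨βh, hβmem'⟩) (Flim ⟨βh, hβmem'⟩)) atTop (𝓝 0) := by
      rw [← tendsto_iff_dist_tendsto_zero]
      exact hpt ⟨βh, hβmem'⟩
    simpa using ht1.add ht2
  -- Step 4: integral estimates
  set q : EuclideanSpace ℝ (Fin n) := δ' βh with hqdef
  have hqlt : ∀ k, f (γs (σ k) (b' (σ k))) < f x - ε := by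
    intro k
    have h1 := hlt (σ k)
    have h2 : (0:ℝ) ≤ (wsCost (gi (i₀ + σ k)) (γs (σ k)) (b' (σ k))).toReal :=
      ENNReal.toReal_nonneg
    linarith
  have hfq : f q ≤ f x - ε := by
    apply le_of_tendsto ((hLf.continuous.tendsto _).comp hqtend)
    filter_upwards with k using (hqlt k).le
  have hd : 0 < f x - f q := by linarith
  set D : ℝ≥0∞ := ENNReal.ofReal (f x - f q - ε) with hD
  have hjle : ∀ j : ℕ, (∫⁻ t in Set.Ico (0:ℝ) βh, ENNReal.ofReal (gi j (δ' t))) ≤ D := by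
    intro j
    set u : ℕ → ℝ → ℝ≥0∞ := fun k t => (Set.Icc (0:ℝ) (b' (σ k))).indicator
      (fun s => ENNReal.ofReal (gi j (δ (σ k) s))) t with hu
    have humeas : ∀ k, Measurable (u k) := by
      intro k
      apply Measurable.indicator ?_ measurableSet_Icc
      exact ENNReal.measurable_ofReal.comp
        ((hgiC j).comp (hδlip (σ k)).continuous).measurable
    have hliminf_ge : (∫⁻ t in Set.Ico (0:ℝ) βh, ENNReal.ofReal (gi j (δ' t)))
        ≤ Filter.atTop.liminf (fun k => ∫⁻ t, u k t) := by
      refine le_trans ?_ (lintegral_liminf_le humeas)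
      rw [← lintegral_indicator (μ := volume)
        (f := fun t => ENNReal.ofReal (gi j (δ' t))) measurableSet_Ico]
      apply lintegral_mono
      intro t
      by_cases ht : t ∈ Set.Ico (0:ℝ) βh
      · rw [Set.indicator_of_mem ht]
        have htT : t ∈ Set.Icc (0:ℝ) T := ⟨ht.1, ht.2.le.trans hβT⟩
        have htend : Tendsto (fun k => u k t) atTop
            (𝓝 (ENNReal.ofReal (gi j (δ' t)))) := by
          have h1 : ∀ᶠ k in atTop,
              ENNReal.ofReal (gi j (δ (σ k) t)) = u k t := by
            filter_upwards [hbtend.eventually (eventually_gt_nhds ht.2)] with k hk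
            rw [hu]
            exact (Set.indicator_of_mem (Set.mem_Icc.mpr ⟨ht.1, hk.le⟩)
              (fun s => ENNReal.ofReal (gi j (δ (σ k) s)))).symm
          have h3 : Tendsto (fun k => δ (σ k) t) atTop (𝓝 (δ' t)) := by
            rw [hδ'at t htT]
            have h4 := hpt ⟨t, htT⟩
            simp only [hFkapp] at h4
            exact h4
          have h2 : Tendsto (fun k => ENNReal.ofReal (gi j (δ (σ k) t))) atTop
              (𝓝 (ENNReal.ofReal (gi j (δ' t)))) :=
            (ENNReal.continuous_ofReal.tendsto _).comp (((hgiC j).tendsto _).comp h3)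
          exact h2.congr' h1
        rw [← htend.liminf_eq]
      · rw [Set.indicator_of_notMem ht]
        exact zero_le
    have hup : ∀ᶠ k in atTop, (∫⁻ t, u k t) ≤
        ENNReal.ofReal (f x - f (γs (σ k) (b' (σ k))) - ε) := by
      filter_upwards [eventually_ge_atTop j] with k hk
      have hki : j ≤ i₀ + σ k := le_trans hk (le_trans (hσge k) (Nat.le_add_left _ _))
      have e0 : (∫⁻ t, u k t)
          = ∫⁻ t in Set.Icc 0 (b' (σ k)), ENNReal.ofReal (gi j (δ (σ k) t)) := by
        rw [hu, lintegral_indicator measurableSet_Icc]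
      rw [e0]
      have e1 : ∫⁻ t in Set.Icc 0 (b' (σ k)), ENNReal.ofReal (gi j (δ (σ k) t))
          = ∫⁻ t in Set.Icc 0 (b' (σ k)), ENNReal.ofReal (gi j (γs (σ k) t)) :=
        setLIntegral_congr_fun_ae measurableSet_Icc
          (Filter.Eventually.of_forall fun t ht => by rw [hδeq (σ k) t ht])
      rw [e1]
      have e2 : (∫⁻ t in Set.Icc 0 (b' (σ k)), ENNReal.ofReal (gi j (γs (σ k) t)))
          ≤ wsCost (gi (i₀ + σ k)) (γs (σ k)) (b' (σ k)) := by
        unfold wsCost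
        apply setLIntegral_mono
        · exact ENNReal.measurable_ofReal.comp
            ((hgiC _).comp (hγlip (σ k)).continuous).measurable
        · intro t _
          exact ENNReal.ofReal_le_ofReal (hgi_mono hki _)
      refine e2.trans ?_
      have hfin : wsCost (gi (i₀ + σ k)) (γs (σ k)) (b' (σ k)) ≠ ⊤ :=
        wsCost_ne_top fun t _ => hgiL _ _
      rw [← ENNReal.ofReal_toReal hfin]
      apply ENNReal.ofReal_le_ofReal
      have h5 := hlt (σ k)
      linarith
    have hlim_up : Filter.atTop.liminf (fun k => ∫⁻ t, u k t) ≤ D := by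
      refine le_trans (Filter.liminf_le_liminf hup) ?_
      have htendD : Tendsto
          (fun k => ENNReal.ofReal (f x - f (γs (σ k) (b' (σ k))) - ε)) atTop (𝓝 D) := by
        rw [hD]
        apply (ENNReal.continuous_ofReal.tendsto _).comp
        have h6 : Tendsto (fun k => f (γs (σ k) (b' (σ k)))) atTop (𝓝 (f q)) :=
          (hLf.continuous.tendsto _).comp hqtend
        exact (tendsto_const_nhds.sub h6).sub tendsto_const_nhds
      rw [htendD.liminf_eq]
    exact hliminf_ge.trans hlim_up
  -- Step 5: monotone convergence and the upper-gradient contradiction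
  have hsup : (∫⁻ t in Set.Ico (0:ℝ) βh, ENNReal.ofReal (g (δ' t))) ≤ D := by
    have e3 : ∀ t : ℝ, ENNReal.ofReal (g (δ' t)) = ⨆ j, ENNReal.ofReal (gi j (δ' t)) := by
      intro t
      have hm : Monotone fun j => ENNReal.ofReal (gi j (δ' t)) :=
        fun j1 j2 hj => ENNReal.ofReal_le_ofReal (hgi_mono hj _)
      exact tendsto_nhds_unique
        ((ENNReal.continuous_ofReal.tendsto _).comp (hgi_tendsto _))
        (tendsto_atTop_iSup hm)
    calc (∫⁻ t in Set.Ico (0:ℝ) βh, ENNReal.ofReal (g (δ' t)))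
        = ∫⁻ t in Set.Ico (0:ℝ) βh, ⨆ j, ENNReal.ofReal (gi j (δ' t)) :=
          lintegral_congr fun t => e3 t
      _ = ⨆ j, ∫⁻ t in Set.Ico (0:ℝ) βh, ENNReal.ofReal (gi j (δ' t)) := by
          apply lintegral_iSup
          · intro j
            exact ENNReal.measurable_ofReal.comp
              ((hgiC j).comp hδ'lip.continuous).measurable
          · intro j1 j2 hj t
            exact ENNReal.ofReal_le_ofReal (hgi_mono hj _)
      _ ≤ D := iSup_le hjle
  have hug := hgug βh hβ0 δ' hδ'lip
  rw [hδ'0] at hug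
  have hIccIco : (∫⁻ t in Set.Icc (0:ℝ) βh, ENNReal.ofReal (g (δ' t)))
      = ∫⁻ t in Set.Ico (0:ℝ) βh, ENNReal.ofReal (g (δ' t)) :=
    setLIntegral_congr Ico_ae_eq_Icc.symm
  rw [hIccIco] at hug
  have habs : |f (δ' βh) - f x| = f x - f q := by
    rw [abs_sub_comm, ← hqdef, abs_of_pos hd]
  have hfinal : ENNReal.ofReal (f x - f q) ≤ D := by
    calc ENNReal.ofReal (f x - f q) = ENNReal.ofReal |f (δ' βh) - f x| := by rw [habs]
      _ ≤ _ := hug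
      _ ≤ D := hsup
  rw [hD] at hfinal
  rcases le_or_gt (f x - f q - ε) 0 with hle | hlt' 
  · rw [ENNReal.ofReal_eq_zero.mpr hle] at hfinal
    have h7 : f x - f q ≤ 0 := ENNReal.ofReal_eq_zero.mp (le_antisymm hfinal zero_le)
    linarith
  · have h8 := (ENNReal.ofReal_le_ofReal_iff hlt'.le).mp hfinal
    linarith

/-- monotonicity of the approximants in the density. -/
lemma wsApprox_mono {L : ℝ≥0} {R : ℝ} {f h₁ h₂ : EuclideanSpace ℝ (Fin n) → ℝ}
    (hLf : LipschitzWith L f) (hL₁ : ∀ z, h₁ z ≤ (L:ℝ)) (hL₂ : ∀ z, h₂ z ≤ (L:ℝ))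
    (hhR₁ : ∀ z ∉ Metric.ball (0 : EuclideanSpace ℝ (Fin n)) R, h₁ z = L)
    (h12 : ∀ z, h₁ z ≤ h₂ z) (x : EuclideanSpace ℝ (Fin n)) :
    wsApprox h₁ f x ≤ wsApprox h₂ f x := by
  apply le_csInf ⟨f x, self_mem_wsCand h₂ f x⟩
  rintro v ⟨b, γ, hb, hγ, h0, rfl⟩
  have hcostle : wsCost h₁ γ b ≤ wsCost h₂ γ b :=
    lintegral_mono fun t => ENNReal.ofReal_le_ofReal (h12 (γ t))
  have hfin : wsCost h₂ γ b ≠ ⊤ := wsCost_ne_top fun t _ => hL₂ (γ t)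
  have h1 : wsApprox h₁ f x ≤ f (γ b) + (wsCost h₁ γ b).toReal :=
    csInf_le (wsCand_bddBelow hLf hL₁ hhR₁ x) ⟨b, γ, hb, hγ, h0, rfl⟩
  have h2 : (wsCost h₁ γ b).toReal ≤ (wsCost h₂ γ b).toReal :=
    ENNReal.toReal_mono hfin hcostle
  linarith

end WeakStarAux


/-- **Weak-* approximation of Lipschitz functions with prescribed asymptotic Lipschitz
constants** (Proposition 3.7): let `f : ℝⁿ → ℝ` be Lipschitz with (smallest) Lipschitz
constant `L > 0`, let `g` be a strictly positive lower semicontinuous upper gradient of `f`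
bounded by `L` and equal to `L` outside a ball `B(0,R)`, and let `(g_i)` be a nondecreasing
sequence of continuous functions converging pointwise to `g` and equal to `L` outside
`B(0,R)`. Then there is a sequence `(f_i)` of `L`-Lipschitz functions converging pointwise to
`f` with `Lip_a[f_i] ≤ g_i` everywhere. -/
theorem weak_star_approximation
    {n : ℕ} (f : EuclideanSpace ℝ (Fin n) → ℝ) (L : ℝ≥0)
    (hLf : LipschitzWith L f) (hLmin : ∀ L' : ℝ≥0, LipschitzWith L' f → L ≤ L')
    (hLpos : 0 < L)
    (g : EuclideanSpace ℝ (Fin n) → ℝ)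
    (hgpos : ∀ x, 0 < g x) (hgle : ∀ x, g x ≤ (L : ℝ))
    (hglsc : LowerSemicontinuous g) (hgug : IsUpperGradient g f)
    (R : ℝ) (hR : 0 < R) (hgR : ∀ x ∉ Metric.ball (0 : EuclideanSpace ℝ (Fin n)) R, g x = L)
    (gi : ℕ → EuclideanSpace ℝ (Fin n) → ℝ)
    (hgiC : ∀ i, Continuous (gi i)) (hgi_mono : Monotone gi)
    (hgi_tendsto : ∀ x, Tendsto (fun i => gi i x) atTop (𝓝 (g x)))
    (hgiR : ∀ i, ∀ x ∉ Metric.ball (0 : EuclideanSpace ℝ (Fin n)) R, gi i x = L) :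
    ∃ fi : ℕ → EuclideanSpace ℝ (Fin n) → ℝ,
      (∀ i, LipschitzWith L (fi i)) ∧
      (∀ x, Tendsto (fun i => fi i x) atTop (𝓝 (f x))) ∧
      (∀ i x, asympLipConst (fi i) x ≤ ENNReal.ofReal (gi i x)) := by
  classical
  have hgiL : ∀ i z, gi i z ≤ (L:ℝ) :=
    WeakStarAux.wsgi_le hgle hgi_mono hgi_tendsto
  refine ⟨fun i => WeakStarAux.wsApprox (gi i) f, ?_, ?_, ?_⟩
  · intro i
    exact WeakStarAux.wsApprox_lipschitz hLf (hgiC i) (hgiL i) (hgiR i)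
  · intro x
    rw [Metric.tendsto_atTop]
    intro ε hε
    obtain ⟨N, hN⟩ := WeakStarAux.wsKey f hLf hLpos g hgpos hgle hgug R hR gi hgiC
      hgi_mono hgi_tendsto hgiR x (ε/2) (by linarith)
    refine ⟨N, fun i hi => ?_⟩
    have h1 : WeakStarAux.wsApprox (gi N) f x ≤ WeakStarAux.wsApprox (gi i) f x :=
      WeakStarAux.wsApprox_mono hLf (hgiL N) (hgiL i) (hgiR N) (fun z => hgi_mono hi z) x
    have h2 : WeakStarAux.wsApprox (gi i) f x ≤ f x :=
      WeakStarAux.wsApprox_le_f hLf (hgiL i) (hgiR i) x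
    rw [Real.dist_eq, abs_lt]
    constructor <;> linarith
  · intro i x
    exact WeakStarAux.wsApprox_asympLipConst hLf (hgiC i) (hgiL i) (hgiR i) x

end
end
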